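/- arXiv:math-ph/0106024 — 4 statements merged into one kernel-verified Lean document; each statement's English description precedes it below -/
import Mathlib

section
/- Let Λ be a finite set and B ⊆ Λ×Λ a set of oriented bonds such that the directed graph (Λ,B) is connected and supports a height function, i.e. a map l : Λ → ℤ with l(y) = l(x)+1 for every (x,y) ∈ B. Fix 1 < Δ < ∞, let q ∈ (0,1) solve Δ = (q+q⁻¹)/2, and set A(Δ) = √(1−Δ⁻²). For a configuration σ = (σ_x)_{x∈Λ} of unit vectors in ℝ³ define the classical kink energy H(σ) = Σ_{(x,y)∈B} [1 − σ_x³σ_y³ − Δ⁻¹(σ_x¹σ_y¹ + σ_x²σ_y²) + A(Δ)(σ_x³ − σ_y³)]. Then: (i) the map M(τ) = Σ_{x∈Λ} (1 − q^{2l(x)}τ)/(1 + q^{2l(x)}τ) is a continuous, strictly decreasing bijection from (0,∞) onto (−|Λ|, |Λ|); (ii) for every M ∈ (−|Λ|,|Λ|) and every φ ∈ ℝ, letting τ be the unique positive real with M(τ) = M, the configuration σ_x = σ_x³ e₃ + √(1−(σ_x³)²)(cos φ · e₁ + sin φ · e₂) with σ_x³ = (1 − q^{2l(x)}τ)/(1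 + q^{2l(x)}τ) satisfies H(σ) = 0 and Σ_{x∈Λ} σ_x³ = M; (iii) conversely, every configuration of unit vectors with H(σ) = 0 and Σ_x σ_x³ = M ∈ (−|Λ|,|Λ|) is of this form for some φ ∈ ℝ, and the only configurations with H(σ) = 0 and Σ_x σ_x³ = ±|Λ| are the constant configurations σ_x ≡ ±e₃. -/
noncomputable section

namespace S0

/-- Classical kink energy `H(σ)` of a configuration of 3d spins on the directed graph with
oriented bond set `B` (components: `0 ↔ σ¹`, `1 ↔ σ²`, `2 ↔ σ³`). -/
def energy (Δ A : ℝ) {Λ : Type*} (B : Finset (Λ × Λ)) (σ : Λ → Fin 3 → ℝ) : ℝ :=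
  ∑ p ∈ B, (1 - σ p.1 2 * σ p.2 2 - Δ⁻¹ * (σ p.1 0 * σ p.2 0 + σ p.1 1 * σ p.2 1)
      + A * (σ p.1 2 - σ p.2 2))

/-- The third-component profile `s = (1 − q^{2l}τ)/(1 + q^{2l}τ)`. -/
def sprof (q τ : ℝ) (l : ℤ) : ℝ := (1 - q ^ (2 * l) * τ) / (1 + q ^ (2 * l) * τ)

/-- The kink configuration `σ_x = σ_x³ e₃ + √(1−(σ_x³)²)(cos φ e₁ + sin φ e₂)` with
`σ_x³ = sprof q τ (l x)`. -/
def confOf (q τ φ : ℝ) {Λ : Type*} (l : Λ → ℤ) (x : Λ) : Fin 3 → ℝ :=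
  ![Real.sqrt (1 - sprof q τ (l x) ^ 2) * Real.cos φ,
    Real.sqrt (1 - sprof q τ (l x) ^ 2) * Real.sin φ,
    sprof q τ (l x)]

/-- The magnetization map `M(τ) = Σ_{x∈Λ} (1 − q^{2l(x)}τ)/(1 + q^{2l(x)}τ)`. -/
def Mfun (q : ℝ) {Λ : Type*} [Fintype Λ] (l : Λ → ℤ) (τ : ℝ) : ℝ := ∑ x, sprof q τ (l x)

end S0

namespace S0

set_option linter.unusedSectionVars false

variable {q τ : ℝ}

lemma c_pos (hq0 : 0 < q) (l : ℤ) : 0 < q ^ (2 * l) := zpow_pos hq0 _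

lemma sprof_mem (hq0 : 0 < q) (hτ : 0 < τ) (l : ℤ) :
    sprof q τ l ∈ Set.Ioo (-1 : ℝ) 1 := by
  have hc : 0 < q ^ (2 * l) * τ := mul_pos (c_pos hq0 l) hτ
  rw [Set.mem_Ioo, sprof, lt_div_iff₀ (by linarith), div_lt_one (by linarith)]
  constructor <;> linarith

lemma sprof_anti (hq0 : 0 < q) (l : ℤ) {τ₁ τ₂ : ℝ} (h1 : 0 < τ₁) (h12 : τ₁ < τ₂) :
    sprof q τ₂ l < sprof q τ₁ l := by
  have hc : 0 < q ^ (2 * l) := c_pos hq0 l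
  have d1 : 0 < 1 + q ^ (2 * l) * τ₁ := by nlinarith
  have d2 : 0 < 1 + q ^ (2 * l) * τ₂ := by nlinarith
  rw [sprof, sprof, div_lt_div_iff₀ d2 d1]
  nlinarith

lemma sprof_continuousAt (hq0 : 0 < q) (l : ℤ) {t : ℝ} (ht : 0 ≤ t) :
    ContinuousAt (fun τ => sprof q τ l) t := by
  have hc : 0 < q ^ (2 * l) := c_pos hq0 l
  apply ContinuousAt.div
  · fun_prop
  · fun_prop
  · nlinarith

lemma sprof_tendsto (hq0 : 0 < q) (l : ℤ) :
    Filter.Tendsto (fun τ => sprof q τ l) Filter.atTop (nhds (-1)) := by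
  have hc : 0 < q ^ (2 * l) := c_pos hq0 l
  have heq : ∀ᶠ τ in Filter.atTop, (τ⁻¹ - q ^ (2*l)) / (τ⁻¹ + q ^ (2*l)) = sprof q τ l := by
    filter_upwards [Filter.eventually_gt_atTop 0] with τ hτ
    have d2 : 0 < 1 + q ^ (2*l) * τ := by nlinarith [mul_pos hc hτ]
    rw [sprof, div_eq_div_iff (by positivity) (by linarith)]
    field_simp
  apply Filter.Tendsto.congr' heq
  have h1 : Filter.Tendsto (fun τ : ℝ => τ⁻¹) Filter.atTop (nhds 0) :=
    tendsto_inv_atTop_zero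
  have h2 : Filter.Tendsto (fun τ : ℝ => τ⁻¹ - q ^ (2*l)) Filter.atTop (nhds (0 - q ^ (2*l))) :=
    h1.sub_const _
  have h3 : Filter.Tendsto (fun τ : ℝ => τ⁻¹ + q ^ (2*l)) Filter.atTop (nhds (0 + q ^ (2*l))) :=
    h1.add_const _
  have h4 := h2.div h3 (by simpa using hc.ne')
  have : (0 - q ^ (2*l)) / (0 + q ^ (2*l)) = -1 := by field_simp; ring
  rwa [this] at h4


variable {Λ : Type*} [Fintype Λ] [Nonempty Λ] {l : Λ → ℤ}

lemma Mfun_contOn (hq0 : 0 < q) : ContinuousOn (Mfun q l) (Set.Ici 0) := by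
  apply continuousOn_finset_sum
  intro x _
  exact fun t ht => ((sprof_continuousAt hq0 (l x) ht).continuousWithinAt)

lemma Mfun_anti (hq0 : 0 < q) : StrictAntiOn (Mfun q l) (Set.Ioi 0) := by
  intro τ₁ h1 τ₂ h2 h12
  exact Finset.sum_lt_sum_of_nonempty Finset.univ_nonempty
    (fun x _ => sprof_anti hq0 (l x) h1 h12)

lemma Mfun_mem (hq0 : 0 < q) {τ : ℝ} (hτ : 0 < τ) :
    Mfun q l τ ∈ Set.Ioo (-(Fintype.card Λ : ℝ)) (Fintype.card Λ) := by
  constructor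
  · have : -(Fintype.card Λ : ℝ) = ∑ _x : Λ, (-1 : ℝ) := by
      simp [Finset.sum_const, Finset.card_univ]
    rw [this]
    exact Finset.sum_lt_sum_of_nonempty Finset.univ_nonempty
      (fun x _ => (sprof_mem hq0 hτ (l x)).1)
  · have : (Fintype.card Λ : ℝ) = ∑ _x : Λ, (1 : ℝ) := by
      simp [Finset.sum_const, Finset.card_univ]
    rw [this]
    exact Finset.sum_lt_sum_of_nonempty Finset.univ_nonempty
      (fun x _ => (sprof_mem hq0 hτ (l x)).2)

lemma Mfun_zero : Mfun q l 0 = (Fintype.card Λ : ℝ) := by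
  simp [Mfun, sprof]

lemma Mfun_tendsto (hq0 : 0 < q) :
    Filter.Tendsto (Mfun q l) Filter.atTop (nhds (-(Fintype.card Λ : ℝ))) := by
  have : (-(Fintype.card Λ : ℝ)) = ∑ _x : Λ, (-1 : ℝ) := by
    simp [Finset.sum_const, Finset.card_univ]
  rw [this]
  exact tendsto_finset_sum _ (fun x _ => sprof_tendsto hq0 (l x))

lemma Mfun_surj (hq0 : 0 < q) {M : ℝ}
    (hM : M ∈ Set.Ioo (-(Fintype.card Λ : ℝ)) (Fintype.card Λ)) :
    ∃ τ > 0, Mfun q l τ = M := by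
  obtain ⟨hM1, hM2⟩ := hM
  -- small τ with Mfun > M
  have hc0 : ContinuousWithinAt (Mfun q l) (Set.Ici 0) 0 :=
    Mfun_contOn hq0 0 Set.self_mem_Ici
  have hev : ∀ᶠ τ in nhdsWithin 0 (Set.Ici 0), M < Mfun q l τ := by
    have := hc0.eventually (p := fun y => M < y) ?_
    · exact this
    · rw [Mfun_zero]; exact eventually_gt_nhds hM2
  have hev2 : ∀ᶠ τ in nhdsWithin 0 (Set.Ioi 0), M < Mfun q l τ :=
    hev.filter_mono (nhdsWithin_mono _ Set.Ioi_subset_Ici_self)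
  have hne : (nhdsWithin (0:ℝ) (Set.Ioi 0)).NeBot := nhdsGT_neBot 0
  have hmem : ∀ᶠ τ in nhdsWithin (0:ℝ) (Set.Ioi 0), τ ∈ Set.Ioi (0:ℝ) :=
    eventually_mem_nhdsWithin
  obtain ⟨τ₁, hτ₁, hτ₁pos⟩ := (hev2.and hmem).exists
  -- large τ with Mfun < M
  have hev3 : ∀ᶠ τ in Filter.atTop, Mfun q l τ < M :=
    (Mfun_tendsto hq0).eventually (eventually_lt_nhds hM1)
  obtain ⟨τ₂, hτ₂, hτ₂ge⟩ := (hev3.and (Filter.eventually_ge_atTop (τ₁+1))).exists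
  have hτ₁pos' : (0:ℝ) < τ₁ := hτ₁pos
  have h12 : τ₁ ≤ τ₂ := by linarith
  have hsub : Set.Icc τ₁ τ₂ ⊆ Set.Ici 0 := fun t ht => le_trans hτ₁pos'.le ht.1
  have hIVT := intermediate_value_Icc' h12 ((Mfun_contOn (l := l) hq0).mono hsub)
  have hMmem : M ∈ Set.Icc (Mfun q l τ₂) (Mfun q l τ₁) := ⟨hτ₂.le, hτ₁.le⟩
  obtain ⟨τ, hτmem, hτeq⟩ := hIVT hMmem
  exact ⟨τ, lt_of_lt_of_le hτ₁pos' hτmem.1, hτeq⟩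


-- Δ and A values
lemma Delta_inv_val {Δ q : ℝ} (hq0 : 0 < q) (hrel : Δ = (q + q⁻¹) / 2) :
    Δ⁻¹ = 2 * q / (1 + q ^ 2) := by
  subst hrel
  have hne : q ≠ 0 := hq0.ne'
  rw [show (q + q⁻¹) / 2 = (1 + q ^ 2) / (2 * q) by field_simp; ring, inv_div]

lemma A_val {Δ q A : ℝ} (hq0 : 0 < q) (hq1 : q < 1) (hrel : Δ = (q + q⁻¹) / 2)
    (hA : A = Real.sqrt (1 - Δ⁻¹ ^ 2)) : A = (1 - q ^ 2) / (1 + q ^ 2) := by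
  have hD := Delta_inv_val hq0 hrel
  have h1 : 1 - Δ⁻¹ ^ 2 = ((1 - q ^ 2) / (1 + q ^ 2)) ^ 2 := by
    rw [hD]; field_simp; ring
  rw [hA, h1, Real.sqrt_sq (div_nonneg (by nlinarith) (by positivity))]


lemma kink_alg (q d co si : ℝ) (hq0 : 0 < q) (hd : 0 < d) (hcs : co^2 + si^2 = 1) :
    1 - (1-d^2)/(1+d^2) * ((1-q^2*d^2)/(1+q^2*d^2))
    - (2*q/(1+q^2)) * ((2*d/(1+d^2)*co) * (2*q*d/(1+q^2*d^2)*co)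
        + (2*d/(1+d^2)*si) * (2*q*d/(1+q^2*d^2)*si))
    + ((1-q^2)/(1+q^2)) * ((1-d^2)/(1+d^2) - (1-q^2*d^2)/(1+q^2*d^2)) = 0 := by
  have h1 : (0:ℝ) < 1 + d^2 := by positivity
  have h2 : (0:ℝ) < 1 + q^2*d^2 := by positivity
  have h3 : (0:ℝ) < 1 + q^2 := by positivity
  have hdot : (2*d/(1+d^2)*co) * (2*q*d/(1+q^2*d^2)*co) + (2*d/(1+d^2)*si) * (2*q*d/(1+q^2*d^2)*si)
      = (2*d/(1+d^2)) * (2*q*d/(1+q^2*d^2)) := by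
    field_simp
    linear_combination hcs
  rw [hdot]
  field_simp
  ring

lemma sqrt_one_sub_sq {c : ℝ} (hc : 0 < c) :
    Real.sqrt (1 - ((1-c)/(1+c))^2) = 2 * Real.sqrt c / (1 + c) := by
  have h1 : (0:ℝ) < 1 + c := by linarith
  have hd2 : Real.sqrt c ^ 2 = c := Real.sq_sqrt hc.le
  have : 1 - ((1-c)/(1+c))^2 = (2 * Real.sqrt c / (1 + c))^2 := by
    field_simp
    linear_combination (-4) * hd2
  rw [this, Real.sqrt_sq (by positivity)]

lemma zpow_succ_two {q : ℝ} (hq0 : 0 < q) (l : ℤ) :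
    q ^ (2 * (l + 1)) = q ^ 2 * q ^ (2 * l) := by
  rw [mul_add, mul_one, zpow_add₀ hq0.ne']
  rw [show ((2:ℤ)) = ((2:ℕ):ℤ) by norm_num, zpow_natCast]
  ring

lemma sprof_succ {q τ : ℝ} (hq0 : 0 < q) (l : ℤ) :
    sprof q τ (l + 1) = (1 - q^2 * (q ^ (2*l) * τ)) / (1 + q^2 * (q ^ (2*l) * τ)) := by
  rw [sprof, zpow_succ_two hq0, mul_assoc]

lemma sprof_eq {q τ : ℝ} (l : ℤ) :
    sprof q τ l = (1 - q ^ (2*l) * τ) / (1 + q ^ (2*l) * τ) := rfl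

lemma bond_val_zero {q τ : ℝ} (hq0 : 0 < q) (hτ : 0 < τ) (φ : ℝ) (l : ℤ) :
    1 - sprof q τ l * sprof q τ (l+1)
    - (2*q/(1+q^2)) * ((Real.sqrt (1 - sprof q τ l^2) * Real.cos φ)
          * (Real.sqrt (1 - sprof q τ (l+1)^2) * Real.cos φ)
        + (Real.sqrt (1 - sprof q τ l^2) * Real.sin φ)
          * (Real.sqrt (1 - sprof q τ (l+1)^2) * Real.sin φ))
    + ((1-q^2)/(1+q^2)) * (sprof q τ l - sprof q τ (l+1)) = 0 := by
  have hc : 0 < q ^ (2*l) * τ := mul_pos (c_pos hq0 l) hτ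
  have hc2 : 0 < q^2 * (q ^ (2*l) * τ) := by positivity
  have hd2 : Real.sqrt (q ^ (2*l) * τ) ^ 2 = q ^ (2*l) * τ := Real.sq_sqrt hc.le
  have hdpos : 0 < Real.sqrt (q ^ (2*l) * τ) := Real.sqrt_pos.mpr hc
  have e1 : Real.sqrt (1 - sprof q τ l^2) = 2 * Real.sqrt (q ^ (2*l) * τ) / (1 + q ^ (2*l) * τ) := by
    rw [sprof_eq]; exact sqrt_one_sub_sq hc
  have e2 : Real.sqrt (1 - sprof q τ (l+1)^2)
      = 2 * q * Real.sqrt (q ^ (2*l) * τ) / (1 + q^2 * (q ^ (2*l) * τ)) := by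
    rw [sprof_succ hq0, sqrt_one_sub_sq hc2, Real.sqrt_mul (by positivity),
      Real.sqrt_sq hq0.le]
    ring
  rw [e1, e2, sprof_succ hq0, sprof_eq]
  have hkey := kink_alg q (Real.sqrt (q ^ (2*l) * τ)) (Real.cos φ) (Real.sin φ) hq0 hdpos
    (Real.cos_sq_add_sin_sq φ)
  rw [hd2] at hkey
  convert hkey using 2 <;> ring


lemma cs_eq {a₁ b₁ r₁ a₂ b₂ r₂ : ℝ} (h1 : a₁^2+b₁^2 = r₁^2) (h2 : a₂^2+b₂^2 = r₂^2)
    (hD : a₁*a₂+b₁*b₂ = r₁*r₂) : r₁*a₂ = r₂*a₁ ∧ r₁*b₂ = r₂*b₁ := by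
  have key : (r₁*a₂ - r₂*a₁)^2 + (r₁*b₂ - r₂*b₁)^2 = 0 := by
    linear_combination r₁^2*h2 + r₂^2*h1 - 2*r₁*r₂*hD
  constructor <;> nlinarith [sq_nonneg (r₁*a₂-r₂*a₁), sq_nonneg (r₁*b₂-r₂*b₁)]

lemma exists_cos_sin {a b : ℝ} (h : a^2 + b^2 = 1) :
    ∃ φ, Real.cos φ = a ∧ Real.sin φ = b := by
  have ha1 : -1 ≤ a := by nlinarith [sq_nonneg b]
  have ha2 : a ≤ 1 := by nlinarith [sq_nonneg b]
  rcases le_or_gt 0 b with hb | hb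
  · refine ⟨Real.arccos a, Real.cos_arccos ha1 ha2, ?_⟩
    rw [Real.sin_arccos, show 1 - a^2 = b^2 by linarith, Real.sqrt_sq hb]
  · refine ⟨-Real.arccos a, by rw [Real.cos_neg]; exact Real.cos_arccos ha1 ha2, ?_⟩
    rw [Real.sin_neg, Real.sin_arccos, show 1 - a^2 = b^2 by linarith,
      Real.sqrt_sq_eq_abs, abs_of_neg hb]
    ring

lemma conn_iff {Λ : Type*} {B : Finset (Λ × Λ)}
    (hconn : ∀ x y : Λ, Relation.ReflTransGen (fun u v => (u, v) ∈ B ∨ (v, u) ∈ B) x y)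
    {P : Λ → Prop} (hstep : ∀ p ∈ B, (P p.1 ↔ P p.2)) (x₀ : Λ) (h0 : P x₀) : ∀ x, P x := by
  intro x
  induction hconn x₀ x with
  | refl => exact h0
  | tail hr hb ih =>
      rcases hb with hb | hb
      · exact (hstep _ hb).mp ih
      · exact (hstep _ hb).mpr ih

lemma bond_key {q : ℝ} (hq0 : 0 < q) (hq1 : q < 1) (a₁ b₁ s₁ a₂ b₂ s₂ : ℝ)
    (h₁ : a₁^2+b₁^2+s₁^2 = 1) (h₂ : a₂^2+b₂^2+s₂^2 = 1) :
    0 ≤ 1 - s₁*s₂ - (2*q/(1+q^2))*(a₁*a₂+b₁*b₂) + ((1-q^2)/(1+q^2))*(s₁-s₂) ∧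
    (1 - s₁*s₂ - (2*q/(1+q^2))*(a₁*a₂+b₁*b₂) + ((1-q^2)/(1+q^2))*(s₁-s₂) = 0 →
      a₁*a₂+b₁*b₂ = Real.sqrt (1-s₁^2) * Real.sqrt (1-s₂^2) ∧
      q^2*(1-s₁)*(1+s₂) = (1+s₁)*(1-s₂)) := by
  have hq2 : (0:ℝ) < 1 + q^2 := by positivity
  have hs₁ : s₁^2 ≤ 1 := by nlinarith [sq_nonneg a₁, sq_nonneg b₁]
  have hs₂ : s₂^2 ≤ 1 := by nlinarith [sq_nonneg a₂, sq_nonneg b₂]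
  have hs₁u : s₁ ≤ 1 := by nlinarith
  have hs₁l : -1 ≤ s₁ := by nlinarith
  have hs₂u : s₂ ≤ 1 := by nlinarith
  have hs₂l : -1 ≤ s₂ := by nlinarith
  set r₁ := Real.sqrt (1-s₁^2) with hr₁def
  set r₂ := Real.sqrt (1-s₂^2) with hr₂def
  have hr₁ : 0 ≤ r₁ := Real.sqrt_nonneg _
  have hr₂ : 0 ≤ r₂ := Real.sqrt_nonneg _
  have hr₁sq : r₁^2 = 1 - s₁^2 := Real.sq_sqrt (by linarith)
  have hr₂sq : r₂^2 = 1 - s₂^2 := Real.sq_sqrt (by linarith)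
  have hab1 : a₁^2+b₁^2 = r₁^2 := by rw [hr₁sq]; linarith
  have hab2 : a₂^2+b₂^2 = r₂^2 := by rw [hr₂sq]; linarith
  have h5 : (r₁*r₂)^2 - (a₁*a₂+b₁*b₂)^2 = (a₁*b₂-a₂*b₁)^2 := by
    linear_combination (-(a₂^2+b₂^2)) * hab1 + (-(r₁^2)) * hab2
  have hD : a₁*a₂+b₁*b₂ ≤ r₁*r₂ := by
    nlinarith [h5, mul_nonneg hr₁ hr₂, sq_nonneg (a₁*b₂-a₂*b₁)]
  set α := Real.sqrt ((1-s₁)*(1+s₂)) with hαdef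
  set β := Real.sqrt ((1+s₁)*(1-s₂)) with hβdef
  have hα2 : α^2 = (1-s₁)*(1+s₂) :=
    Real.sq_sqrt (mul_nonneg (by linarith) (by linarith))
  have hβ2 : β^2 = (1+s₁)*(1-s₂) :=
    Real.sq_sqrt (mul_nonneg (by linarith) (by linarith))
  have hαβ : α*β = r₁*r₂ := by
    rw [hαdef, hβdef, hr₁def, hr₂def,
      ← Real.sqrt_mul (mul_nonneg (by linarith : (0:ℝ) ≤ 1-s₁) (by linarith : (0:ℝ) ≤ 1+s₂)),
      ← Real.sqrt_mul (by linarith : (0:ℝ) ≤ 1-s₁^2)]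
    congr 1
    ring
  have hne : (1+q^2) ≠ 0 := hq2.ne'
  have key : (1+q^2)*(1 - s₁*s₂) - 2*q*(r₁*r₂) + (1-q^2)*(s₁-s₂) = (q*α-β)^2 := by
    linear_combination (-(q^2))*hα2 - hβ2 + 2*q*hαβ
  have hmul : (1+q^2) * (1 - s₁*s₂ - (2*q/(1+q^2))*(a₁*a₂+b₁*b₂) + ((1-q^2)/(1+q^2))*(s₁-s₂))
      = 2*q*(r₁*r₂ - (a₁*a₂+b₁*b₂)) + (q*α-β)^2 := by
    field_simp
    linear_combination key
  have hterm1 : 0 ≤ 2*q*(r₁*r₂ - (a₁*a₂+b₁*b₂)) := by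
    apply mul_nonneg (by positivity)
    linarith
  have hterm2 : 0 ≤ (q*α-β)^2 := sq_nonneg _
  have hEnn : 0 ≤ 1 - s₁*s₂ - (2*q/(1+q^2))*(a₁*a₂+b₁*b₂) + ((1-q^2)/(1+q^2))*(s₁-s₂) := by
    have h8 : 0 ≤ (1+q^2) * (1 - s₁*s₂ - (2*q/(1+q^2))*(a₁*a₂+b₁*b₂)
        + ((1-q^2)/(1+q^2))*(s₁-s₂)) := by rw [hmul]; linarith
    exact (mul_nonneg_iff_of_pos_left hq2).mp h8
  refine ⟨hEnn, fun h0 => ?_⟩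
  rw [h0, mul_zero] at hmul
  have hz1 : 2*q*(r₁*r₂ - (a₁*a₂+b₁*b₂)) = 0 := by linarith
  have hz2 : (q*α-β)^2 = 0 := by linarith
  have hDeq : a₁*a₂+b₁*b₂ = r₁*r₂ := by
    rcases mul_eq_zero.mp hz1 with h | h
    · exfalso; linarith
    · linarith
  have hαβeq : q*α - β = 0 := by
    exact pow_eq_zero_iff (n := 2) (by norm_num) |>.mp hz2
  refine ⟨hDeq, ?_⟩
  have h7 : (q*α)^2 = β^2 := by linear_combination (q*α+β) * hαβeq
  rw [mul_pow, hα2, hβ2] at h7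
  linarith [h7]


end S0

set_option maxHeartbeats 1000000


/-- classical XXZ model on a connected directed graph supporting a height
function.  (i) `M` is a continuous strictly decreasing bijection from `(0,∞)` onto
`(−|Λ|,|Λ|)`; (ii) the kink configurations built from the height function are the
zero-energy configurations with total third component `M ∈ (−|Λ|,|Λ|)`; (iii) conversely
every zero-energy unit-vector configuration is of this form, and for `Σσ³ = ±|Λ|` the
configuration is constantly `±e₃`. -/
theorem stmt0 {Λ : Type*} [Fintype Λ] [Nonempty Λ] (B : Finset (Λ × Λ))
    (hconn : ∀ x y : Λ, Relation.ReflTransGen (fun u v => (u, v) ∈ B ∨ (v, u) ∈ B) x y)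
    (l : Λ → ℤ) (hheight : ∀ p ∈ B, l p.2 = l p.1 + 1)
    (Δ q : ℝ) (hΔ : 1 < Δ) (hq0 : 0 < q) (hq1 : q < 1) (hrel : Δ = (q + q⁻¹) / 2)
    (A : ℝ) (hA : A = Real.sqrt (1 - Δ⁻¹ ^ 2)) :
    (ContinuousOn (S0.Mfun q l) (Set.Ioi 0) ∧
      StrictAntiOn (S0.Mfun q l) (Set.Ioi 0) ∧
      Set.BijOn (S0.Mfun q l) (Set.Ioi 0)
        (Set.Ioo (-(Fintype.card Λ : ℝ)) (Fintype.card Λ))) ∧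
    (∀ M : ℝ, M ∈ Set.Ioo (-(Fintype.card Λ : ℝ)) (Fintype.card Λ) →
      ∀ φ τ : ℝ, 0 < τ → S0.Mfun q l τ = M →
        S0.energy Δ A B (S0.confOf q τ φ l) = 0 ∧
        (∑ x, S0.confOf q τ φ l x 2) = M) ∧
    (∀ σ : Λ → Fin 3 → ℝ, (∀ x, (σ x 0) ^ 2 + (σ x 1) ^ 2 + (σ x 2) ^ 2 = 1) →
      S0.energy Δ A B σ = 0 →
        (∀ M : ℝ, (∑ x, σ x 2) = M →
            M ∈ Set.Ioo (-(Fintype.card Λ : ℝ)) (Fintype.card Λ) →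
            ∃ τ : ℝ, 0 < τ ∧ S0.Mfun q l τ = M ∧ ∃ φ : ℝ, σ = S0.confOf q τ φ l) ∧
        ((∑ x, σ x 2) = (Fintype.card Λ : ℝ) → σ = fun _ => ![0, 0, 1]) ∧
        ((∑ x, σ x 2) = -(Fintype.card Λ : ℝ) → σ = fun _ => ![0, 0, -1])) := by
  have hDinv : Δ⁻¹ = 2*q/(1+q^2) := S0.Delta_inv_val hq0 hrel
  have hAv : A = (1-q^2)/(1+q^2) := S0.A_val hq0 hq1 hrel hA
  have hcardpos : (0:ℝ) < (Fintype.card Λ : ℝ) := by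
    exact_mod_cast Fintype.card_pos
  refine ⟨⟨(S0.Mfun_contOn hq0).mono Set.Ioi_subset_Ici_self, S0.Mfun_anti hq0,
    fun τ hτ => S0.Mfun_mem hq0 hτ, (S0.Mfun_anti hq0).injOn, fun M hM => ?_⟩, ?_, ?_⟩
  · obtain ⟨τ, hτ, heq⟩ := S0.Mfun_surj hq0 hM
    exact ⟨τ, hτ, heq⟩
  -- part (ii)
  · intro M hM φ τ hτ hMf
    constructor
    · rw [S0.energy]
      apply Finset.sum_eq_zero
      intro p hp
      have hl := hheight p hp
      rw [hDinv, hAv]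
      simp only [S0.confOf, Matrix.cons_val_zero, Matrix.cons_val_one, Matrix.head_cons,
        Matrix.cons_val_two, Matrix.tail_cons, hl]
      linear_combination S0.bond_val_zero hq0 hτ φ (l p.1)
    · rw [← hMf, S0.Mfun]
      apply Finset.sum_congr rfl
      intro x _
      simp [S0.confOf]
  -- part (iii)
  · intro σ hunit hE
    have hnn : ∀ p ∈ B, 0 ≤ 1 - σ p.1 2 * σ p.2 2 - Δ⁻¹*(σ p.1 0*σ p.2 0 + σ p.1 1*σ p.2 1)
        + A*(σ p.1 2 - σ p.2 2) := by
      intro p _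
      rw [hDinv, hAv]
      exact (S0.bond_key hq0 hq1 _ _ _ _ _ _ (hunit p.1) (hunit p.2)).1
    have hterm : ∀ p ∈ B, 1 - σ p.1 2 * σ p.2 2 - Δ⁻¹*(σ p.1 0*σ p.2 0 + σ p.1 1*σ p.2 1)
        + A*(σ p.1 2 - σ p.2 2) = 0 := by
      rw [S0.energy] at hE
      exact (Finset.sum_eq_zero_iff_of_nonneg hnn).mp hE
    have hkey : ∀ p ∈ B,
        σ p.1 0*σ p.2 0 + σ p.1 1*σ p.2 1
          = Real.sqrt (1-(σ p.1 2)^2) * Real.sqrt (1-(σ p.2 2)^2) ∧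
        q^2*(1-σ p.1 2)*(1+σ p.2 2) = (1+σ p.1 2)*(1-σ p.2 2) := by
      intro p hp
      apply (S0.bond_key hq0 hq1 _ _ _ _ _ _ (hunit p.1) (hunit p.2)).2
      have h := hterm p hp
      rw [hDinv, hAv] at h
      exact h
    have hsu : ∀ x, σ x 2 ≤ 1 := by
      intro x
      nlinarith [hunit x, sq_nonneg (σ x 0), sq_nonneg (σ x 1), sq_nonneg (σ x 2 - 1)]
    have hsl : ∀ x, -1 ≤ σ x 2 := by
      intro x
      nlinarith [hunit x, sq_nonneg (σ x 0), sq_nonneg (σ x 1), sq_nonneg (σ x 2 + 1)]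
    have hstep1 : ∀ p ∈ B, (σ p.1 2 = 1 ↔ σ p.2 2 = 1) := by
      intro p hp
      have h := (hkey p hp).2
      constructor
      · intro h1
        rw [h1] at h
        have := hsu p.2
        nlinarith [h]
      · intro h1
        rw [h1] at h
        have := hsu p.1
        nlinarith [h, mul_pos hq0 hq0]
    have hstepm1 : ∀ p ∈ B, (σ p.1 2 = -1 ↔ σ p.2 2 = -1) := by
      intro p hp
      have h := (hkey p hp).2
      constructor
      · intro h1
        rw [h1] at h
        have := hsl p.2
        nlinarith [h, mul_pos hq0 hq0]
      · intro h1
        rw [h1] at h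
        have := hsl p.1
        nlinarith [h]
    obtain ⟨x₀⟩ := (inferInstance : Nonempty Λ)
    have hsum_lt : (∀ x, σ x 2 < 1) → (∑ x, σ x 2) < (Fintype.card Λ : ℝ) := by
      intro h
      have : (Fintype.card Λ : ℝ) = ∑ _x : Λ, (1:ℝ) := by
        simp [Finset.sum_const, Finset.card_univ]
      rw [this]
      exact Finset.sum_lt_sum_of_nonempty Finset.univ_nonempty (fun x _ => h x)
    have hsum_gt : (∀ x, -1 < σ x 2) → -(Fintype.card Λ : ℝ) < (∑ x, σ x 2) := by
      intro h
      have : -(Fintype.card Λ : ℝ) = ∑ _x : Λ, (-1:ℝ) := by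
        simp [Finset.sum_const, Finset.card_univ]
      rw [this]
      exact Finset.sum_lt_sum_of_nonempty Finset.univ_nonempty (fun x _ => h x)
    by_cases hc1 : σ x₀ 2 = 1
    · have hall : ∀ x, σ x 2 = 1 := S0.conn_iff hconn hstep1 x₀ hc1
      have hsum : (∑ x, σ x 2) = (Fintype.card Λ : ℝ) := by
        rw [Finset.sum_congr rfl (fun x _ => hall x)]
        simp [Finset.sum_const, Finset.card_univ]
      refine ⟨?_, ?_, ?_⟩
      · intro M hMeq hMIoo
        exfalso
        rw [hsum] at hMeq
        rw [← hMeq] at hMIoo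
        exact absurd hMIoo.2 (lt_irrefl _)
      · intro _
        funext x i
        have hu := hunit x
        have h2 := hall x
        have h0 : σ x 0 = 0 := by nlinarith [sq_nonneg (σ x 0), sq_nonneg (σ x 1)]
        have h1 : σ x 1 = 0 := by nlinarith [sq_nonneg (σ x 0), sq_nonneg (σ x 1)]
        fin_cases i <;> simp [h0, h1, h2]
      · intro hMeq
        exfalso
        rw [hsum] at hMeq
        linarith
    · by_cases hcm1 : σ x₀ 2 = -1
      · have hall : ∀ x, σ x 2 = -1 := S0.conn_iff hconn hstepm1 x₀ hcm1
        have hsum : (∑ x, σ x 2) = -(Fintype.card Λ : ℝ) := by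
          rw [Finset.sum_congr rfl (fun x _ => hall x)]
          simp [Finset.sum_const, Finset.card_univ]
        refine ⟨?_, ?_, ?_⟩
        · intro M hMeq hMIoo
          exfalso
          rw [hsum] at hMeq
          rw [← hMeq] at hMIoo
          exact absurd hMIoo.1 (lt_irrefl _)
        · intro hMeq
          exfalso
          rw [hsum] at hMeq
          linarith
        · intro _
          funext x i
          have hu := hunit x
          have h2 := hall x
          have h0 : σ x 0 = 0 := by nlinarith [sq_nonneg (σ x 0), sq_nonneg (σ x 1)]
          have h1 : σ x 1 = 0 := by nlinarith [sq_nonneg (σ x 0), sq_nonneg (σ x 1)]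
          fin_cases i <;> simp [h0, h1, h2]
      -- interior case
      · have hall1 : ∀ x, σ x 2 ≠ 1 :=
          S0.conn_iff hconn (fun p hp => not_congr (hstep1 p hp)) x₀ hc1
        have hallm : ∀ x, σ x 2 ≠ -1 :=
          S0.conn_iff hconn (fun p hp => not_congr (hstepm1 p hp)) x₀ hcm1
        have hintu : ∀ x, σ x 2 < 1 := fun x => lt_of_le_of_ne (hsu x) (hall1 x)
        have hintl : ∀ x, -1 < σ x 2 := fun x => lt_of_le_of_ne (hsl x) (Ne.symm (hallm x))
        have h1p : ∀ x, (0:ℝ) < 1 + σ x 2 := fun x => by linarith [hintl x]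
        have h1m : ∀ x, (0:ℝ) < 1 - σ x 2 := fun x => by linarith [hintu x]
        set u : Λ → ℝ := fun x => (1 - σ x 2)/(1 + σ x 2) with hudef
        have hupos : ∀ x, 0 < u x := fun x => div_pos (h1m x) (h1p x)
        have hubond : ∀ p ∈ B, u p.2 = q^2 * u p.1 := by
          intro p hp
          have h := (hkey p hp).2
          rw [hudef]
          rw [mul_div_assoc', div_eq_div_iff (h1p p.2).ne' (h1p p.1).ne']
          linear_combination -h
        set τ : ℝ := q ^ (-(2 * l x₀)) * u x₀ with hτdef
        have hτpos : 0 < τ := mul_pos (zpow_pos hq0 _) (hupos x₀)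
        have hu_all : ∀ x, u x = q ^ (2 * l x) * τ := by
          apply S0.conn_iff hconn (P := fun x => u x = q ^ (2 * l x) * τ) _ x₀
          · rw [hτdef, ← mul_assoc, ← zpow_add₀ hq0.ne']
            simp
          · intro p hp
            have hb := hubond p hp
            have hl := hheight p hp
            have hexp : q ^ (2 * l p.2) = q^2 * q ^ (2 * l p.1) := by
              rw [hl, S0.zpow_succ_two hq0]
            constructor
            · intro h1
              have h1' : u p.1 = q ^ (2 * l p.1) * τ := h1
              show u p.2 = q ^ (2 * l p.2) * τ
              rw [hb, h1', hexp]
              ring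
            · intro h2
              have h2' : u p.2 = q ^ (2 * l p.2) * τ := h2
              show u p.1 = q ^ (2 * l p.1) * τ
              rw [hexp] at h2'
              have : q^2 * u p.1 = q^2 * (q ^ (2 * l p.1) * τ) := by
                rw [← hb, h2']; ring
              have hqne : (q:ℝ)^2 ≠ 0 := by positivity
              exact mul_left_cancel₀ hqne this
        have hs_eq : ∀ x, σ x 2 = S0.sprof q τ (l x) := by
          intro x
          have hx := hu_all x
          rw [hudef] at hx
          simp only at hx
          rw [div_eq_iff (h1p x).ne'] at hx
          have hcpos : 0 < q ^ (2 * l x) * τ := mul_pos (S0.c_pos hq0 _) hτpos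
          rw [S0.sprof_eq, eq_div_iff (by linarith : (1 + q ^ (2*l x) * τ) ≠ 0)]
          linear_combination -hx
        have hMfun : S0.Mfun q l τ = ∑ x, σ x 2 := by
          rw [S0.Mfun]
          exact Finset.sum_congr rfl (fun x _ => (hs_eq x).symm)
        -- transverse direction
        set r : Λ → ℝ := fun x => Real.sqrt (1 - (σ x 2)^2) with hrdef
        have hrpos : ∀ x, 0 < r x := by
          intro x
          apply Real.sqrt_pos.mpr
          nlinarith [hintu x, hintl x]
        have hrsq : ∀ x, r x ^ 2 = 1 - (σ x 2)^2 := by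
          intro x
          apply Real.sq_sqrt
          nlinarith [hintu x, hintl x]
        have halign : ∀ p ∈ B, r p.1 * σ p.2 0 = r p.2 * σ p.1 0 ∧
            r p.1 * σ p.2 1 = r p.2 * σ p.1 1 := by
          intro p hp
          apply S0.cs_eq
          · rw [hrsq p.1]; linarith [hunit p.1]
          · rw [hrsq p.2]; linarith [hunit p.2]
          · exact (hkey p hp).1
        have hdir : ∀ p ∈ B, σ p.1 0 / r p.1 = σ p.2 0 / r p.2 ∧
            σ p.1 1 / r p.1 = σ p.2 1 / r p.2 := by
          intro p hp
          obtain ⟨ha, hb⟩ := halign p hp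
          constructor
          · rw [div_eq_div_iff (hrpos p.1).ne' (hrpos p.2).ne']
            linear_combination -ha
          · rw [div_eq_div_iff (hrpos p.1).ne' (hrpos p.2).ne']
            linear_combination -hb
        have hdir_all : ∀ x, σ x 0 / r x = σ x₀ 0 / r x₀ ∧ σ x 1 / r x = σ x₀ 1 / r x₀ := by
          apply S0.conn_iff hconn
            (P := fun x => σ x 0 / r x = σ x₀ 0 / r x₀ ∧ σ x 1 / r x = σ x₀ 1 / r x₀) _ x₀
          · exact ⟨rfl, rfl⟩
          · intro p hp
            rw [(hdir p hp).1, (hdir p hp).2]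
        have hsum01 : (σ x₀ 0 / r x₀)^2 + (σ x₀ 1 / r x₀)^2 = 1 := by
          rw [div_pow, div_pow, ← add_div, div_eq_one_iff_eq (pow_ne_zero 2 (hrpos x₀).ne')]
          rw [hrsq x₀]
          linarith [hunit x₀]
        obtain ⟨φ, hcos, hsin⟩ := S0.exists_cos_sin hsum01
        have hσeq : σ = S0.confOf q τ φ l := by
          funext x i
          have hd := hdir_all x
          have hs := hs_eq x
          have hrx : Real.sqrt (1 - S0.sprof q τ (l x) ^ 2) = r x := by
            rw [hrdef, ← hs]
          fin_cases i
          · show σ x 0 = Real.sqrt (1 - S0.sprof q τ (l x) ^ 2) * Real.cos φ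
            rw [hrx, hcos, ← hd.1]
            rw [mul_div_cancel₀ _ (hrpos x).ne']
          · show σ x 1 = Real.sqrt (1 - S0.sprof q τ (l x) ^ 2) * Real.sin φ
            rw [hrx, hsin, ← hd.2]
            rw [mul_div_cancel₀ _ (hrpos x).ne']
          · show σ x 2 = S0.sprof q τ (l x)
            exact hs
        refine ⟨?_, ?_, ?_⟩
        · intro M hMeq _
          exact ⟨τ, hτpos, by rw [hMfun, hMeq], φ, hσeq⟩
        · intro hMeq
          exfalso
          have := hsum_lt hintu
          rw [hMeq] at this
          exact absurd this (lt_irrefl _)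
        · intro hMeq
          exfalso
          have := hsum_gt hintl
          rw [hMeq] at this
          exact absurd this (lt_irrefl _)
end
end

section
/- Let Λ be a finite set and B₁,…,B_d pairwise disjoint sets of ordered pairs from Λ (oriented bonds of d types) such that (Λ, B₁∪⋯∪B_d) is connected and supports a generalized height function, i.e. a map l = (l₁,…,l_d) : Λ → ℤ^d with l(y) = l(x) + e_i whenever (x,y) ∈ B_i. Fix a half-integer S ∈ {1/2, 1, 3/2, …} and anisotropies Δ₁,…,Δ_d ∈ [1,∞); let q_i ∈ (0,1] solve Δ_i = (q_i+q_i⁻¹)/2 and set A(Δ_i) = √(1−Δ_i⁻²). On ⨂_{x∈Λ} ℂ^{2S+1} define H = Σ_{i=1}^d Σ_{(x,y)∈B_i} h_{(x,y)}(Δ_i), where h_{(x,y)}(Δ) = S²·1 − S³_xS³_y − (1/(2Δ))(S⁺_xS⁻_y + S⁻_xS⁺_y) + S·A(Δ)(S³_x − S³_y). Then for every N ∈ {0,1,…,2S|Λ|}, the space of vectors ψ lying in the eigenspace of Σ_{x∈Λ} S³_x with eigenvalue S|Λ| − N and satisfying Hψ = 0 is exactly one-dimensional, spanned by Ψ₀(N)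 = Σ over (n_x) ∈ {0,1,…,2S}^Λ with Σ_x n_x = N of ∏_{x∈Λ} (q₁^{l₁(x)} ⋯ q_d^{l_d(x)})^{n_x} · binom(2S, n_x)^{1/2} · ⨂_{x∈Λ} |S − n_x⟩. -/
open scoped Classical

noncomputable section

namespace S1

/-- Configurations of the spin-`S` system (`twoS = 2S`): at each site the basis vector
`|S − n_x⟩` is recorded by `n_x ∈ {0,…,2S}`. -/
abbrev QConf (Λ : Type*) (twoS : ℕ) := Λ → Fin (twoS + 1)

/-- The `S³`-value `m = S − n` of the local basis vector recorded by `n`. -/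
def mv (twoS : ℕ) (n : Fin (twoS + 1)) : ℝ := (twoS : ℝ) / 2 - (n : ℕ)

/-- The coefficient `√(S(S+1) − a(a+1))·√(S(S+1) − b(b−1))` of `S⁺ ⊗ S⁻` acting on
`|a⟩ ⊗ |b⟩`. -/
def hopCoeff (twoS : ℕ) (a b : ℝ) : ℝ :=
  Real.sqrt (((twoS : ℝ) / 2) * ((twoS : ℝ) / 2 + 1) - a * (a + 1)) *
    Real.sqrt (((twoS : ℝ) / 2) * ((twoS : ℝ) / 2 + 1) - b * (b - 1))

/-- Matrix (in the configuration basis) of the bond Hamiltonian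
`h_{(x,y)}(Δ) = S²·1 − S³_xS³_y − (1/(2Δ))(S⁺_xS⁻_y + S⁻_xS⁺_y) + S·A(Δ)(S³_x − S³_y)`,
where `A(Δ) = √(1 − Δ⁻²)` and the spin-`S` matrices are
`S³|m⟩ = m|m⟩`, `S^±|m⟩ = √(S(S+1) − m(m±1))|m±1⟩`. -/
def hXY {Λ : Type*} [Fintype Λ] [DecidableEq Λ] (twoS : ℕ) (Δ : ℝ) (x y : Λ) :
    Matrix (QConf Λ twoS) (QConf Λ twoS) ℂ :=
  fun c' c =>
    (((if c' = c then
        ((twoS : ℝ) / 2) ^ 2 - mv twoS (c x) * mv twoS (c y) +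
          ((twoS : ℝ) / 2) * Real.sqrt (1 - Δ⁻¹ ^ 2) * (mv twoS (c x) - mv twoS (c y))
      else 0) -
      (1 / (2 * Δ)) *
        ((if (∀ z, z ≠ x → z ≠ y → c' z = c z) ∧
              ((c' x : ℕ) + 1 = (c x : ℕ)) ∧ ((c' y : ℕ) = (c y : ℕ) + 1) then
            hopCoeff twoS (mv twoS (c x)) (mv twoS (c y))
          else 0) +
          (if (∀ z, z ≠ x → z ≠ y → c' z = c z) ∧
              ((c' x : ℕ) = (c x : ℕ) + 1) ∧ ((c' y : ℕ) + 1 = (c y : ℕ)) then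
            hopCoeff twoS (mv twoS (c y)) (mv twoS (c x))
          else 0))) : ℝ)

/-- Matrix of the total third component of spin `Σ_{x∈Λ} S³_x`. -/
def s3tot {Λ : Type*} [Fintype Λ] [DecidableEq Λ] (twoS : ℕ) :
    Matrix (QConf Λ twoS) (QConf Λ twoS) ℂ :=
  fun c' c => if c' = c then ((∑ x, mv twoS (c x) : ℝ) : ℂ) else 0

/-- The Alcaraz–Salinas–Wreszinski ground state
`Ψ₀(N) = Σ_{Σn_x = N} ∏_x (q₁^{l₁(x)}⋯q_d^{l_d(x)})^{n_x} binom(2S,n_x)^{1/2} |{S−n_x}⟩`. -/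
def asw {Λ : Type*} [Fintype Λ] (twoS d : ℕ) (qs : Fin d → ℝ) (l : Λ → Fin d → ℤ)
    (N : ℕ) : QConf Λ twoS → ℂ :=
  fun c =>
    if (∑ x, ((c x : ℕ))) = N then
      ((∏ x, ((∏ i, qs i ^ l x i) ^ ((c x : ℕ)) *
          Real.sqrt (Nat.choose twoS (c x)))) : ℝ)
    else 0

end S1

namespace ASW
open Finset

lemma sqrt_nat_mul (m n : ℕ) : Real.sqrt m * Real.sqrt n = Real.sqrt ((m*n : ℕ)) := by
  rw [← Real.sqrt_mul (by positivity)]; push_cast; ring_nf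

lemma Adelta (q : ℝ) (h0 : 0 < q) (h1 : q ≤ 1) :
    Real.sqrt (1 - (((q + q⁻¹)/2)⁻¹)^2) = (q⁻¹ - q)/(q + q⁻¹) := by
  have hq : 0 < q + q⁻¹ := by positivity
  have h2 : 1 - (((q + q⁻¹)/2)⁻¹)^2 = ((q⁻¹ - q)/(q + q⁻¹))^2 := by
    field_simp
    ring
  rw [h2, Real.sqrt_sq]
  have h3 : q ≤ q⁻¹ := le_trans h1 (one_le_inv_iff₀.mpr ⟨h0, h1⟩)
  exact div_nonneg (by linarith) hq.le

lemma bondScalar (K : ℕ) (a b : ℝ) (q : ℝ) (h0 : 0 < q) (h1 : q ≤ 1) :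
    ((K:ℝ)/2)^2 - ((K:ℝ)/2-a)*((K:ℝ)/2-b)
      + ((K:ℝ)/2) * Real.sqrt (1 - (((q+q⁻¹)/2)⁻¹)^2) * (((K:ℝ)/2-a)-((K:ℝ)/2-b))
    = (1/(2*((q+q⁻¹)/2))) * (q⁻¹ * (((K:ℝ)-a)*b) + q * (a*((K:ℝ)-b))) := by
  rw [Adelta q h0 h1]
  have hq : 0 < q + q⁻¹ := by positivity
  field_simp
  ring

-- nat choose cross identities over ℝ
lemma choose_cross1 (K a : ℕ) :
    ((a:ℝ)+1) * (Nat.choose K (a+1) : ℝ) = ((K-a : ℕ) : ℝ) * (Nat.choose K a : ℝ) := by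
  have h : ((Nat.choose K (a+1) * (a+1) : ℕ) : ℝ) = ((Nat.choose K a * (K-a) : ℕ) : ℝ) := by
    exact_mod_cast Nat.choose_succ_right_eq K a
  push_cast at h
  linarith

lemma choose_cross2 (K b : ℕ) (hb : 1 ≤ b) (hbK : b ≤ K) :
    (b:ℝ) * (Nat.choose K b : ℝ) = ((K-b+1 : ℕ) : ℝ) * (Nat.choose K (b-1) : ℝ) := by
  obtain ⟨b', rfl⟩ : ∃ b', b = b' + 1 := ⟨b-1, by omega⟩
  have h2 : ((Nat.choose K (b'+1) * (b'+1) : ℕ) : ℝ) = ((Nat.choose K b' * (K-b') : ℕ) : ℝ) := by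
    exact_mod_cast Nat.choose_succ_right_eq K b'
  push_cast at h2
  have h3 : (K - (b'+1) + 1 : ℕ) = K - b' := by omega
  rw [h3, Nat.add_sub_cancel]
  push_cast
  linarith

end ASW
namespace ASW

lemma hopCoeff_eq (K u v : ℕ) (hu : u ≤ K) (hv : v ≤ K) :
    S1.hopCoeff K ((K:ℝ)/2 - (u:ℝ)) ((K:ℝ)/2 - (v:ℝ))
      = Real.sqrt ((u * (K - u + 1) : ℕ)) * Real.sqrt (((K - v) * (v + 1) : ℕ)) := by
  unfold S1.hopCoeff
  congr 1
  · congr 1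
    push_cast [Nat.cast_sub hu]
    ring
  · congr 1
    push_cast [Nat.cast_sub hv]
    ring

lemma sqrt_hop (K a b : ℕ) (haK : a < K) (hb1 : 1 ≤ b) (hbK : b ≤ K) :
    Real.sqrt (((a+1) * (K - (a+1) + 1) : ℕ)) * Real.sqrt (((K - (b-1)) * ((b-1) + 1) : ℕ)) *
      (Real.sqrt (Nat.choose K (a+1)) * Real.sqrt (Nat.choose K (b-1)))
    = ((K-a : ℕ) : ℝ) * (b:ℝ) * (Real.sqrt (Nat.choose K a) * Real.sqrt (Nat.choose K b)) := by
  have e1 : ((a+1) * (K - (a+1) + 1) : ℕ) = (a+1) * (K - a) := by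
    have : K - (a+1) + 1 = K - a := by omega
    rw [this]
  have e2 : ((K - (b-1)) * ((b-1) + 1) : ℕ) = (K - b + 1) * b := by
    have h1 : K - (b-1) = K - b + 1 := by omega
    have h2 : (b-1) + 1 = b := by omega
    rw [h1, h2]
  rw [e1, e2]
  have hL : 0 ≤ Real.sqrt ((a+1) * (K - a) : ℕ) * Real.sqrt ((K - b + 1) * b : ℕ) *
      (Real.sqrt (Nat.choose K (a+1)) * Real.sqrt (Nat.choose K (b-1))) := by positivity
  have hR : (0:ℝ) ≤ ((K-a : ℕ) : ℝ) * (b:ℝ) * (Real.sqrt (Nat.choose K a) * Real.sqrt (Nat.choose K b)) := by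
    positivity
  have hsq : (Real.sqrt ((a+1) * (K - a) : ℕ) * Real.sqrt ((K - b + 1) * b : ℕ) *
      (Real.sqrt (Nat.choose K (a+1)) * Real.sqrt (Nat.choose K (b-1))))^2
      = (((K-a : ℕ) : ℝ) * (b:ℝ) * (Real.sqrt (Nat.choose K a) * Real.sqrt (Nat.choose K b)))^2 := by
    have cc1 := choose_cross1 K a
    have cc2 := choose_cross2 K b hb1 hbK
    simp only [mul_pow, Real.sq_sqrt (Nat.cast_nonneg _)]
    push_cast [Nat.cast_sub haK.le, Nat.cast_sub hbK] at *
    linear_combination (((K:ℝ)-a)*(((K:ℝ)-b+1))*(b:ℝ)*(Nat.choose K (b-1) : ℝ)) * cc1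
      - ((((K:ℝ)-a))^2*(b:ℝ)*(Nat.choose K a : ℝ)) * cc2
  nlinarith [hsq, hL, hR]

end ASW
namespace ASW

lemma hop1_combine (K a b : ℕ) (haK : a < K) (hb1 : 1 ≤ b) (hbK : b ≤ K)
    (Qx Qy q : ℝ) (hq : 0 < q) (hQ : Qy = Qx * q) :
    S1.hopCoeff K ((K:ℝ)/2 - ((a+1 : ℕ):ℝ)) ((K:ℝ)/2 - ((b-1 : ℕ):ℝ)) *
      ((Qx^(a+1) * Real.sqrt (Nat.choose K (a+1))) * (Qy^(b-1) * Real.sqrt (Nat.choose K (b-1))))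
    = q⁻¹ * ((((K:ℝ) - a)) * (b:ℝ)) *
      ((Qx^a * Real.sqrt (Nat.choose K a)) * (Qy^b * Real.sqrt (Nat.choose K b))) := by
  have hqne := ne_of_gt hq
  rw [hopCoeff_eq K (a+1) (b-1) (by omega) (by omega)]
  have key := sqrt_hop K a b haK hb1 hbK
  rw [show ((K - a : ℕ):ℝ) = (K:ℝ) - a by push_cast [Nat.cast_sub haK.le]; ring] at key
  have hpow : Qx^(a+1) * Qy^(b-1) * q = Qx^a * Qy^b := by
    subst hQ
    obtain ⟨b', rfl⟩ : ∃ b', b = b'+1 := ⟨b-1, by omega⟩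
    simp only [Nat.add_sub_cancel, pow_succ, mul_pow]
    ring
  apply mul_right_cancel₀ hqne
  have expand : Real.sqrt (((a+1) * (K - (a+1) + 1) : ℕ)) * Real.sqrt (((K - (b-1)) * ((b-1)+1) : ℕ)) *
      ((Qx^(a+1) * Real.sqrt (Nat.choose K (a+1))) * (Qy^(b-1) * Real.sqrt (Nat.choose K (b-1)))) * q
      = (Real.sqrt (((a+1) * (K - (a+1) + 1) : ℕ)) * Real.sqrt (((K - (b-1)) * ((b-1)+1) : ℕ)) *
        (Real.sqrt (Nat.choose K (a+1)) * Real.sqrt (Nat.choose K (b-1)))) * (Qx^(a+1) * Qy^(b-1) * q) := by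
    ring
  rw [expand, hpow, key]
  field_simp

variable {Λ : Type*} [Fintype Λ] [DecidableEq Λ]

/-- Real version of the bond Hamiltonian matrix. -/
def hXYr (twoS : ℕ) (Δ : ℝ) (x y : Λ) :
    Matrix (S1.QConf Λ twoS) (S1.QConf Λ twoS) ℝ :=
  fun c' c =>
    (if c' = c then
        ((twoS : ℝ) / 2) ^ 2 - S1.mv twoS (c x) * S1.mv twoS (c y) +
          ((twoS : ℝ) / 2) * Real.sqrt (1 - Δ⁻¹ ^ 2) * (S1.mv twoS (c x) - S1.mv twoS (c y))
      else 0) -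
      (1 / (2 * Δ)) *
        ((if (∀ z, z ≠ x → z ≠ y → c' z = c z) ∧
              ((c' x : ℕ) + 1 = (c x : ℕ)) ∧ ((c' y : ℕ) = (c y : ℕ) + 1) then
            S1.hopCoeff twoS (S1.mv twoS (c x)) (S1.mv twoS (c y))
          else 0) +
          (if (∀ z, z ≠ x → z ≠ y → c' z = c z) ∧
              ((c' x : ℕ) = (c x : ℕ) + 1) ∧ ((c' y : ℕ) + 1 = (c y : ℕ)) then
            S1.hopCoeff twoS (S1.mv twoS (c y)) (S1.mv twoS (c x))
          else 0))

lemma hXY_eq (twoS : ℕ) (Δ : ℝ) (x y : Λ) (c' c : S1.QConf Λ twoS) :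
    S1.hXY twoS Δ x y c' c = ((hXYr twoS Δ x y c' c : ℝ) : ℂ) := rfl

/-- weight vector -/
def wt (K : ℕ) (Q : Λ → ℝ) : S1.QConf Λ K → ℝ :=
  fun c => ∏ z, Q z ^ (c z : ℕ) * Real.sqrt (Nat.choose K (c z))

lemma prod_update' {α : Type*} (s : Finset Λ) (F : Λ → α → ℝ) (g : Λ → α) (i : Λ) (v : α)
    (hi : i ∈ s) :
    ∏ z ∈ s, F z (Function.update g i v z) = F i v * ∏ z ∈ s.erase i, F z (g z) := by
  rw [← Finset.mul_prod_erase s _ hi, Function.update_self]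
  congr 1
  exact Finset.prod_congr rfl fun z hz => by rw [Function.update_of_ne (Finset.ne_of_mem_erase hz)]

lemma wt_pos (K : ℕ) (Q : Λ → ℝ) (hQ : ∀ z, 0 < Q z) (c : S1.QConf Λ K) : 0 < wt K Q c := by
  apply Finset.prod_pos
  intro z _
  have h1 : 0 < Q z ^ (c z : ℕ) := pow_pos (hQ z) _
  have h2 : 0 < Nat.choose K (c z) := Nat.choose_pos (by omega)
  have h3 : (0:ℝ) < Nat.choose K (c z) := by exact_mod_cast h2
  positivity

end ASW
namespace ASW
set_option linter.unusedSectionVars false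

variable {Λ : Type*} [Fintype Λ] [DecidableEq Λ]

lemma hopsum1 (K : ℕ) (x y : Λ) (hxy : x ≠ y) (q : ℝ) (hq0 : 0 < q)
    (Q : Λ → ℝ) (hQ : Q y = Q x * q) (c' : S1.QConf Λ K) :
    ∑ c : S1.QConf Λ K,
      (if (∀ z, z ≠ x → z ≠ y → c' z = c z) ∧
          ((c' x : ℕ) + 1 = (c x : ℕ)) ∧ ((c' y : ℕ) = (c y : ℕ) + 1) then
        S1.hopCoeff K (S1.mv K (c x)) (S1.mv K (c y)) * wt K Q c
      else 0)
    = q⁻¹ * ((((K:ℝ) - ((c' x : ℕ) : ℝ))) * ((c' y : ℕ) : ℝ)) * wt K Q c' := by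
  set a := (c' x : ℕ) with ha_def
  set b := (c' y : ℕ) with hb_def
  have haK1 : a < K + 1 := (c' x).isLt
  have hbK1 : b < K + 1 := (c' y).isLt
  by_cases hcase : a < K ∧ 0 < b
  · obtain ⟨haK, hb⟩ := hcase
    set vx : Fin (K+1) := ⟨a + 1, by omega⟩ with hvx
    set vy : Fin (K+1) := ⟨b - 1, by omega⟩ with hvy
    have hvxn : (vx : ℕ) = a + 1 := rfl
    have hvyn : (vy : ℕ) = b - 1 := rfl
    set c₁ : S1.QConf Λ K := Function.update (Function.update c' x vx) y vy with hc₁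
    have hc₁x : c₁ x = vx := by
      rw [hc₁, Function.update_of_ne hxy, Function.update_self]
    have hc₁y : c₁ y = vy := by rw [hc₁, Function.update_self]
    have hc₁z : ∀ z, z ≠ x → z ≠ y → c₁ z = c' z := by
      intro z hzx hzy
      rw [hc₁, Function.update_of_ne hzy, Function.update_of_ne hzx]
    have hsum : (∑ c : S1.QConf Λ K,
        (if (∀ z, z ≠ x → z ≠ y → c' z = c z) ∧
            (a + 1 = (c x : ℕ)) ∧ (b = (c y : ℕ) + 1) then
          S1.hopCoeff K (S1.mv K (c x)) (S1.mv K (c y)) * wt K Q c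
        else 0))
        = (if (∀ z, z ≠ x → z ≠ y → c' z = c₁ z) ∧
            (a + 1 = (c₁ x : ℕ)) ∧ (b = (c₁ y : ℕ) + 1) then
          S1.hopCoeff K (S1.mv K (c₁ x)) (S1.mv K (c₁ y)) * wt K Q c₁
        else 0) := by
      apply Finset.sum_eq_single_of_mem c₁ (Finset.mem_univ c₁)
      intro c _ hne
      rw [if_neg]
      rintro ⟨hall, hx', hy'⟩
      apply hne
      funext z
      by_cases hzx : z = x
      · subst hzx
        rw [hc₁x]
        exact Fin.ext (by omega)
      · by_cases hzy : z = y
        · subst hzy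
          rw [hc₁y]
          refine Fin.ext ?_
          rw [hvyn]
          omega
        · rw [hc₁z z hzx hzy]
          exact (hall z hzx hzy).symm
    rw [hsum, if_pos]
    · -- value computation
      have hwt1 : wt K Q c₁ = (Q y ^ (vy : ℕ) * Real.sqrt (Nat.choose K (vy : ℕ))) *
          ((Q x ^ (vx : ℕ) * Real.sqrt (Nat.choose K (vx : ℕ))) *
            ∏ z ∈ (Finset.univ.erase y).erase x,
              Q z ^ (c' z : ℕ) * Real.sqrt (Nat.choose K (c' z : ℕ))) := by
        rw [hc₁]
        unfold wt
        rw [prod_update' Finset.univ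
            (fun z (n : Fin (K+1)) => Q z ^ (n : ℕ) * Real.sqrt (Nat.choose K (n : ℕ)))
            _ y vy (Finset.mem_univ y),
          prod_update' (Finset.univ.erase y)
            (fun z (n : Fin (K+1)) => Q z ^ (n : ℕ) * Real.sqrt (Nat.choose K (n : ℕ)))
            c' x vx (Finset.mem_erase.mpr ⟨hxy, Finset.mem_univ x⟩)]
      have hwt0 : wt K Q c' = (Q y ^ b * Real.sqrt (Nat.choose K b)) *
          ((Q x ^ a * Real.sqrt (Nat.choose K a)) *
            ∏ z ∈ (Finset.univ.erase y).erase x,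
              Q z ^ (c' z : ℕ) * Real.sqrt (Nat.choose K (c' z : ℕ))) := by
        unfold wt
        rw [← Finset.mul_prod_erase Finset.univ _ (Finset.mem_univ y),
          ← Finset.mul_prod_erase (Finset.univ.erase y) _
            (Finset.mem_erase.mpr ⟨hxy, Finset.mem_univ x⟩)]
      have hmvx : S1.mv K (c₁ x) = (K:ℝ)/2 - ((a+1 : ℕ) : ℝ) := by
        rw [hc₁x]
        unfold S1.mv
        rw [hvxn]
      have hmvy : S1.mv K (c₁ y) = (K:ℝ)/2 - ((b-1 : ℕ) : ℝ) := by
        rw [hc₁y]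
        unfold S1.mv
        rw [hvyn]
      rw [hwt1, hwt0, hmvx, hmvy, hvxn, hvyn]
      have key := hop1_combine K a b haK hb (by omega) (Q x) (Q y) q hq0 hQ
      linear_combination (∏ z ∈ (Finset.univ.erase y).erase x,
        Q z ^ (c' z : ℕ) * Real.sqrt (Nat.choose K (c' z : ℕ))) * key
    · refine ⟨fun z hzx hzy => (hc₁z z hzx hzy).symm, ?_, ?_⟩
      · rw [hc₁x, hvxn]
      · rw [hc₁y, hvyn]
        omega
  · have hzero : (∑ c : S1.QConf Λ K,
        (if (∀ z, z ≠ x → z ≠ y → c' z = c z) ∧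
            (a + 1 = (c x : ℕ)) ∧ (b = (c y : ℕ) + 1) then
          S1.hopCoeff K (S1.mv K (c x)) (S1.mv K (c y)) * wt K Q c
        else 0)) = 0 := by
      apply Finset.sum_eq_zero
      intro c _
      rw [if_neg]
      rintro ⟨hall, hx', hy'⟩
      have h1 : (c x : ℕ) < K + 1 := (c x).isLt
      exact hcase ⟨by omega, by omega⟩
    rw [hzero]
    have hab : ((K:ℝ) - (a:ℝ)) * (b:ℝ) = 0 := by
      rcases not_and_or.mp hcase with h | h
      · have : a = K := by omega
        rw [this]
        simp
      · have : b = 0 := by omega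
        rw [this]
        simp
    rw [hab]
    ring

end ASW
namespace ASW
set_option linter.unusedSectionVars false

variable {Λ : Type*} [Fintype Λ] [DecidableEq Λ]

lemma hopsum2 (K : ℕ) (x y : Λ) (hxy : x ≠ y) (q : ℝ) (hq0 : 0 < q)
    (Q : Λ → ℝ) (hQpos : ∀ z, 0 < Q z) (hQ : Q y = Q x * q) (c' : S1.QConf Λ K) :
    ∑ c : S1.QConf Λ K,
      (if (∀ z, z ≠ x → z ≠ y → c' z = c z) ∧
          ((c' x : ℕ) = (c x : ℕ) + 1) ∧ ((c' y : ℕ) + 1 = (c y : ℕ)) then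
        S1.hopCoeff K (S1.mv K (c y)) (S1.mv K (c x)) * wt K Q c
      else 0)
    = q * (((c' x : ℕ) : ℝ) * ((K:ℝ) - ((c' y : ℕ) : ℝ))) * wt K Q c' := by
  set a := (c' x : ℕ) with ha_def
  set b := (c' y : ℕ) with hb_def
  have haK1 : a < K + 1 := (c' x).isLt
  have hbK1 : b < K + 1 := (c' y).isLt
  by_cases hcase : 0 < a ∧ b < K
  · obtain ⟨ha, hbK⟩ := hcase
    set vx : Fin (K+1) := ⟨a - 1, by omega⟩ with hvx
    set vy : Fin (K+1) := ⟨b + 1, by omega⟩ with hvy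
    have hvxn : (vx : ℕ) = a - 1 := rfl
    have hvyn : (vy : ℕ) = b + 1 := rfl
    set c₂ : S1.QConf Λ K := Function.update (Function.update c' x vx) y vy with hc₂
    have hc₂x : c₂ x = vx := by
      rw [hc₂, Function.update_of_ne hxy, Function.update_self]
    have hc₂y : c₂ y = vy := by rw [hc₂, Function.update_self]
    have hc₂z : ∀ z, z ≠ x → z ≠ y → c₂ z = c' z := by
      intro z hzx hzy
      rw [hc₂, Function.update_of_ne hzy, Function.update_of_ne hzx]
    have hsum : (∑ c : S1.QConf Λ K,
        (if (∀ z, z ≠ x → z ≠ y → c' z = c z) ∧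
            (a = (c x : ℕ) + 1) ∧ (b + 1 = (c y : ℕ)) then
          S1.hopCoeff K (S1.mv K (c y)) (S1.mv K (c x)) * wt K Q c
        else 0))
        = (if (∀ z, z ≠ x → z ≠ y → c' z = c₂ z) ∧
            (a = (c₂ x : ℕ) + 1) ∧ (b + 1 = (c₂ y : ℕ)) then
          S1.hopCoeff K (S1.mv K (c₂ y)) (S1.mv K (c₂ x)) * wt K Q c₂
        else 0) := by
      apply Finset.sum_eq_single_of_mem c₂ (Finset.mem_univ c₂)
      intro c _ hne
      rw [if_neg]
      rintro ⟨hall, hx', hy'⟩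
      apply hne
      funext z
      by_cases hzx : z = x
      · subst hzx
        rw [hc₂x]
        refine Fin.ext ?_
        rw [hvxn]
        omega
      · by_cases hzy : z = y
        · subst hzy
          rw [hc₂y]
          refine Fin.ext ?_
          rw [hvyn]
          omega
        · rw [hc₂z z hzx hzy]
          exact (hall z hzx hzy).symm
    rw [hsum, if_pos]
    · have hwt1 : wt K Q c₂ = (Q y ^ (vy : ℕ) * Real.sqrt (Nat.choose K (vy : ℕ))) *
          ((Q x ^ (vx : ℕ) * Real.sqrt (Nat.choose K (vx : ℕ))) *
            ∏ z ∈ (Finset.univ.erase y).erase x,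
              Q z ^ (c' z : ℕ) * Real.sqrt (Nat.choose K (c' z : ℕ))) := by
        rw [hc₂]
        unfold wt
        rw [prod_update' Finset.univ
            (fun z (n : Fin (K+1)) => Q z ^ (n : ℕ) * Real.sqrt (Nat.choose K (n : ℕ)))
            _ y vy (Finset.mem_univ y),
          prod_update' (Finset.univ.erase y)
            (fun z (n : Fin (K+1)) => Q z ^ (n : ℕ) * Real.sqrt (Nat.choose K (n : ℕ)))
            c' x vx (Finset.mem_erase.mpr ⟨hxy, Finset.mem_univ x⟩)]
      have hwt0 : wt K Q c' = (Q y ^ b * Real.sqrt (Nat.choose K b)) *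
          ((Q x ^ a * Real.sqrt (Nat.choose K a)) *
            ∏ z ∈ (Finset.univ.erase y).erase x,
              Q z ^ (c' z : ℕ) * Real.sqrt (Nat.choose K (c' z : ℕ))) := by
        unfold wt
        rw [← Finset.mul_prod_erase Finset.univ _ (Finset.mem_univ y),
          ← Finset.mul_prod_erase (Finset.univ.erase y) _
            (Finset.mem_erase.mpr ⟨hxy, Finset.mem_univ x⟩)]
      have hmvx : S1.mv K (c₂ x) = (K:ℝ)/2 - ((a-1 : ℕ) : ℝ) := by
        rw [hc₂x]
        unfold S1.mv
        rw [hvxn]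
      have hmvy : S1.mv K (c₂ y) = (K:ℝ)/2 - ((b+1 : ℕ) : ℝ) := by
        rw [hc₂y]
        unfold S1.mv
        rw [hvyn]
      rw [hwt1, hwt0, hmvx, hmvy, hvxn, hvyn]
      have hQ' : Q x = Q y * q⁻¹ := by
        rw [hQ]
        field_simp
      have key := hop1_combine K b a hbK ha (by omega) (Q y) (Q x) q⁻¹
        (inv_pos.mpr hq0) hQ'
      rw [inv_inv] at key
      linear_combination (∏ z ∈ (Finset.univ.erase y).erase x,
        Q z ^ (c' z : ℕ) * Real.sqrt (Nat.choose K (c' z : ℕ))) * key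
    · refine ⟨fun z hzx hzy => (hc₂z z hzx hzy).symm, ?_, ?_⟩
      · rw [hc₂x, hvxn]
        omega
      · rw [hc₂y, hvyn]
  · have hzero : (∑ c : S1.QConf Λ K,
        (if (∀ z, z ≠ x → z ≠ y → c' z = c z) ∧
            (a = (c x : ℕ) + 1) ∧ (b + 1 = (c y : ℕ)) then
          S1.hopCoeff K (S1.mv K (c y)) (S1.mv K (c x)) * wt K Q c
        else 0)) = 0 := by
      apply Finset.sum_eq_zero
      intro c _
      rw [if_neg]
      rintro ⟨hall, hx', hy'⟩
      have h1 : (c y : ℕ) < K + 1 := (c y).isLt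
      exact hcase ⟨by omega, by omega⟩
    rw [hzero]
    have hab : (a:ℝ) * ((K:ℝ) - (b:ℝ)) = 0 := by
      rcases not_and_or.mp hcase with h | h
      · have : a = 0 := by omega
        rw [this]
        simp
      · have : b = K := by omega
        rw [this]
        simp
    rw [hab]
    ring

lemma bond_mulVec (K : ℕ) (x y : Λ) (hxy : x ≠ y) (Δ q : ℝ) (hq0 : 0 < q) (hq1 : q ≤ 1)
    (hΔ : Δ = (q + q⁻¹)/2) (Q : Λ → ℝ) (hQpos : ∀ z, 0 < Q z) (hQ : Q y = Q x * q) :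
    Matrix.mulVec (hXYr K Δ x y) (wt K Q) = 0 := by
  funext c'
  show (∑ c, hXYr K Δ x y c' c * wt K Q c) = 0
  have point : ∀ c : S1.QConf Λ K, hXYr K Δ x y c' c * wt K Q c =
      (if c' = c then
        (((K : ℝ) / 2) ^ 2 - S1.mv K (c x) * S1.mv K (c y) +
          ((K : ℝ) / 2) * Real.sqrt (1 - Δ⁻¹ ^ 2) * (S1.mv K (c x) - S1.mv K (c y))) * wt K Q c
      else 0)
      - (1 / (2 * Δ)) *
        ((if (∀ z, z ≠ x → z ≠ y → c' z = c z) ∧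
              ((c' x : ℕ) + 1 = (c x : ℕ)) ∧ ((c' y : ℕ) = (c y : ℕ) + 1) then
            S1.hopCoeff K (S1.mv K (c x)) (S1.mv K (c y)) * wt K Q c
          else 0) +
          (if (∀ z, z ≠ x → z ≠ y → c' z = c z) ∧
              ((c' x : ℕ) = (c x : ℕ) + 1) ∧ ((c' y : ℕ) + 1 = (c y : ℕ)) then
            S1.hopCoeff K (S1.mv K (c y)) (S1.mv K (c x)) * wt K Q c
          else 0)) := by
    intro c
    unfold hXYr
    split_ifs <;> ring
  rw [Finset.sum_congr rfl (fun c _ => point c), Finset.sum_sub_distrib, ← Finset.mul_sum,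
    Finset.sum_add_distrib, Finset.sum_ite_eq, if_pos (Finset.mem_univ c'),
    hopsum1 K x y hxy q hq0 Q hQ c', hopsum2 K x y hxy q hq0 Q hQpos hQ c']
  have key := bondScalar K ((c' x : ℕ) : ℝ) ((c' y : ℕ) : ℝ) q hq0 hq1
  rw [← hΔ] at key
  have hmvx : S1.mv K (c' x) = (K:ℝ)/2 - ((c' x : ℕ) : ℝ) := rfl
  have hmvy : S1.mv K (c' y) = (K:ℝ)/2 - ((c' y : ℕ) : ℝ) := rfl
  rw [hmvx, hmvy]
  linear_combination (wt K Q c') * key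

end ASW
namespace ASW
set_option linter.unusedSectionVars false

lemma hopCoeff_nonneg (K : ℕ) (α β : ℝ) : 0 ≤ S1.hopCoeff K α β :=
  mul_nonneg (Real.sqrt_nonneg _) (Real.sqrt_nonneg _)

lemma hopCoeff_swap (K : ℕ) (α β : ℝ) : S1.hopCoeff K (α - 1) (β + 1) = S1.hopCoeff K β α := by
  unfold S1.hopCoeff
  rw [mul_comm]
  congr 1
  · exact congrArg Real.sqrt (by ring)
  · exact congrArg Real.sqrt (by ring)

lemma hopCoeff_pos (K u v : ℕ) (hu1 : 1 ≤ u) (huK : u ≤ K) (hvK : v < K) :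
    0 < S1.hopCoeff K ((K:ℝ)/2 - (u:ℝ)) ((K:ℝ)/2 - (v:ℝ)) := by
  rw [hopCoeff_eq K u v huK hvK.le]
  have h1 : (0:ℝ) < ((u * (K - u + 1) : ℕ) : ℝ) := by
    have : 0 < u * (K - u + 1) := Nat.mul_pos (by omega) (by omega)
    exact_mod_cast this
  have h2 : (0:ℝ) < (((K - v) * (v + 1) : ℕ) : ℝ) := by
    have : 0 < (K - v) * (v + 1) := Nat.mul_pos (by omega) (by omega)
    exact_mod_cast this
  exact mul_pos (Real.sqrt_pos.mpr h1) (Real.sqrt_pos.mpr h2)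

variable {Λ : Type*} [Fintype Λ] [DecidableEq Λ]

lemma sum_split (f : Λ → ℕ) (x y : Λ) (hxy : x ≠ y) :
    ∑ z, f z = f x + (f y + ∑ z ∈ (Finset.univ.erase x).erase y, f z) := by
  rw [← Finset.add_sum_erase _ f (Finset.mem_univ x),
    ← Finset.add_sum_erase _ f (Finset.mem_erase.mpr ⟨fun h => hxy h.symm, Finset.mem_univ y⟩)]

lemma hXYr_offdiag_nonpos (K : ℕ) (Δ : ℝ) (hΔ : 1 ≤ Δ) (x y : Λ)
    (c' c : S1.QConf Λ K) (hne : c' ≠ c) : hXYr K Δ x y c' c ≤ 0 := by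
  unfold hXYr
  rw [if_neg hne]
  have ht : (0:ℝ) ≤ 1 / (2 * Δ) := by positivity
  have h1 : (0:ℝ) ≤ (if (∀ z, z ≠ x → z ≠ y → c' z = c z) ∧
      ((c' x : ℕ) + 1 = (c x : ℕ)) ∧ ((c' y : ℕ) = (c y : ℕ) + 1) then
        S1.hopCoeff K (S1.mv K (c x)) (S1.mv K (c y)) else 0) := by
    split_ifs
    exacts [hopCoeff_nonneg _ _ _, le_refl 0]
  have h2 : (0:ℝ) ≤ (if (∀ z, z ≠ x → z ≠ y → c' z = c z) ∧
      ((c' x : ℕ) = (c x : ℕ) + 1) ∧ ((c' y : ℕ) + 1 = (c y : ℕ)) then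
        S1.hopCoeff K (S1.mv K (c y)) (S1.mv K (c x)) else 0) := by
    split_ifs
    exacts [hopCoeff_nonneg _ _ _, le_refl 0]
  nlinarith

lemma hXYr_sector (K : ℕ) (Δ : ℝ) (x y : Λ) (hxy : x ≠ y) (c' c : S1.QConf Λ K)
    (h : hXYr K Δ x y c' c ≠ 0) : (∑ z, (c' z : ℕ)) = ∑ z, (c z : ℕ) := by
  by_cases hd : c' = c
  · rw [hd]
  · unfold hXYr at h
    rw [if_neg hd] at h
    have : ((if (∀ z, z ≠ x → z ≠ y → c' z = c z) ∧
          ((c' x : ℕ) + 1 = (c x : ℕ)) ∧ ((c' y : ℕ) = (c y : ℕ) + 1) then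
            S1.hopCoeff K (S1.mv K (c x)) (S1.mv K (c y)) else 0) ≠ 0) ∨
        ((if (∀ z, z ≠ x → z ≠ y → c' z = c z) ∧
          ((c' x : ℕ) = (c x : ℕ) + 1) ∧ ((c' y : ℕ) + 1 = (c y : ℕ)) then
            S1.hopCoeff K (S1.mv K (c y)) (S1.mv K (c x)) else 0) ≠ 0) := by
      by_contra hcon
      push_neg at hcon
      rw [hcon.1, hcon.2] at h
      simp at h
    have hP : ((∀ z, z ≠ x → z ≠ y → c' z = c z) ∧
          ((c' x : ℕ) + 1 = (c x : ℕ)) ∧ ((c' y : ℕ) = (c y : ℕ) + 1)) ∨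
        ((∀ z, z ≠ x → z ≠ y → c' z = c z) ∧
          ((c' x : ℕ) = (c x : ℕ) + 1) ∧ ((c' y : ℕ) + 1 = (c y : ℕ))) := by
      rcases this with h1 | h2
      · left
        by_contra hcon
        rw [if_neg hcon] at h1
        exact h1 rfl
      · right
        by_contra hcon
        rw [if_neg hcon] at h2
        exact h2 rfl
    have hrest : ∀ (h : ∀ z, z ≠ x → z ≠ y → c' z = c z),
        (∑ z ∈ (Finset.univ.erase x).erase y, (c' z : ℕ))
          = ∑ z ∈ (Finset.univ.erase x).erase y, (c z : ℕ) := by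
      intro hall
      apply Finset.sum_congr rfl
      intro z hz
      have hzy : z ≠ y := Finset.ne_of_mem_erase hz
      have hzx : z ≠ x := Finset.ne_of_mem_erase (Finset.mem_of_mem_erase hz)
      rw [hall z hzx hzy]
    rw [sum_split (fun z => (c' z : ℕ)) x y hxy, sum_split (fun z => (c z : ℕ)) x y hxy]
    rcases hP with ⟨hall, h1, h2⟩ | ⟨hall, h1, h2⟩ <;>
      rw [hrest hall] <;> omega

end ASW
namespace ASW
set_option linter.unusedSectionVars false

variable {Λ : Type*} [Fintype Λ] [DecidableEq Λ]

lemma mv_shift_down (K : ℕ) (m n : Fin (K+1)) (h : (m : ℕ) + 1 = (n : ℕ)) :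
    S1.mv K n = S1.mv K m - 1 := by
  unfold S1.mv
  have : ((n : ℕ) : ℝ) = ((m : ℕ) : ℝ) + 1 := by exact_mod_cast h.symm
  rw [this]
  ring

lemma mv_shift_up (K : ℕ) (m n : Fin (K+1)) (h : (m : ℕ) = (n : ℕ) + 1) :
    S1.mv K n = S1.mv K m + 1 := by
  unfold S1.mv
  have : ((m : ℕ) : ℝ) = ((n : ℕ) : ℝ) + 1 := by exact_mod_cast h
  rw [this]
  ring

lemma hXYr_symm (K : ℕ) (Δ : ℝ) (x y : Λ) (c' c : S1.QConf Λ K) :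
    hXYr K Δ x y c' c = hXYr K Δ x y c c' := by
  by_cases hd : c' = c
  · subst hd; rfl
  · have hd' : ¬ c = c' := fun h => hd h.symm
    have e1 : (if (∀ z, z ≠ x → z ≠ y → c' z = c z) ∧
          ((c' x : ℕ) + 1 = (c x : ℕ)) ∧ ((c' y : ℕ) = (c y : ℕ) + 1) then
            S1.hopCoeff K (S1.mv K (c x)) (S1.mv K (c y)) else 0)
        = (if (∀ z, z ≠ x → z ≠ y → c z = c' z) ∧
          ((c x : ℕ) = (c' x : ℕ) + 1) ∧ ((c y : ℕ) + 1 = (c' y : ℕ)) then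
            S1.hopCoeff K (S1.mv K (c' y)) (S1.mv K (c' x)) else 0) := by
      by_cases hP : (∀ z, z ≠ x → z ≠ y → c' z = c z) ∧
          ((c' x : ℕ) + 1 = (c x : ℕ)) ∧ ((c' y : ℕ) = (c y : ℕ) + 1)
      · obtain ⟨hall, hx', hy'⟩ := hP
        rw [if_pos ⟨hall, hx', hy'⟩,
          if_pos ⟨fun z hzx hzy => (hall z hzx hzy).symm, hx'.symm, hy'.symm⟩]
        rw [mv_shift_down K (c' x) (c x) hx', mv_shift_up K (c' y) (c y) hy']
        exact hopCoeff_swap K _ _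
      · rw [if_neg hP, if_neg (fun h => hP ⟨fun z hzx hzy => (h.1 z hzx hzy).symm,
          h.2.1.symm, h.2.2.symm⟩)]
    have e2 : (if (∀ z, z ≠ x → z ≠ y → c' z = c z) ∧
          ((c' x : ℕ) = (c x : ℕ) + 1) ∧ ((c' y : ℕ) + 1 = (c y : ℕ)) then
            S1.hopCoeff K (S1.mv K (c y)) (S1.mv K (c x)) else 0)
        = (if (∀ z, z ≠ x → z ≠ y → c z = c' z) ∧
          ((c x : ℕ) + 1 = (c' x : ℕ)) ∧ ((c y : ℕ) = (c' y : ℕ) + 1) then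
            S1.hopCoeff K (S1.mv K (c' x)) (S1.mv K (c' y)) else 0) := by
      by_cases hP : (∀ z, z ≠ x → z ≠ y → c' z = c z) ∧
          ((c' x : ℕ) = (c x : ℕ) + 1) ∧ ((c' y : ℕ) + 1 = (c y : ℕ))
      · obtain ⟨hall, hx', hy'⟩ := hP
        rw [if_pos ⟨hall, hx', hy'⟩,
          if_pos ⟨fun z hzx hzy => (hall z hzx hzy).symm, hx'.symm, hy'.symm⟩]
        rw [mv_shift_up K (c' x) (c x) hx', mv_shift_down K (c' y) (c y) hy']
        exact hopCoeff_swap K _ _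
      · rw [if_neg hP, if_neg (fun h => hP ⟨fun z hzx hzy => (h.1 z hzx hzy).symm,
          h.2.1.symm, h.2.2.symm⟩)]
    unfold hXYr
    rw [if_neg hd, if_neg hd', e1, e2]
    ring

lemma hXYr_neg₁ (K : ℕ) (Δ : ℝ) (hΔ : 1 ≤ Δ) (x y : Λ) (c' c : S1.QConf Λ K)
    (hall : ∀ z, z ≠ x → z ≠ y → c' z = c z)
    (hx' : (c' x : ℕ) + 1 = (c x : ℕ)) (hy' : (c' y : ℕ) = (c y : ℕ) + 1) :
    hXYr K Δ x y c' c < 0 := by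
  have hd : c' ≠ c := fun h => by rw [h] at hx'; omega
  unfold hXYr
  rw [if_neg hd, if_pos ⟨hall, hx', hy'⟩, if_neg (by rintro ⟨_, h2, _⟩; omega)]
  have hvK : (c y : ℕ) < K := by
    have := (c' y).isLt
    omega
  have hpos : 0 < S1.hopCoeff K (S1.mv K (c x)) (S1.mv K (c y)) := by
    have e1 : S1.mv K (c x) = (K:ℝ)/2 - ((c x : ℕ) : ℝ) := rfl
    have e2 : S1.mv K (c y) = (K:ℝ)/2 - ((c y : ℕ) : ℝ) := rfl
    rw [e1, e2]
    exact hopCoeff_pos K _ _ (by omega) (by omega) hvK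
  have ht : (0:ℝ) < 1 / (2 * Δ) := by positivity
  nlinarith

lemma hXYr_neg₂ (K : ℕ) (Δ : ℝ) (hΔ : 1 ≤ Δ) (x y : Λ) (c' c : S1.QConf Λ K)
    (hall : ∀ z, z ≠ x → z ≠ y → c' z = c z)
    (hx' : (c' x : ℕ) = (c x : ℕ) + 1) (hy' : (c' y : ℕ) + 1 = (c y : ℕ)) :
    hXYr K Δ x y c' c < 0 := by
  have hd : c' ≠ c := fun h => by rw [h] at hx'; omega
  unfold hXYr
  rw [if_neg hd, if_neg (by rintro ⟨_, h2, _⟩; omega), if_pos ⟨hall, hx', hy'⟩]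
  have hvK : (c x : ℕ) < K := by
    have := (c' x).isLt
    omega
  have hpos : 0 < S1.hopCoeff K (S1.mv K (c y)) (S1.mv K (c x)) := by
    have e1 : S1.mv K (c x) = (K:ℝ)/2 - ((c x : ℕ) : ℝ) := rfl
    have e2 : S1.mv K (c y) = (K:ℝ)/2 - ((c y : ℕ) : ℝ) := rfl
    rw [e1, e2]
    exact hopCoeff_pos K _ _ (by omega) (by omega) hvK
  have ht : (0:ℝ) < 1 / (2 * Δ) := by positivity
  nlinarith

end ASW
namespace ASW
set_option linter.unusedSectionVars false

variable {Λ : Type*} [Fintype Λ] [DecidableEq Λ]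

def Adj {d : ℕ} (B : Fin d → Finset (Λ × Λ)) (u v : Λ) : Prop :=
  ∃ i, (u, v) ∈ B i ∨ (v, u) ∈ B i

def transfer (K : ℕ) (c : S1.QConf Λ K) (x y : Λ) : S1.QConf Λ K :=
  Function.update (Function.update c x ⟨min ((c x : ℕ) + 1) K, by omega⟩) y
    ⟨(c y : ℕ) - 1, by omega⟩

lemma transfer_x (K : ℕ) (c : S1.QConf Λ K) (x y : Λ) (hxy : x ≠ y) :
    (transfer K c x y x : ℕ) = min ((c x : ℕ) + 1) K := by
  unfold transfer
  rw [Function.update_of_ne hxy, Function.update_self]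

lemma transfer_y (K : ℕ) (c : S1.QConf Λ K) (x y : Λ) :
    (transfer K c x y y : ℕ) = (c y : ℕ) - 1 := by
  unfold transfer
  rw [Function.update_self]

lemma transfer_z (K : ℕ) (c : S1.QConf Λ K) (x y z : Λ) (hzx : z ≠ x) (hzy : z ≠ y) :
    transfer K c x y z = c z := by
  unfold transfer
  rw [Function.update_of_ne hzy, Function.update_of_ne hzx]

def MoveR (K : ℕ) {d : ℕ} (B : Fin d → Finset (Λ × Λ)) (c c' : S1.QConf Λ K) : Prop :=
  ∃ x y, Adj B x y ∧ x ≠ y ∧ (c x : ℕ) < K ∧ 0 < (c y : ℕ) ∧ c' = transfer K c x y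

lemma moves_path (K : ℕ) {d : ℕ} (B : Fin d → Finset (Λ × Λ)) (hK : 1 ≤ K)
    {x y : Λ} (hpath : Relation.ReflTransGen (Adj B) x y) :
    ∀ c : S1.QConf Λ K, x ≠ y → (c x : ℕ) < K → 0 < (c y : ℕ) →
      Relation.ReflTransGen (MoveR K B) c (transfer K c x y) := by
  induction hpath using Relation.ReflTransGen.head_induction_on with
  | refl =>
      intro c hxy
      exact absurd rfl hxy
  | head h' hpath2 IH =>
      rename_i a z
      intro c hay hca hcy
      by_cases hzy : z = y
      · subst hzy
        exact Relation.ReflTransGen.single ⟨a, z, h', hay, hca, hcy, rfl⟩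
      · by_cases hza : z = a
        · subst hza
          exact IH c hay hca hcy
        · have haz : a ≠ z := fun h => hza h.symm
          have hya : y ≠ a := fun h => hay h.symm
          have hyz : y ≠ z := fun h => hzy h.symm
          have hczK : (c z : ℕ) < K + 1 := (c z).isLt
          by_cases hzpos : 0 < (c z : ℕ)
          · -- move one token from z to a, then bring one from y to z
            set c1 := transfer K c a z with hc1
            have m1 : MoveR K B c c1 := ⟨a, z, h', haz, hca, hzpos, rfl⟩
            have hc1z : (c1 z : ℕ) = (c z : ℕ) - 1 := transfer_y K c a z
            have hc1y : c1 y = c y := transfer_z K c a z y hya hyz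
            have m2 : Relation.ReflTransGen (MoveR K B) c1 (transfer K c1 z y) :=
              IH c1 hzy (by omega) (by rw [hc1y]; exact hcy)
            have key : transfer K c1 z y = transfer K c a y := by
              funext w
              by_cases hwz : w = z
              · subst hwz
                apply Fin.ext
                have e1 : (transfer K c1 w y w : ℕ) = min ((c1 w : ℕ) + 1) K :=
                  transfer_x K c1 w y hzy
                have e2 : transfer K c a y w = c w := transfer_z K c a y w hza hzy
                rw [e1, e2, hc1z]
                omega
              · by_cases hwy : w = y
                · subst hwy
                  apply Fin.ext
                  rw [transfer_y K c1 z w, transfer_y K c a w, hc1y]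
                · by_cases hwa : w = a
                  · subst hwa
                    apply Fin.ext
                    have e1 : transfer K c1 z y w = c1 w :=
                      transfer_z K c1 z y w (fun h => hza h.symm) hay
                    have e2 : (c1 w : ℕ) = min ((c w : ℕ) + 1) K := transfer_x K c w z haz
                    have e3 : (transfer K c w y w : ℕ) = min ((c w : ℕ) + 1) K :=
                      transfer_x K c w y hay
                    rw [e1, e3, e2]
                  · have e1 : transfer K c1 z y w = c1 w := transfer_z K c1 z y w hwz hwy
                    have e2 : c1 w = c w := transfer_z K c a z w hwa hwz
                    have e3 : transfer K c a y w = c w := transfer_z K c a y w hwa hwy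
                    rw [e1, e2, e3]
            exact Relation.ReflTransGen.head m1 (key ▸ m2)
          · -- c z = 0 : bring a token from y to z first, then move it to a
            set c2 := transfer K c z y with hc2
            have m2 : Relation.ReflTransGen (MoveR K B) c c2 :=
              IH c hzy (by omega) hcy
            have hc2a : c2 a = c a := transfer_z K c z y a haz hay
            have hc2z : (c2 z : ℕ) = min ((c z : ℕ) + 1) K := transfer_x K c z y hzy
            have m3 : MoveR K B c2 (transfer K c2 a z) :=
              ⟨a, z, h', haz, by rw [hc2a]; exact hca, by omega, rfl⟩
            have key : transfer K c2 a z = transfer K c a y := by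
              funext w
              by_cases hwa : w = a
              · subst hwa
                apply Fin.ext
                have e1 : (transfer K c2 w z w : ℕ) = min ((c2 w : ℕ) + 1) K :=
                  transfer_x K c2 w z haz
                have e2 : (transfer K c w y w : ℕ) = min ((c w : ℕ) + 1) K :=
                  transfer_x K c w y hay
                rw [e1, e2, hc2a]
              · by_cases hwz : w = z
                · subst hwz
                  apply Fin.ext
                  have e1 : (transfer K c2 a w w : ℕ) = (c2 w : ℕ) - 1 := transfer_y K c2 a w
                  have e2 : transfer K c a y w = c w := transfer_z K c a y w hza hzy
                  rw [e1, e2, hc2z]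
                  omega
                · by_cases hwy : w = y
                  · subst hwy
                    apply Fin.ext
                    have e1 : transfer K c2 a z w = c2 w :=
                      transfer_z K c2 a z w hya hyz
                    have e2 : (c2 w : ℕ) = (c w : ℕ) - 1 := transfer_y K c z w
                    have e3 : (transfer K c a w w : ℕ) = (c w : ℕ) - 1 := transfer_y K c a w
                    rw [e1, e3, e2]
                  · have e1 : transfer K c2 a z w = c2 w := transfer_z K c2 a z w hwa hwz
                    have e2 : c2 w = c w := transfer_z K c z y w hwz hwy
                    have e3 : transfer K c a y w = c w := transfer_z K c a y w hwa hwy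
                    rw [e1, e2, e3]
            exact Relation.ReflTransGen.tail m2 (key ▸ m3)

end ASW
namespace ASW
set_option linter.unusedSectionVars false

variable {Λ : Type*} [Fintype Λ] [DecidableEq Λ]

lemma moves_connect_aux (K : ℕ) {d : ℕ} (B : Fin d → Finset (Λ × Λ)) (hK : 1 ≤ K)
    (hconn : ∀ x y : Λ, Relation.ReflTransGen (Adj B) x y) :
    ∀ (D : ℕ) (c c' : S1.QConf Λ K), (∑ z, (c z : ℕ)) = (∑ z, (c' z : ℕ)) →
      (∑ z, ((c z : ℤ) - (c' z : ℤ)).natAbs) ≤ D →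
      Relation.ReflTransGen (MoveR K B) c c' := by
  intro D
  induction D with
  | zero =>
      intro c c' hsum hD
      have : ∀ z, c z = c' z := by
        intro z
        have h0 : ((c z : ℤ) - (c' z : ℤ)).natAbs = 0 := by
          have := Finset.sum_eq_zero_iff_of_nonneg
            (f := fun z => ((c z : ℤ) - (c' z : ℤ)).natAbs) (s := Finset.univ)
            (fun i _ => Nat.zero_le _)
          exact this.mp (Nat.le_zero.mp hD) z (Finset.mem_univ z)
        exact Fin.ext (by omega)
      exact Relation.ReflTransGen.refl.trans (by rw [funext this])
  | succ D IH =>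
      intro c c' hsum hD
      by_cases hcc : c = c'
      · rw [hcc]
      · have hx : ∃ x, (c x : ℕ) < (c' x : ℕ) := by
          by_contra hcon
          push_neg at hcon
          have hle : ∀ x ∈ Finset.univ, (c' x : ℕ) ≤ (c x : ℕ) := fun x _ => hcon x
          have := (Finset.sum_eq_sum_iff_of_le hle).mp hsum.symm
          exact hcc (funext fun z => Fin.ext ((this z (Finset.mem_univ z)).symm))
        have hy : ∃ y, (c' y : ℕ) < (c y : ℕ) := by
          by_contra hcon
          push_neg at hcon
          have hle : ∀ x ∈ Finset.univ, (c x : ℕ) ≤ (c' x : ℕ) := fun x _ => hcon x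
          have := (Finset.sum_eq_sum_iff_of_le hle).mp hsum
          exact hcc (funext fun z => Fin.ext (this z (Finset.mem_univ z)))
        obtain ⟨x, hx⟩ := hx
        obtain ⟨y, hy⟩ := hy
        have hxy : x ≠ y := by
          intro h
          rw [h] at hx
          omega
        have hcxK : (c x : ℕ) < K := by
          have := (c' x).isLt
          omega
        have hcy0 : 0 < (c y : ℕ) := by omega
        set c1 := transfer K c x y with hc1
        have step : Relation.ReflTransGen (MoveR K B) c c1 :=
          moves_path K B hK (hconn x y) c hxy hcxK hcy0
        have h1x : (c1 x : ℕ) = (c x : ℕ) + 1 := by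
          rw [transfer_x K c x y hxy]
          omega
        have h1y : (c1 y : ℕ) = (c y : ℕ) - 1 := transfer_y K c x y
        have h1z : ∀ z, z ≠ x → z ≠ y → c1 z = c z := fun z hzx hzy =>
          transfer_z K c x y z hzx hzy
        have hrest : ∀ (f g : Λ → ℕ), (∀ z, z ≠ x → z ≠ y → f z = g z) →
            (∑ z ∈ (Finset.univ.erase x).erase y, f z)
              = ∑ z ∈ (Finset.univ.erase x).erase y, g z := by
          intro f g hfg
          apply Finset.sum_congr rfl
          intro z hz
          exact hfg z (Finset.ne_of_mem_erase (Finset.mem_of_mem_erase hz))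
            (Finset.ne_of_mem_erase hz)
        have hsum1 : (∑ z, (c1 z : ℕ)) = (∑ z, (c z : ℕ)) := by
          rw [sum_split (fun z => (c1 z : ℕ)) x y hxy, sum_split (fun z => (c z : ℕ)) x y hxy,
            hrest (fun z => (c1 z : ℕ)) (fun z => (c z : ℕ))
              (fun z hzx hzy => by simp only [h1z z hzx hzy])]
          omega
        have hmeas : (∑ z, ((c1 z : ℤ) - (c' z : ℤ)).natAbs) ≤ D := by
          rw [sum_split (fun z => ((c1 z : ℤ) - (c' z : ℤ)).natAbs) x y hxy]
          rw [sum_split (fun z => ((c z : ℤ) - (c' z : ℤ)).natAbs) x y hxy] at hD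
          rw [hrest (fun z => ((c1 z : ℤ) - (c' z : ℤ)).natAbs)
            (fun z => ((c z : ℤ) - (c' z : ℤ)).natAbs)
            (fun z hzx hzy => by simp only [h1z z hzx hzy])]
          have e1 : ((c1 x : ℤ) - (c' x : ℤ)).natAbs + 1 = ((c x : ℤ) - (c' x : ℤ)).natAbs := by
            omega
          have e2 : ((c1 y : ℤ) - (c' y : ℤ)).natAbs + 1 = ((c y : ℤ) - (c' y : ℤ)).natAbs := by
            omega
          omega
        exact step.trans (IH c1 c' (hsum1.trans hsum) hmeas)

lemma moves_connect (K : ℕ) {d : ℕ} (B : Fin d → Finset (Λ × Λ)) (hK : 1 ≤ K)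
    (hconn : ∀ x y : Λ, Relation.ReflTransGen (Adj B) x y)
    (c c' : S1.QConf Λ K) (hsum : (∑ z, (c z : ℕ)) = (∑ z, (c' z : ℕ))) :
    Relation.ReflTransGen (MoveR K B) c c' :=
  moves_connect_aux K B hK hconn _ c c' hsum le_rfl

end ASW
namespace ASW

lemma gs_transform {n : Type*} [Fintype n] [DecidableEq n] (H : Matrix n n ℝ)
    (hsym : ∀ i j, H i j = H j i)
    (hoff : ∀ i j, i ≠ j → H i j ≤ 0)
    (W : n → ℝ) (hW : ∀ i, 0 < W i) (hHW : H.mulVec W = 0)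
    (w : n → ℝ) (hHw : H.mulVec w = 0) :
    ∀ i j, H i j ≠ 0 → w i * W j = w j * W i := by
  set u : n → ℝ := fun i => w i / W i with hu
  have hw : w = fun i => W i * u i := funext fun i => by
    rw [hu]
    field_simp
    rw [mul_div_assoc, div_self (hW i).ne', mul_one]
  rw [hw] at hHw
  have h1 : ∀ i, (∑ j, H i j * W j) = 0 := by
    intro i
    have := congrFun hHW i
    simpa [Matrix.mulVec, dotProduct] using this
  have h2 : ∀ i, (∑ j, H i j * (W j * u j)) = 0 := by
    intro i
    have := congrFun hHw i
    simpa [Matrix.mulVec, dotProduct] using this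
  have key : (∑ i, ∑ j, (-(H i j)) * (W i * W j) * (u i - u j)^2) = 0 := by
    have split : (∑ i, ∑ j, (-(H i j)) * (W i * W j) * (u i - u j)^2)
        = (∑ i, ∑ j, -((W i * u i^2) * (H i j * W j)))
          + ((∑ i, ∑ j, -((W j * u j^2) * (H i j * W i)))
          + (∑ i, ∑ j, 2 * ((W i * u i) * (H i j * (W j * u j))))) := by
      rw [← Finset.sum_add_distrib, ← Finset.sum_add_distrib]
      apply Finset.sum_congr rfl
      intro i _
      rw [← Finset.sum_add_distrib, ← Finset.sum_add_distrib]
      apply Finset.sum_congr rfl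
      intro j _
      ring
    rw [split]
    have T1 : (∑ i, ∑ j : n, -((W i * u i^2) * (H i j * W j))) = 0 := by
      apply Finset.sum_eq_zero
      intro i _
      have : (∑ j, -((W i * u i^2) * (H i j * W j)))
          = -((W i * u i^2) * ∑ j, H i j * W j) := by
        rw [Finset.mul_sum, ← Finset.sum_neg_distrib]
      rw [this, h1 i, mul_zero, neg_zero]
    have T2 : (∑ i, ∑ j : n, -((W j * u j^2) * (H i j * W i))) = 0 := by
      rw [Finset.sum_comm]
      apply Finset.sum_eq_zero
      intro j _
      have e : ∀ i, H i j * W i = H j i * W i := fun i => by rw [hsym i j]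
      have : (∑ i, -((W j * u j^2) * (H i j * W i)))
          = -((W j * u j^2) * ∑ i, H j i * W i) := by
        rw [Finset.mul_sum, ← Finset.sum_neg_distrib]
        exact Finset.sum_congr rfl fun i _ => by rw [e i]
      rw [this, h1 j, mul_zero, neg_zero]
    have T3 : (∑ i, ∑ j : n, 2 * ((W i * u i) * (H i j * (W j * u j)))) = 0 := by
      apply Finset.sum_eq_zero
      intro i _
      have : (∑ j, 2 * ((W i * u i) * (H i j * (W j * u j))))
          = 2 * ((W i * u i) * ∑ j, H i j * (W j * u j)) := by
        rw [Finset.mul_sum, Finset.mul_sum]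
      rw [this, h2 i, mul_zero, mul_zero]
    rw [T1, T2, T3]
    ring
  have hnn : ∀ i j, (0:ℝ) ≤ (-(H i j)) * (W i * W j) * (u i - u j)^2 := by
    intro i j
    by_cases hij : i = j
    · subst hij
      simp
    · exact mul_nonneg (mul_nonneg (neg_nonneg.mpr (hoff i j hij))
        (mul_nonneg (hW i).le (hW j).le)) (sq_nonneg _)
  have hz : ∀ i j, (-(H i j)) * (W i * W j) * (u i - u j)^2 = 0 := by
    have outer := (Finset.sum_eq_zero_iff_of_nonneg
      (fun i _ => Finset.sum_nonneg fun j _ => hnn i j)).mp key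
    intro i j
    exact (Finset.sum_eq_zero_iff_of_nonneg (fun j _ => hnn i j)).mp
      (outer i (Finset.mem_univ i)) j (Finset.mem_univ j)
  intro i j hH
  by_cases hij : i = j
  · subst hij
    rfl
  · have h3 := hz i j
    have hne1 : (-(H i j)) * (W i * W j) ≠ 0 :=
      mul_ne_zero (neg_ne_zero.mpr hH) (ne_of_gt (mul_pos (hW i) (hW j)))
    have hsq : (u i - u j)^2 = 0 := by
      rcases mul_eq_zero.mp (by linarith [h3] : (-(H i j)) * (W i * W j) * ((u i - u j)^2) = 0)
        with h | h
      · exact absurd h hne1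
      · exact h
    have huij : u i = u j := sub_eq_zero.mp ((pow_eq_zero_iff (by norm_num)).mp hsq)
    have hwi : w i = W i * u i := congrFun hw i
    have hwj : w j = W j * u j := congrFun hw j
    rw [hwi, hwj, huij]
    ring

end ASW
namespace ASW
set_option linter.unusedSectionVars false

variable {Λ : Type*} [Fintype Λ] [DecidableEq Λ]

lemma sum_mulVec' {n : Type*} [Fintype n] {ι : Type*} (s : Finset ι)
    (M : ι → Matrix n n ℝ) (v : n → ℝ) :
    (∑ i ∈ s, M i).mulVec v = ∑ i ∈ s, (M i).mulVec v := by
  funext c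
  rw [Finset.sum_apply]
  show ∑ c', (∑ i ∈ s, M i) c c' * v c' = ∑ i ∈ s, ((M i).mulVec v c)
  have : ∀ c', (∑ i ∈ s, M i) c c' * v c' = ∑ i ∈ s, M i c c' * v c' := by
    intro c'
    rw [Matrix.sum_apply, Finset.sum_mul]
  rw [Finset.sum_congr rfl fun c' _ => this c', Finset.sum_comm]
  rfl

def Qfun (d : ℕ) (qs : Fin d → ℝ) (l : Λ → Fin d → ℤ) : Λ → ℝ :=
  fun z => ∏ i, qs i ^ l z i

lemma Qfun_pos (d : ℕ) (qs : Fin d → ℝ) (hqs : ∀ i, 0 < qs i) (l : Λ → Fin d → ℤ) (z : Λ) :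
    0 < Qfun d qs l z :=
  Finset.prod_pos fun i _ => zpow_pos (hqs i) _

lemma Qfun_bond (d : ℕ) (qs : Fin d → ℝ) (hqs : ∀ i, 0 < qs i) (l : Λ → Fin d → ℤ)
    (i : Fin d) (x y : Λ) (hl : l y = l x + Pi.single i 1) :
    Qfun d qs l y = Qfun d qs l x * qs i := by
  unfold Qfun
  rw [hl]
  have : ∀ j : Fin d, qs j ^ ((l x + (Pi.single i (1:ℤ) : Fin d → ℤ)) j)
      = qs j ^ (l x j) * qs j ^ ((Pi.single i (1:ℤ) : Fin d → ℤ) j) := by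
    intro j
    rw [Pi.add_apply, zpow_add₀ (hqs j).ne']
  rw [Finset.prod_congr rfl fun j _ => this j, Finset.prod_mul_distrib]
  congr 1
  rw [Finset.prod_eq_single i]
  · rw [Pi.single_eq_same, zpow_one]
  · intro j _ hj
    rw [Pi.single_eq_of_ne hj, zpow_zero]
  · intro h
    exact absurd (Finset.mem_univ i) h

lemma exists_conf_on (K : ℕ) :
    ∀ (s : Finset Λ) (N : ℕ), N ≤ K * s.card →
      ∃ c : S1.QConf Λ K, (∑ x ∈ s, (c x : ℕ)) = N := by
  intro s
  induction s using Finset.induction_on with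
  | empty =>
      intro N hN
      simp at hN
      exact ⟨fun _ => ⟨0, by omega⟩, by simp [hN]⟩
  | @insert x s hx ih =>
      intro N hN
      rw [Finset.card_insert_of_notMem hx] at hN
      have hexp : K * (s.card + 1) = K * s.card + K := by ring
      set n₀ := min K N with hn₀
      obtain ⟨c, hsum⟩ := ih (N - n₀) (by omega)
      refine ⟨Function.update c x ⟨n₀, by omega⟩, ?_⟩
      rw [Finset.sum_insert hx, Function.update_self]
      have : (∑ z ∈ s, ((Function.update c x ⟨n₀, by omega⟩ : S1.QConf Λ K) z : ℕ))
          = ∑ z ∈ s, (c z : ℕ) := by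
        apply Finset.sum_congr rfl
        intro z hz
        rw [Function.update_of_ne (fun h => hx (by rw [← h]; exact hz))]
      rw [this, hsum]
      show n₀ + (N - n₀) = N
      omega

/-- the real ASW vector -/
def aswR (K : ℕ) (Q : Λ → ℝ) (N : ℕ) : S1.QConf Λ K → ℝ :=
  fun c => if (∑ x, ((c x : ℕ))) = N then wt K Q c else 0

lemma asw_eq (K d : ℕ) (qs : Fin d → ℝ) (l : Λ → Fin d → ℤ) (N : ℕ) :
    S1.asw K d qs l N = fun c => ((aswR K (Qfun d qs l) N c : ℝ) : ℂ) := by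
  funext c
  unfold S1.asw aswR wt Qfun
  split_ifs <;> simp

end ASW
namespace ASW
set_option linter.unusedSectionVars false

variable {Λ : Type*} [Fintype Λ] [DecidableEq Λ]

def Hr (K : ℕ) {d : ℕ} (B : Fin d → Finset (Λ × Λ)) (Δs : Fin d → ℝ) :
    Matrix (S1.QConf Λ K) (S1.QConf Λ K) ℝ :=
  ∑ i, ∑ p ∈ B i, hXYr K (Δs i) p.1 p.2

lemma Hr_apply (K : ℕ) {d : ℕ} (B : Fin d → Finset (Λ × Λ)) (Δs : Fin d → ℝ)
    (c' c : S1.QConf Λ K) :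
    Hr K B Δs c' c = ∑ i, ∑ p ∈ B i, hXYr K (Δs i) p.1 p.2 c' c := by
  unfold Hr
  rw [Matrix.sum_apply]
  apply Finset.sum_congr rfl
  intro i _
  rw [Matrix.sum_apply]

lemma Hr_symm (K : ℕ) {d : ℕ} (B : Fin d → Finset (Λ × Λ)) (Δs : Fin d → ℝ)
    (c' c : S1.QConf Λ K) : Hr K B Δs c' c = Hr K B Δs c c' := by
  rw [Hr_apply, Hr_apply]
  exact Finset.sum_congr rfl fun i _ => Finset.sum_congr rfl fun p _ =>
    hXYr_symm K (Δs i) p.1 p.2 c' c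

lemma Hr_offdiag_nonpos (K : ℕ) {d : ℕ} (B : Fin d → Finset (Λ × Λ)) (Δs : Fin d → ℝ)
    (hΔs : ∀ i, 1 ≤ Δs i) (c' c : S1.QConf Λ K) (hne : c' ≠ c) : Hr K B Δs c' c ≤ 0 := by
  rw [Hr_apply]
  exact Finset.sum_nonpos fun i _ => Finset.sum_nonpos fun p _ =>
    hXYr_offdiag_nonpos K (Δs i) (hΔs i) p.1 p.2 c' c hne

lemma Hr_sector (K : ℕ) {d : ℕ} (B : Fin d → Finset (Λ × Λ)) (Δs : Fin d → ℝ)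
    (hB : ∀ i : Fin d, ∀ p ∈ B i, (p.1 : Λ) ≠ p.2) (c' c : S1.QConf Λ K)
    (h : Hr K B Δs c' c ≠ 0) : (∑ z, (c' z : ℕ)) = ∑ z, (c z : ℕ) := by
  by_contra hne
  apply h
  rw [Hr_apply]
  apply Finset.sum_eq_zero
  intro i _
  apply Finset.sum_eq_zero
  intro p hp
  by_contra hpne
  exact hne (hXYr_sector K (Δs i) p.1 p.2 (hB i p hp) c' c hpne)

lemma Hr_mulVec_wt (K : ℕ) {d : ℕ} (B : Fin d → Finset (Λ × Λ)) (Δs : Fin d → ℝ)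
    (qs : Fin d → ℝ) (hqs : ∀ i, 0 < qs i ∧ qs i ≤ 1)
    (hrel : ∀ i, Δs i = (qs i + (qs i)⁻¹) / 2)
    (l : Λ → Fin d → ℤ) (hheight : ∀ i : Fin d, ∀ p ∈ B i, l p.2 = l p.1 + Pi.single i 1)
    (hB : ∀ i : Fin d, ∀ p ∈ B i, (p.1 : Λ) ≠ p.2) :
    (Hr K B Δs).mulVec (wt K (Qfun d qs l)) = 0 := by
  unfold Hr
  rw [sum_mulVec']
  apply Finset.sum_eq_zero
  intro i _
  rw [sum_mulVec']
  apply Finset.sum_eq_zero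
  intro p hp
  exact bond_mulVec K p.1 p.2 (hB i p hp) (Δs i) (qs i) (hqs i).1 (hqs i).2 (hrel i)
    (Qfun d qs l) (Qfun_pos d qs (fun j => (hqs j).1) l)
    (Qfun_bond d qs (fun j => (hqs j).1) l i p.1 p.2 (hheight i p hp))

lemma Hr_mulVec_aswR (K : ℕ) {d : ℕ} (B : Fin d → Finset (Λ × Λ)) (Δs : Fin d → ℝ)
    (qs : Fin d → ℝ) (hqs : ∀ i, 0 < qs i ∧ qs i ≤ 1)
    (hrel : ∀ i, Δs i = (qs i + (qs i)⁻¹) / 2)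
    (l : Λ → Fin d → ℤ) (hheight : ∀ i : Fin d, ∀ p ∈ B i, l p.2 = l p.1 + Pi.single i 1)
    (hB : ∀ i : Fin d, ∀ p ∈ B i, (p.1 : Λ) ≠ p.2) (N : ℕ) :
    (Hr K B Δs).mulVec (aswR K (Qfun d qs l) N) = 0 := by
  have hwt := Hr_mulVec_wt K B Δs qs hqs hrel l hheight hB
  funext c'
  show (∑ c, Hr K B Δs c' c * aswR K (Qfun d qs l) N c) = 0
  have point : ∀ c, Hr K B Δs c' c * aswR K (Qfun d qs l) N c
      = (if (∑ z, (c' z : ℕ)) = N then Hr K B Δs c' c * wt K (Qfun d qs l) c else 0) := by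
    intro c
    unfold aswR
    by_cases h1 : (∑ z, (c z : ℕ)) = N
    · by_cases h2 : (∑ z, (c' z : ℕ)) = N
      · rw [if_pos h1, if_pos h2]
      · rw [if_pos h1, if_neg h2]
        have hz : Hr K B Δs c' c = 0 := by
          by_contra hne
          exact h2 ((Hr_sector K B Δs hB c' c hne).trans h1)
        rw [hz, zero_mul]
    · rw [if_neg h1, mul_zero]
      by_cases h2 : (∑ z, (c' z : ℕ)) = N
      · rw [if_pos h2]
        have hz : Hr K B Δs c' c = 0 := by
          by_contra hne
          exact h1 ((Hr_sector K B Δs hB c' c hne).symm.trans h2)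
        rw [hz, zero_mul]
      · rw [if_neg h2]
  rw [Finset.sum_congr rfl fun c _ => point c]
  by_cases h2 : (∑ z, (c' z : ℕ)) = N
  · simp only [if_pos h2]
    have := congrFun hwt c'
    simpa [Matrix.mulVec, dotProduct] using this
  · simp only [if_neg h2]
    exact Finset.sum_const_zero

lemma Hr_move_neg (K : ℕ) {d : ℕ} (B : Fin d → Finset (Λ × Λ)) (Δs : Fin d → ℝ)
    (hΔs : ∀ i, 1 ≤ Δs i) (c c' : S1.QConf Λ K) (hm : MoveR K B c c') :
    Hr K B Δs c' c < 0 := by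
  obtain ⟨x, y, ⟨i0, hp⟩, hxy, hx, hy, rfl⟩ := hm
  have htx : (transfer K c x y x : ℕ) = (c x : ℕ) + 1 := by
    rw [transfer_x K c x y hxy]
    omega
  have hty : (transfer K c x y y : ℕ) + 1 = (c y : ℕ) := by
    rw [transfer_y K c x y]
    omega
  have htz : ∀ z, z ≠ x → z ≠ y → transfer K c x y z = c z :=
    fun z hzx hzy => transfer_z K c x y z hzx hzy
  have hne : transfer K c x y ≠ c := by
    intro h
    have := congrArg (fun f => ((f x : Fin (K+1)) : ℕ)) h
    omega
  rw [Hr_apply]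
  have hstrict : (∑ p ∈ B i0, hXYr K (Δs i0) p.1 p.2 (transfer K c x y) c) < 0 := by
    have hmem : ((x, y) ∈ B i0) ∨ ((y, x) ∈ B i0) := hp
    have hcmp : ∀ p ∈ B i0, hXYr K (Δs i0) p.1 p.2 (transfer K c x y) c ≤ (fun _ => (0:ℝ)) p :=
      fun p _ => hXYr_offdiag_nonpos K (Δs i0) (hΔs i0) p.1 p.2 _ _ hne
    rcases hmem with h | h
    · have hlt : hXYr K (Δs i0) x y (transfer K c x y) c < 0 :=
        hXYr_neg₂ K (Δs i0) (hΔs i0) x y _ c htz htx hty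
      have := Finset.sum_lt_sum hcmp ⟨(x, y), h, hlt⟩
      simpa using this
    · have hlt : hXYr K (Δs i0) y x (transfer K c x y) c < 0 :=
        hXYr_neg₁ K (Δs i0) (hΔs i0) y x _ c (fun z hzy hzx => htz z hzx hzy) hty htx
      have := Finset.sum_lt_sum hcmp ⟨(y, x), h, hlt⟩
      simpa using this
  have hcmp2 : ∀ i ∈ Finset.univ, (∑ p ∈ B i, hXYr K (Δs i) p.1 p.2 (transfer K c x y) c)
      ≤ (fun _ => (0:ℝ)) i :=
    fun i _ => Finset.sum_nonpos fun p _ =>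
      hXYr_offdiag_nonpos K (Δs i) (hΔs i) p.1 p.2 _ _ hne
  have := Finset.sum_lt_sum hcmp2 ⟨i0, Finset.mem_univ i0, hstrict⟩
  simpa using this

end ASW
namespace ASW
set_option linter.unusedSectionVars false

variable {Λ : Type*} [Fintype Λ] [DecidableEq Λ]

lemma mv_sum (K : ℕ) (c : S1.QConf Λ K) :
    (∑ x, S1.mv K (c x)) = ((K : ℝ) * (Fintype.card Λ : ℝ))/2 - ((∑ x, (c x : ℕ) : ℕ) : ℝ) := by
  unfold S1.mv
  rw [Finset.sum_sub_distrib, Finset.sum_const, nsmul_eq_mul, Finset.card_univ, Nat.cast_sum]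
  ring

lemma s3_mulVec (K : ℕ) (ψ : S1.QConf Λ K → ℂ) (c' : S1.QConf Λ K) :
    (S1.s3tot K).mulVec ψ c' = ((∑ x, S1.mv K (c' x) : ℝ) : ℂ) * ψ c' := by
  show (∑ c, S1.s3tot K c' c * ψ c) = _
  have point : ∀ c, S1.s3tot K c' c * ψ c
      = if c' = c then ((∑ x, S1.mv K (c x) : ℝ) : ℂ) * ψ c else 0 := by
    intro c
    unfold S1.s3tot
    split_ifs <;> simp
  rw [Finset.sum_congr rfl fun c _ => point c, Finset.sum_ite_eq, if_pos (Finset.mem_univ c')]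

end ASW


/-- Alcaraz–Salinas–Wreszinski: on a connected graph with bonds of `d` types
supporting a generalized height function, for every `N ∈ {0,…,2S|Λ|}` the zero-energy
vectors of the spin-`S` XXZ Hamiltonian with anisotropies `Δ₁,…,Δ_d` in the sector where
`Σ_x S³_x` has eigenvalue `S|Λ| − N` form exactly the one-dimensional space spanned by the
(nonzero) vector `Ψ₀(N)`. -/
theorem stmt1 {Λ : Type*} [Fintype Λ] [DecidableEq Λ] (twoS : ℕ) (h2S : 1 ≤ twoS)
    (d : ℕ) (B : Fin d → Finset (Λ × Λ))
    (hdisj : ∀ i j : Fin d, i ≠ j → Disjoint (B i) (B j))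
    (hconn : ∀ x y : Λ,
      Relation.ReflTransGen (fun u v => ∃ i, (u, v) ∈ B i ∨ (v, u) ∈ B i) x y)
    (l : Λ → Fin d → ℤ) (hheight : ∀ i : Fin d, ∀ p ∈ B i, l p.2 = l p.1 + Pi.single i 1)
    (Δs : Fin d → ℝ) (hΔs : ∀ i, 1 ≤ Δs i)
    (qs : Fin d → ℝ) (hqs : ∀ i, 0 < qs i ∧ qs i ≤ 1)
    (hrel : ∀ i, Δs i = (qs i + (qs i)⁻¹) / 2)
    (N : ℕ) (hN : N ≤ twoS * Fintype.card Λ) :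
    (∀ ψ : S1.QConf Λ twoS → ℂ,
      (Matrix.mulVec (∑ i : Fin d, ∑ p ∈ B i, S1.hXY twoS (Δs i) p.1 p.2) ψ = 0 ∧
        Matrix.mulVec (S1.s3tot twoS) ψ =
          (((twoS * Fintype.card Λ : ℝ) / 2 - (N : ℝ) : ℝ) : ℂ) • ψ)
      ↔ ∃ a : ℂ, ψ = a • S1.asw twoS d qs l N) ∧
    S1.asw twoS d qs l N ≠ 0 := by
  classical
  set K := twoS with hK
  set Q : Λ → ℝ := ASW.Qfun d qs l with hQ
  have hQpos : ∀ z, 0 < Q z := ASW.Qfun_pos d qs (fun i => (hqs i).1) l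
  set W : S1.QConf Λ K → ℝ := ASW.wt K Q with hWdef
  have hW : ∀ c, 0 < W c := ASW.wt_pos K Q hQpos
  have hB : ∀ i : Fin d, ∀ p ∈ B i, (p.1 : Λ) ≠ p.2 := by
    intro i p hp h
    have h2 := hheight i p hp
    rw [← h] at h2
    have h3 := congrFun h2 i
    simp [Pi.single_eq_same] at h3
  set HC := (∑ i : Fin d, ∑ p ∈ B i, S1.hXY (Λ := Λ) K (Δs i) p.1 p.2) with hHC
  set Hm := ASW.Hr K B Δs with hHm
  have FC : ∀ c' c : S1.QConf Λ K, HC c' c = ((Hm c' c : ℝ) : ℂ) := by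
    intro c' c
    rw [hHC, hHm, ASW.Hr_apply]
    rw [Matrix.sum_apply, Complex.ofReal_sum]
    apply Finset.sum_congr rfl
    intro i _
    rw [Matrix.sum_apply, Complex.ofReal_sum]
    apply Finset.sum_congr rfl
    intro p _
    exact ASW.hXY_eq K (Δs i) p.1 p.2 c' c
  obtain ⟨c₀, hc₀⟩ := ASW.exists_conf_on (Λ := Λ) K Finset.univ N
    (by rw [Finset.card_univ]; exact hN)
  have hA : S1.asw K d qs l N = fun c => ((ASW.aswR K Q N c : ℝ) : ℂ) := ASW.asw_eq K d qs l N
  have haswc₀ : ASW.aswR K Q N c₀ = W c₀ := by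
    unfold ASW.aswR
    rw [if_pos hc₀]
  have hasw_ne : S1.asw K d qs l N ≠ 0 := by
    intro h
    have := congrFun h c₀
    rw [hA] at this
    simp only [haswc₀, Pi.zero_apply] at this
    exact (hW c₀).ne' (by exact_mod_cast this)
  have hHrW : Hm.mulVec W = 0 := ASW.Hr_mulVec_wt K B Δs qs hqs hrel l hheight hB
  have hHrA : Hm.mulVec (ASW.aswR K Q N) = 0 :=
    ASW.Hr_mulVec_aswR K B Δs qs hqs hrel l hheight hB N
  have hHCasw : HC.mulVec (S1.asw K d qs l N) = 0 := by
    funext c'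
    show (∑ c, HC c' c * S1.asw K d qs l N c) = 0
    have point : ∀ c, HC c' c * S1.asw K d qs l N c
        = ((Hm c' c * ASW.aswR K Q N c : ℝ) : ℂ) := by
      intro c
      rw [FC c' c, hA, Complex.ofReal_mul]
    rw [Finset.sum_congr rfl fun c _ => point c, ← Complex.ofReal_sum]
    have h0 : (∑ c, Hm c' c * ASW.aswR K Q N c) = 0 := congrFun hHrA c'
    rw [h0, Complex.ofReal_zero]
  set lam : ℂ := (((K * Fintype.card Λ : ℝ) / 2 - (N : ℝ) : ℝ) : ℂ) with hlam
  have hs3asw : (S1.s3tot K).mulVec (S1.asw K d qs l N) = lam • S1.asw K d qs l N := by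
    funext c'
    rw [ASW.s3_mulVec, Pi.smul_apply, smul_eq_mul]
    by_cases hsec : (∑ z, (c' z : ℕ)) = N
    · have : ((∑ x, S1.mv K (c' x) : ℝ) : ℂ) = lam := by
        rw [ASW.mv_sum, hsec, hlam]
      rw [this]
    · have hz : S1.asw K d qs l N c' = 0 := by
        rw [hA]
        simp only [ASW.aswR, if_neg hsec, Complex.ofReal_zero]
      rw [hz, mul_zero, mul_zero]
  constructor
  · intro ψ
    constructor
    · rintro ⟨hHψ, hs3ψ⟩
      have supp : ∀ c, (∑ z, (c z : ℕ)) ≠ N → ψ c = 0 := by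
        intro c hcN
        have h1 := congrFun hs3ψ c
        rw [ASW.s3_mulVec] at h1
        simp only [Pi.smul_apply, smul_eq_mul] at h1
        have h2 : (((∑ x, S1.mv K (c x) : ℝ) : ℂ) - lam) * ψ c = 0 := by
          rw [sub_mul, h1, sub_self]
        have h3 : (((∑ x, S1.mv K (c x) : ℝ) : ℂ) - lam) ≠ 0 := by
          rw [ASW.mv_sum, hlam, ← Complex.ofReal_sub, Complex.ofReal_ne_zero]
          intro hcon
          apply hcN
          have : ((∑ x, (c x : ℕ) : ℕ) : ℝ) = (N : ℝ) := by
            push_cast at hcon ⊢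
            linarith
          exact_mod_cast this
        exact (mul_eq_zero.mp h2).resolve_left h3
      have hre : Hm.mulVec (fun c => (ψ c).re) = 0 := by
        funext c'
        show (∑ c, Hm c' c * (ψ c).re) = 0
        have h0 : (∑ c, HC c' c * ψ c) = 0 := congrFun hHψ c'
        have h1 := congrArg Complex.re h0
        rw [Complex.re_sum] at h1
        have h2 : ∀ c, (HC c' c * ψ c).re = Hm c' c * (ψ c).re := by
          intro c
          rw [FC c' c]
          simp [Complex.mul_re]
        rw [Finset.sum_congr rfl fun c _ => h2 c] at h1
        simpa using h1
      have him : Hm.mulVec (fun c => (ψ c).im) = 0 := by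
        funext c'
        show (∑ c, Hm c' c * (ψ c).im) = 0
        have h0 : (∑ c, HC c' c * ψ c) = 0 := congrFun hHψ c'
        have h1 := congrArg Complex.im h0
        rw [Complex.im_sum] at h1
        have h2 : ∀ c, (HC c' c * ψ c).im = Hm c' c * (ψ c).im := by
          intro c
          rw [FC c' c]
          simp [Complex.mul_im]
        rw [Finset.sum_congr rfl fun c _ => h2 c] at h1
        simpa using h1
      have R1 := ASW.gs_transform Hm (ASW.Hr_symm K B Δs)
        (fun c c' h => ASW.Hr_offdiag_nonpos K B Δs hΔs c c' h) W hW hHrW _ hre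
      have R2 := ASW.gs_transform Hm (ASW.Hr_symm K B Δs)
        (fun c c' h => ASW.Hr_offdiag_nonpos K B Δs hΔs c c' h) W hW hHrW _ him
      have Rψ : ∀ c c', Hm c c' ≠ 0 → ψ c * ((W c' : ℝ) : ℂ) = ψ c' * ((W c : ℝ) : ℂ) := by
        intro c c' h
        have e1 := R1 c c' h
        have e2 := R2 c c' h
        apply Complex.ext
        · simpa [Complex.mul_re] using e1
        · simpa [Complex.mul_im] using e2
      have chain : ∀ c c', Relation.ReflTransGen (ASW.MoveR K B) c c' →
          ψ c' * ((W c : ℝ) : ℂ) = ψ c * ((W c' : ℝ) : ℂ) := by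
        intro c c' h
        induction h with
        | refl => rfl
        | tail h1 h2 IH =>
            rename_i b c''
            have hlt := ASW.Hr_move_neg K B Δs hΔs b c'' h2
            have hne : Hm c'' b ≠ 0 := ne_of_lt hlt
            have step := Rψ c'' b hne
            have hWb : ((W b : ℝ) : ℂ) ≠ 0 := by
              exact_mod_cast (hW b).ne'
            apply mul_right_cancel₀ hWb
            linear_combination ((W c : ℝ) : ℂ) * step + ((W c'' : ℝ) : ℂ) * IH
      refine ⟨ψ c₀ / ((W c₀ : ℝ) : ℂ), ?_⟩
      funext c
      rw [hA, Pi.smul_apply, smul_eq_mul]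
      by_cases hsec : (∑ z, (c z : ℕ)) = N
      · have hcon : Relation.ReflTransGen (ASW.MoveR K B) c₀ c :=
          ASW.moves_connect K B h2S hconn c₀ c (hc₀.trans hsec.symm)
        have hch := chain c₀ c hcon
        have hW0 : ((W c₀ : ℝ) : ℂ) ≠ 0 := by exact_mod_cast (hW c₀).ne'
        have haswc : ASW.aswR K Q N c = W c := by
          unfold ASW.aswR
          rw [if_pos hsec]
        rw [haswc]
        field_simp
        linear_combination hch
      · rw [supp c hsec]
        have haswc : ASW.aswR K Q N c = 0 := by
          unfold ASW.aswR
          rw [if_neg hsec]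
        rw [haswc]
        simp
    · rintro ⟨a, rfl⟩
      constructor
      · rw [Matrix.mulVec_smul, hHCasw, smul_zero]
      · rw [Matrix.mulVec_smul, hs3asw, smul_comm]
  · exact hasw_ne
end
end

section
/- Fix 0 < q < 1 and an integer n ≥ 0. The series Z(n) = Σ over all pairs (A,B), where A ranges over finite subsets of {…,−2,−1,0} and B over finite subsets of {1,2,3,…} with |B| = |A| + n, of q^{2(Σ_{y∈B} y − Σ_{x∈A} x)}, converges, and Z(n) = q^{n(n+1)} / ∏_{m=1}^∞ (1 − q^{2m}). -/
/-- Admissible pairs `(A,B)`: `A` a finite subset of `{…,−1,0}`, `B` a finite subset of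
`{1,2,…}` with `|B| = |A| + n`. -/
def KinkPairs (n : ℕ) : Type :=
  {p : Finset ℤ × Finset ℤ //
    (∀ x ∈ p.1, x ≤ 0) ∧ (∀ y ∈ p.2, 1 ≤ y) ∧ p.2.card = p.1.card + n}

/-- The weight `q^{2(Σ_{y∈B} y − Σ_{x∈A} x)}` of a pair `(A,B)`. -/
noncomputable def kinkWeight (q : ℝ) {n : ℕ} (p : KinkPairs n) : ℝ :=
  q ^ (2 * ((∑ y ∈ p.val.2, y) - ∑ x ∈ p.val.1, x))

open Finset Filter Topology

namespace Stmt2Aux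


/-- weight of a multiplicity function: `Σ (m+1) * c m`. -/
def wgt (c : ℕ →₀ ℕ) : ℕ := c.sum fun m k => (m + 1) * k

noncomputable def F (t : ℝ) (c : ℕ →₀ ℕ) : ℝ := t ^ wgt c

variable {t : ℝ}

lemma F_nonneg (ht : 0 ≤ t) (c : ℕ →₀ ℕ) : 0 ≤ F t c := pow_nonneg ht _

lemma hasSum_pi : ∀ (N : ℕ) (r : ℕ → ℝ), (∀ m, 0 ≤ r m) → (∀ m, r m < 1) →
    HasSum (fun v : Fin N → ℕ => ∏ m : Fin N, r (m : ℕ) ^ v m)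
      (∏ m ∈ Finset.range N, (1 - r m)⁻¹) := by
  intro N
  induction N with
  | zero =>
    intro r _ _
    simpa using hasSum_single (f := fun _ : Fin 0 → ℕ => (1 : ℝ)) (fun _ : Fin 0 => 0)
      (fun v hv => absurd (Subsingleton.elim _ _) hv)
  | succ N ih =>
    intro r hr0 hr1
    set f : ℕ → ℝ := fun j => r 0 ^ j with hf
    set g : (Fin N → ℕ) → ℝ := fun v => ∏ m : Fin N, r ((m : ℕ) + 1) ^ v m with hg
    have h0 : HasSum f (1 - r 0)⁻¹ := hasSum_geometric_of_lt_one (hr0 0) (hr1 0)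
    have hN : HasSum g (∏ m ∈ Finset.range N, (1 - r (m + 1))⁻¹) := by
      simpa using ih (fun m => r (m + 1)) (fun m => hr0 _) (fun m => hr1 _)
    have hf0 : 0 ≤ f := fun j => pow_nonneg (hr0 0) _
    have hg0 : 0 ≤ g := fun v => Finset.prod_nonneg fun m _ => pow_nonneg (hr0 _) _
    have hsm : Summable (fun p : ℕ × (Fin N → ℕ) => f p.1 * g p.2) :=
      h0.summable.mul_of_nonneg hN.summable hf0 hg0
    have hprod : HasSum (fun p : ℕ × (Fin N → ℕ) => f p.1 * g p.2)
        ((1 - r 0)⁻¹ * ∏ m ∈ Finset.range N, (1 - r (m + 1))⁻¹) := by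
      rw [hsm.hasSum_iff, ← Summable.tsum_mul_tsum h0.summable hN.summable hsm,
        h0.tsum_eq, hN.tsum_eq]
    have key := ((Fin.consEquiv (fun _ => ℕ)).symm.hasSum_iff (f := fun p : ℕ × (Fin N → ℕ) => f p.1 * g p.2)).mpr hprod
    have heq : (fun v : Fin (N + 1) → ℕ => ∏ m : Fin (N + 1), r (m : ℕ) ^ v m)
        = (fun p : ℕ × (Fin N → ℕ) => f p.1 * g p.2) ∘ (Fin.consEquiv (fun _ => ℕ)).symm := by
      funext v
      simp only [Function.comp_apply, Fin.consEquiv, Equiv.coe_fn_symm_mk, hf, hg]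
      rw [Fin.prod_univ_succ]
      rfl
    rw [Finset.prod_range_succ', mul_comm]
    exact heq ▸ key

/-- Embed `Fin N → ℕ` into finsupps supported in `range N`. -/
noncomputable def iota (N : ℕ) (v : Fin N → ℕ) : ℕ →₀ ℕ :=
  Finsupp.onFinset (range N) (fun m => if h : m < N then v ⟨m, h⟩ else 0)
    (by intro m hm; rw [Finset.mem_range]; by_contra h; exact hm (dif_neg h))

lemma iota_apply (N : ℕ) (v : Fin N → ℕ) (m : ℕ) :
    iota N v m = if h : m < N then v ⟨m, h⟩ else 0 := rfl

lemma iota_injective (N : ℕ) : Function.Injective (iota N) := by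
  intro v w h
  funext i
  have := DFunLike.congr_fun h (i : ℕ)
  rw [iota_apply, iota_apply, dif_pos i.2, dif_pos i.2] at this
  simpa using this

lemma mem_range_iota {c : ℕ →₀ ℕ} {N : ℕ} (h : ∀ m, N ≤ m → c m = 0) :
    c ∈ Set.range (iota N) := by
  refine ⟨fun i => c i, ?_⟩
  ext m
  rw [iota_apply]
  split
  · rfl
  · exact (h m (by omega)).symm

lemma wgt_iota (N : ℕ) (v : Fin N → ℕ) :
    wgt (iota N v) = ∑ m : Fin N, ((m : ℕ) + 1) * v m := by
  rw [wgt, iota, Finsupp.onFinset_sum (fun m hm => by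
      rw [Finset.mem_range]; by_contra h; exact hm (dif_neg h)) (fun a => by simp)]
  rw [Finset.sum_range fun m => _]
  congr 1
  funext m
  rw [dif_pos m.2]

lemma F_iota (ht : 0 ≤ t) (N : ℕ) (v : Fin N → ℕ) :
    F t (iota N v) = ∏ m : Fin N, (t ^ ((m : ℕ) + 1)) ^ v m := by
  rw [F, wgt_iota, ← Finset.prod_pow_eq_pow_sum]
  congr 1
  funext m
  rw [← pow_mul]

lemma hasSum_F_iota (ht0 : 0 ≤ t) (ht1 : t < 1) (N : ℕ) :
    HasSum (fun v : Fin N → ℕ => F t (iota N v))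
      (∏ m ∈ Finset.range N, (1 - t ^ (m + 1))⁻¹) := by
  have h := hasSum_pi N (fun m => t ^ (m + 1))
    (fun m => pow_nonneg ht0 _) (fun m => pow_lt_one₀ ht0 ht1 (Nat.succ_ne_zero m))
  have heq : (fun v : Fin N → ℕ => F t (iota N v))
      = fun v : Fin N → ℕ => ∏ m : Fin N, (t ^ ((m : ℕ) + 1)) ^ v m := by
    funext v; exact F_iota ht0 N v
  rw [heq]
  exact h

lemma one_sub_pow_pos (ht0 : 0 ≤ t) (ht1 : t < 1) (m : ℕ) : 0 < 1 - t ^ (m + 1) :=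
  sub_pos.mpr (pow_lt_one₀ ht0 ht1 (Nat.succ_ne_zero m))

lemma Pinv_le (ht0 : 0 ≤ t) (ht1 : t < 1) (N : ℕ) :
    ∏ m ∈ Finset.range N, (1 - t ^ (m + 1))⁻¹ ≤ Real.exp (t * (1 - t)⁻¹ * (1 - t)⁻¹) := by
  have h1t : 0 < 1 - t := sub_pos.mpr ht1
  have hfac : ∀ m ∈ Finset.range N, (1 - t ^ (m + 1))⁻¹ ≤ Real.exp (t ^ (m + 1) * (1 - t)⁻¹) := by
    intro m _
    have hm : 0 < 1 - t ^ (m + 1) := one_sub_pow_pos ht0 ht1 m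
    have hle : t ^ (m + 1) ≤ t := by
      calc t ^ (m + 1) ≤ t ^ 1 := pow_le_pow_of_le_one ht0 ht1.le (by omega)
      _ = t := pow_one t
    have h1 : 1 - t ≤ 1 - t ^ (m + 1) := by linarith
    rw [inv_le_iff_one_le_mul₀ hm]
    have : 1 + t ^ (m + 1) * (1 - t)⁻¹ ≤ Real.exp (t ^ (m + 1) * (1 - t)⁻¹) := by
      have := Real.add_one_le_exp (t ^ (m + 1) * (1 - t)⁻¹)
      linarith
    have h2 : 1 ≤ (1 - t ^ (m + 1)) * (1 + t ^ (m + 1) * (1 - t)⁻¹) := by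
      have h3 : (1 - t ^ (m + 1)) * (t ^ (m + 1) * (1 - t)⁻¹) ≥
          (1 - t) * (t ^ (m + 1) * (1 - t)⁻¹) := by
        have hnn : 0 ≤ t ^ (m + 1) * (1 - t)⁻¹ :=
          mul_nonneg (pow_nonneg ht0 _) (inv_nonneg.mpr h1t.le)
        exact mul_le_mul_of_nonneg_right h1 hnn
      have h4 : (1 - t) * (t ^ (m + 1) * (1 - t)⁻¹) = t ^ (m + 1) := by
        field_simp
      nlinarith [pow_nonneg ht0 (m + 1)]
    calc (1 : ℝ) ≤ (1 - t ^ (m + 1)) * (1 + t ^ (m + 1) * (1 - t)⁻¹) := h2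
    _ ≤ (1 - t ^ (m + 1)) * Real.exp (t ^ (m + 1) * (1 - t)⁻¹) := by
        exact mul_le_mul_of_nonneg_left this hm.le
    _ = Real.exp (t ^ (m + 1) * (1 - t)⁻¹) * (1 - t ^ (m + 1)) := mul_comm _ _
  calc ∏ m ∈ Finset.range N, (1 - t ^ (m + 1))⁻¹
      ≤ ∏ m ∈ Finset.range N, Real.exp (t ^ (m + 1) * (1 - t)⁻¹) := by
        refine Finset.prod_le_prod (fun m _ => ?_) hfac
        exact inv_nonneg.mpr (one_sub_pow_pos ht0 ht1 m).le
    _ = Real.exp (∑ m ∈ Finset.range N, t ^ (m + 1) * (1 - t)⁻¹) := by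
        rw [Real.exp_sum]
    _ ≤ Real.exp (t * (1 - t)⁻¹ * (1 - t)⁻¹) := by
        rw [Real.exp_le_exp]
        have hsum : ∑ m ∈ Finset.range N, t ^ (m + 1) ≤ t * (1 - t)⁻¹ := by
          have : ∑ m ∈ Finset.range N, t ^ (m + 1) = t * ∑ m ∈ Finset.range N, t ^ m := by
            rw [Finset.mul_sum]
            congr 1; funext m; rw [pow_succ, mul_comm]
          rw [this]
          have hgs : ∑ m ∈ Finset.range N, t ^ m ≤ (1 - t)⁻¹ := by
            have := Summable.sum_le_tsum (Finset.range N)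
              (fun m _ => pow_nonneg ht0 m) (summable_geometric_of_lt_one ht0 ht1)
            rwa [tsum_geometric_of_lt_one ht0 ht1] at this
          exact mul_le_mul_of_nonneg_left hgs ht0
        rw [← Finset.sum_mul]
        exact mul_le_mul_of_nonneg_right hsum (inv_nonneg.mpr h1t.le)

lemma iota_restrict (N : ℕ) (c : ℕ →₀ ℕ) (h : ∀ m, N ≤ m → c m = 0) :
    iota N (fun i : Fin N => c i) = c := by
  ext m
  rw [iota_apply]
  split
  · rfl
  · exact (h m (by omega)).symm

noncomputable def Pinv (t : ℝ) (N : ℕ) : ℝ := ∏ m ∈ Finset.range N, (1 - t ^ (m + 1))⁻¹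

lemma Pinv_pos (ht0 : 0 ≤ t) (ht1 : t < 1) (N : ℕ) : 0 < Pinv t N :=
  Finset.prod_pos fun m _ => inv_pos.mpr (one_sub_pow_pos ht0 ht1 m)

lemma sum_F_le_Pinv (ht0 : 0 ≤ t) (ht1 : t < 1) (u : Finset (ℕ →₀ ℕ)) :
    ∃ N, ∑ c ∈ u, F t c ≤ Pinv t N := by
  set N := (u.sup fun c => c.support.sup id) + 1 with hNdef
  refine ⟨N, ?_⟩
  have hsupp : ∀ c ∈ u, ∀ m, N ≤ m → c m = 0 := by
    intro c hc m hm
    by_contra h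
    have h1 : m ∈ c.support := Finsupp.mem_support_iff.mpr h
    have h2 : m ≤ c.support.sup id := Finset.le_sup (f := id) h1
    have h3 : c.support.sup id ≤ u.sup fun c => c.support.sup id :=
      Finset.le_sup (f := fun c => c.support.sup id) hc
    omega
  have heq : ∑ c ∈ u, F t c
      = ∑ v ∈ u.image (fun c => fun i : Fin N => c i), F t (iota N v) := by
    rw [Finset.sum_image (fun x hx y hy hxy => by
      rw [← iota_restrict N x (hsupp x hx), ← iota_restrict N y (hsupp y hy), hxy])]
    refine Finset.sum_congr rfl fun c hc => ?_
    rw [iota_restrict N c (hsupp c hc)]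
  rw [heq]
  calc ∑ v ∈ u.image (fun c => fun i : Fin N => c i), F t (iota N v)
      ≤ ∑' v : Fin N → ℕ, F t (iota N v) :=
        Summable.sum_le_tsum _ (fun v _ => F_nonneg ht0 _) (hasSum_F_iota ht0 ht1 N).summable
    _ = Pinv t N := (hasSum_F_iota ht0 ht1 N).tsum_eq

lemma summable_F (ht0 : 0 ≤ t) (ht1 : t < 1) : Summable (F t) := by
  refine summable_of_sum_le (c := Real.exp (t * (1 - t)⁻¹ * (1 - t)⁻¹))
    (fun c => F_nonneg ht0 c) (fun u => ?_)
  obtain ⟨N, hN⟩ := sum_F_le_Pinv ht0 ht1 u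
  exact hN.trans (Pinv_le ht0 ht1 N)

lemma one_le_L (ht0 : 0 ≤ t) (ht1 : t < 1) : 1 ≤ ∑' c, F t c := by
  have h := Summable.le_tsum (summable_F ht0 ht1) 0 (fun c _ => F_nonneg ht0 c)
  have h0 : F t 0 = 1 := by simp [F, wgt]
  rwa [h0] at h

lemma Pinv_le_L (ht0 : 0 ≤ t) (ht1 : t < 1) (N : ℕ) : Pinv t N ≤ ∑' c, F t c := by
  rw [Pinv, ← (hasSum_F_iota ht0 ht1 N).tsum_eq]
  exact Summable.tsum_le_tsum_of_inj (iota N) (iota_injective N)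
    (fun c _ => F_nonneg ht0 c) (fun v => le_rfl)
    (hasSum_F_iota ht0 ht1 N).summable (summable_F ht0 ht1)

lemma L_le_iSup (ht0 : 0 ≤ t) (ht1 : t < 1) : (∑' c, F t c) ≤ ⨆ N, Pinv t N := by
  have hbdd : BddAbove (Set.range (Pinv t)) :=
    ⟨Real.exp (t * (1 - t)⁻¹ * (1 - t)⁻¹), fun x ⟨N, hN⟩ => hN ▸ Pinv_le ht0 ht1 N⟩
  refine le_of_tendsto (summable_F ht0 ht1).hasSum (Filter.Eventually.of_forall fun u => ?_)
  obtain ⟨N, hN⟩ := sum_F_le_Pinv ht0 ht1 u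
  exact hN.trans (le_ciSup hbdd N)

lemma tendsto_Pinv (ht0 : 0 ≤ t) (ht1 : t < 1) :
    Filter.Tendsto (Pinv t) Filter.atTop (nhds (∑' c, F t c)) := by
  have hbdd : BddAbove (Set.range (Pinv t)) :=
    ⟨Real.exp (t * (1 - t)⁻¹ * (1 - t)⁻¹), fun x ⟨N, hN⟩ => hN ▸ Pinv_le ht0 ht1 N⟩
  have hmono : Monotone (Pinv t) := by
    intro M N h
    rw [Pinv, Pinv, ← Finset.prod_range_mul_prod_Ico _ h]
    have h1 : (1 : ℝ) ≤ ∏ m ∈ Finset.Ico M N, (1 - t ^ (m + 1))⁻¹ := by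
      have := Finset.prod_le_prod (s := Finset.Ico M N) (f := fun _ => (1 : ℝ))
        (g := fun m => (1 - t ^ (m + 1))⁻¹) (fun m _ => zero_le_one)
        (fun m _ => (one_le_inv₀ (one_sub_pow_pos ht0 ht1 m)).mpr
          (by linarith [pow_nonneg ht0 (m + 1)]))
      simpa using this
    exact le_mul_of_one_le_right
      (Finset.prod_nonneg fun m _ => inv_nonneg.mpr (one_sub_pow_pos ht0 ht1 m).le) h1
  have := tendsto_atTop_ciSup hmono hbdd
  have heq : (⨆ N, Pinv t N) = ∑' c, F t c :=
    le_antisymm (ciSup_le fun N => Pinv_le_L ht0 ht1 N) (L_le_iSup ht0 ht1)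
  rwa [heq] at this

lemma hasProd_one_sub (ht0 : 0 ≤ t) (ht1 : t < 1) :
    HasProd (fun m : ℕ => 1 - t ^ (m + 1)) (∑' c, F t c)⁻¹ := by
  set L := ∑' c, F t c with hL
  have hLpos : 0 < L := lt_of_lt_of_le one_pos (one_le_L ht0 ht1)
  set net : Finset ℕ → ℝ := fun u => ∏ m ∈ u, (1 - t ^ (m + 1)) with hnet
  have hnet_nonneg : ∀ u, 0 ≤ net u :=
    fun u => Finset.prod_nonneg fun m _ => (one_sub_pow_pos ht0 ht1 m).le
  have hanti : Antitone net := by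
    intro u s h
    rw [hnet]
    dsimp only
    rw [← Finset.prod_sdiff h]
    have h1 : ∏ m ∈ s \ u, (1 - t ^ (m + 1)) ≤ 1 :=
      Finset.prod_le_one (fun m _ => (one_sub_pow_pos ht0 ht1 m).le)
        (fun m _ => by linarith [pow_nonneg ht0 (m + 1)])
    nlinarith [hnet_nonneg u, Finset.prod_nonneg
      (fun m (_ : m ∈ s \ u) => (one_sub_pow_pos ht0 ht1 m).le)]
  have hbdd : BddBelow (Set.range net) := ⟨0, fun x ⟨u, hu⟩ => hu ▸ hnet_nonneg u⟩
  have htend := tendsto_atTop_ciInf hanti hbdd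
  -- the products over ranges converge to L⁻¹
  have hPrange : ∀ N, net (Finset.range N) = (Pinv t N)⁻¹ := by
    intro N
    rw [hnet, Pinv]
    dsimp only
    rw [← Finset.prod_inv_distrib]
    refine Finset.prod_congr rfl fun m _ => ?_
    rw [inv_inv]
  have htendP : Filter.Tendsto (fun N => net (Finset.range N)) Filter.atTop (nhds L⁻¹) := by
    have := (tendsto_Pinv ht0 ht1).inv₀ (ne_of_gt hLpos)
    simpa [hPrange] using this
  have hinf : (⨅ u, net u) = L⁻¹ := by
    refine le_antisymm ?_ (le_ciInf fun u => ?_)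
    · refine ge_of_tendsto htendP (Filter.Eventually.of_forall fun N => ?_)
      exact ciInf_le hbdd (Finset.range N)
    · obtain ⟨N, hN⟩ : ∃ N, u ⊆ Finset.range N := by
        refine ⟨u.sup id + 1, fun m hm => Finset.mem_range.mpr ?_⟩
        have : m ≤ u.sup id := Finset.le_sup (f := id) hm
        omega
      have h1 : net (Finset.range N) ≤ net u := hanti hN
      have h2 : L⁻¹ ≤ net (Finset.range N) := by
        rw [hPrange]
        exact inv_anti₀ (Pinv_pos ht0 ht1 N) (Pinv_le_L ht0 ht1 N)
      linarith
  rw [HasProd]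
  rwa [hinf] at htend

/-- `fOf c i = Σ_{m ≥ i} c m`, the `i`-th part of the partition with multiplicities `c`. -/
def fOf (c : ℕ →₀ ℕ) (i : ℕ) : ℕ := ∑ m ∈ c.support, if i ≤ m then c m else 0

lemma fOf_eq_sum_Ico {c : ℕ →₀ ℕ} {K : ℕ} (hK : ∀ m, K ≤ m → c m = 0) (i : ℕ) :
    fOf c i = ∑ m ∈ Finset.Ico i K, c m := by
  rw [fOf, ← Finset.sum_filter]
  apply Finset.sum_subset
  · intro m hm
    rw [Finset.mem_filter] at hm
    obtain ⟨hm1, hm2⟩ := hm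
    rw [Finset.mem_Ico]
    refine ⟨hm2, ?_⟩
    by_contra h
    exact Finsupp.mem_support_iff.mp hm1 (hK m (by omega))
  · intro m hm hnm
    by_contra h
    rw [Finset.mem_Ico] at hm
    exact hnm (Finset.mem_filter.mpr ⟨Finsupp.mem_support_iff.mpr h, hm.1⟩)

lemma fOf_succ (c : ℕ →₀ ℕ) (i : ℕ) : fOf c i = c i + fOf c (i + 1) := by
  set K := (c.support.sup id + 1) ⊔ (i + 1) with hKdef
  have hK : ∀ m, K ≤ m → c m = 0 := by
    intro m hm
    by_contra h
    have h1 : m ∈ c.support := Finsupp.mem_support_iff.mpr h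
    have h2 : m ≤ c.support.sup id := Finset.le_sup (f := id) h1
    omega
  rw [fOf_eq_sum_Ico hK, fOf_eq_sum_Ico hK, Finset.sum_eq_sum_Ico_succ_bot (by omega)]

lemma fOf_antitone (c : ℕ →₀ ℕ) : Antitone (fOf c) := by
  apply antitone_nat_of_succ_le
  intro i
  rw [fOf_succ c i]
  omega

lemma fOf_eq_zero {c : ℕ →₀ ℕ} {i : ℕ} (h : ∀ m, i ≤ m → c m = 0) : fOf c i = 0 := by
  rw [fOf_eq_sum_Ico h i, Finset.Ico_self, Finset.sum_empty]

lemma sum_fOf {c : ℕ →₀ ℕ} {K : ℕ} (hK : ∀ m, K ≤ m → c m = 0) :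
    ∑ i ∈ Finset.range K, fOf c i = wgt c := by
  rw [wgt, Finsupp.sum]
  unfold fOf
  rw [Finset.sum_comm]
  refine Finset.sum_congr rfl fun m hm => ?_
  have hmK : m + 1 ≤ K := by
    by_contra h
    exact Finsupp.mem_support_iff.mp hm (hK m (by omega))
  rw [Finset.sum_ite, Finset.sum_const_zero, add_zero, Finset.sum_const]
  have : (Finset.range K).filter (fun i => i ≤ m) = Finset.range (m + 1) := by
    ext i
    simp only [Finset.mem_filter, Finset.mem_range]
    omega
  rw [this, Finset.card_range, smul_eq_mul]

/-- The strictly decreasing "Maya diagram" enumeration attached to `c`, charge `n`. -/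
def dOf (n : ℕ) (c : ℕ →₀ ℕ) (i : ℕ) : ℤ := (fOf c i : ℤ) + n - i

lemma dOf_strictAnti (n : ℕ) (c : ℕ →₀ ℕ) : StrictAnti (dOf n c) := by
  apply strictAnti_nat_of_succ_lt
  intro i
  have := fOf_succ c i
  have h2 := fOf_antitone c (Nat.le_succ i)
  rw [dOf, dOf]
  push_cast
  have : (fOf c (i+1) : ℤ) ≤ fOf c i := by exact_mod_cast h2
  linarith

lemma dOf_eq_of_le {n : ℕ} {c : ℕ →₀ ℕ} {K : ℕ} (hK : ∀ m, K ≤ m → c m = 0)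
    {i : ℕ} (h : K ≤ i) : dOf n c i = (n : ℤ) - i := by
  rw [dOf, fOf_eq_zero (fun m hm => hK m (by omega))]
  push_cast
  ring

lemma dOf_ge (n : ℕ) (c : ℕ →₀ ℕ) (i : ℕ) : (n : ℤ) - i ≤ dOf n c i := by
  rw [dOf]
  have : (0 : ℤ) ≤ (fOf c i : ℤ) := Int.natCast_nonneg _
  linarith

/-- A bound `K` is valid for `(n, c)` if `c` vanishes from `K` on and `K ≥ n + 1`. -/
def ValidK (n : ℕ) (c : ℕ →₀ ℕ) (K : ℕ) : Prop := (∀ m, K ≤ m → c m = 0) ∧ n + 1 ≤ K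

/-- canonical valid bound -/
def Kc (n : ℕ) (c : ℕ →₀ ℕ) : ℕ := c.support.sup id + n + 1

lemma validK_Kc (n : ℕ) (c : ℕ →₀ ℕ) : ValidK n c (Kc n c) := by
  constructor
  · intro m hm
    by_contra h
    have h1 : m ∈ c.support := Finsupp.mem_support_iff.mpr h
    have h2 : m ≤ c.support.sup id := Finset.le_sup (f := id) h1
    rw [Kc] at hm
    omega
  · rw [Kc]; omega

def DK (n : ℕ) (c : ℕ →₀ ℕ) (K : ℕ) : Finset ℤ := (Finset.range K).image (dOf n c)

noncomputable def Bset (n : ℕ) (c : ℕ →₀ ℕ) (K : ℕ) : Finset ℤ :=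
  (DK n c K).filter (fun x => 1 ≤ x)

noncomputable def Aset (n : ℕ) (c : ℕ →₀ ℕ) (K : ℕ) : Finset ℤ :=
  (Finset.Icc ((n : ℤ) - K + 1) 0).filter (fun x => x ∉ DK n c K)

lemma coe_Bset {n : ℕ} {c : ℕ →₀ ℕ} {K : ℕ} (hK : ValidK n c K) :
    (Bset n c K : Set ℤ) = Set.range (dOf n c) ∩ {x | 1 ≤ x} := by
  ext x
  simp only [Bset, DK, Finset.coe_filter, Set.mem_setOf_eq, Finset.mem_image,
    Finset.mem_range, Set.mem_inter_iff, Set.mem_range]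
  constructor
  · rintro ⟨⟨i, _, hi⟩, hx⟩
    exact ⟨⟨i, hi⟩, hx⟩
  · rintro ⟨⟨i, hi⟩, hx⟩
    refine ⟨⟨i, ?_, hi⟩, hx⟩
    by_contra h
    have := dOf_eq_of_le (n := n) hK.1 (i := i) (by omega)
    have hK2 := hK.2
    omega

lemma coe_Aset {n : ℕ} {c : ℕ →₀ ℕ} {K : ℕ} (hK : ValidK n c K) :
    (Aset n c K : Set ℤ) = {x | x ≤ 0} \ Set.range (dOf n c) := by
  ext x
  simp only [Aset, DK, Finset.coe_filter, Set.mem_setOf_eq, Finset.mem_image,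
    Finset.mem_range, Set.mem_diff, Finset.mem_Icc, Set.mem_range]
  constructor
  · rintro ⟨⟨hx1, hx2⟩, hx3⟩
    refine ⟨hx2, ?_⟩
    rintro ⟨i, hi⟩
    by_cases h : i < K
    · exact hx3 ⟨i, h, hi⟩
    · have := dOf_eq_of_le (n := n) hK.1 (i := i) (by omega)
      omega
  · rintro ⟨hx1, hx2⟩
    have hx3 : ∀ i, dOf n c i ≠ x := fun i hi => hx2 ⟨i, hi⟩
    refine ⟨⟨?_, hx1⟩, fun ⟨i, _, hi⟩ => hx3 i hi⟩
    by_contra h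
    push_neg at h
    have hxn : x ≤ (n : ℤ) - K := by omega
    have hi : K ≤ ((n : ℤ) - x).toNat := by omega
    have := dOf_eq_of_le (n := n) hK.1 hi
    have hcast : (((n : ℤ) - x).toNat : ℤ) = (n : ℤ) - x := Int.toNat_of_nonneg (by omega)
    exact hx3 (((n : ℤ) - x).toNat) (by rw [this, hcast]; ring)

lemma sum_range_id_two (K : ℕ) : 2 * ∑ i ∈ Finset.range K, (i : ℤ) = K * ((K : ℤ) - 1) := by
  rcases Nat.eq_zero_or_pos K with h0 | h0
  · subst h0; simp
  · have h := Finset.sum_range_id_mul_two K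
    have h2 : (((∑ i ∈ Finset.range K, i) * 2 : ℕ) : ℤ) = ((K * (K - 1) : ℕ) : ℤ) :=
      congrArg (Nat.cast : ℕ → ℤ) h
    push_cast [Nat.cast_sub h0] at h2
    linarith

lemma key {n : ℕ} {c : ℕ →₀ ℕ} {K : ℕ} (hK : ValidK n c K) :
    (Bset n c K).card = (Aset n c K).card + n ∧
    2 * ((∑ y ∈ Bset n c K, y) - ∑ x ∈ Aset n c K, x)
      = 2 * (wgt c : ℤ) + n * (n + 1) := by
  classical
  have hinj : Set.InjOn (dOf n c) (Finset.range K) :=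
    fun i _ j _ h => (dOf_strictAnti n c).injective h
  set Dle0 : Finset ℤ := (DK n c K).filter (fun x => x ≤ 0) with hDle0
  set Icc0 : Finset ℤ := Finset.Icc ((n : ℤ) - K + 1) 0 with hIcc0
  -- membership facts
  have hmemDK : ∀ x, x ∈ DK n c K ↔ ∃ i < K, dOf n c i = x := by
    intro x
    simp [DK]
  have hDKcard : (DK n c K).card = K := by
    rw [DK, Finset.card_image_of_injOn hinj, Finset.card_range]
  have hunion : Bset n c K ∪ Dle0 = DK n c K := by
    ext x
    simp only [Bset, hDle0, Finset.mem_union, Finset.mem_filter]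
    constructor
    · rintro (⟨h, _⟩ | ⟨h, _⟩) <;> exact h
    · intro h
      rcases le_or_gt 1 x with h1 | h1
      · exact Or.inl ⟨h, h1⟩
      · exact Or.inr ⟨h, by omega⟩
  have hdisj : Disjoint (Bset n c K) Dle0 := by
    rw [Finset.disjoint_left]
    intro x hx hx2
    simp only [Bset, Finset.mem_filter] at hx
    simp only [hDle0, Finset.mem_filter] at hx2
    omega
  have hDle0sub : Dle0 ⊆ Icc0 := by
    intro x hx
    simp only [hDle0, Finset.mem_filter] at hx
    obtain ⟨hx1, hx2⟩ := hx
    rw [hmemDK] at hx1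
    obtain ⟨i, hi, hdi⟩ := hx1
    have := dOf_ge n c i
    rw [hIcc0, Finset.mem_Icc]
    constructor
    · have : (i : ℤ) < K := by exact_mod_cast hi
      omega
    · exact hx2
  have hAset : Aset n c K = Icc0 \ Dle0 := by
    ext x
    simp only [Aset, hDle0, hIcc0, Finset.mem_filter, Finset.mem_sdiff, Finset.mem_Icc]
    constructor
    · rintro ⟨⟨h1, h2⟩, h3⟩
      exact ⟨⟨h1, h2⟩, fun hx => h3 hx.1⟩
    · rintro ⟨⟨h1, h2⟩, h3⟩
      exact ⟨⟨h1, h2⟩, fun hx => h3 ⟨hx, h2⟩⟩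
  have hIcc0card : Icc0.card = K - n := by
    rw [hIcc0, Int.card_Icc]
    have h2 := hK.2
    omega
  -- cardinalities
  have hcard1 : (Bset n c K).card + Dle0.card = K := by
    rw [← Finset.card_union_of_disjoint hdisj, hunion, hDKcard]
  have hcard2 : (Aset n c K).card + Dle0.card = K - n := by
    rw [hAset, Finset.card_sdiff_of_subset hDle0sub, hIcc0card]
    have := Finset.card_le_card hDle0sub
    omega
  have hDle0le : Dle0.card ≤ K - n := by
    have := Finset.card_le_card hDle0sub
    omega
  constructor
  · have h2 := hK.2; omega
  -- sums
  have hsum1 : (∑ y ∈ Bset n c K, y) + ∑ y ∈ Dle0, y = ∑ y ∈ DK n c K, y := by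
    rw [← Finset.sum_union hdisj, hunion]
  have hsum2 : (∑ x ∈ Aset n c K, x) + ∑ y ∈ Dle0, y = ∑ x ∈ Icc0, x := by
    rw [hAset]
    exact Finset.sum_sdiff hDle0sub
  have hsumDK : ∑ y ∈ DK n c K, y = (wgt c : ℤ) + ∑ i ∈ Finset.range K, ((n : ℤ) - i) := by
    rw [DK, Finset.sum_image hinj]
    have : ∀ i ∈ Finset.range K, dOf n c i = (fOf c i : ℤ) + ((n : ℤ) - i) := by
      intro i _; rw [dOf]; ring
    rw [Finset.sum_congr rfl this, Finset.sum_add_distrib]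
    congr 1
    rw [← sum_fOf hK.1]
    push_cast
    rfl
  have hIccsum : ∑ x ∈ Icc0, x = -(∑ j ∈ Finset.range (K - n), (j : ℤ)) := by
    have himg : Icc0 = (Finset.range (K - n)).image (fun j : ℕ => -(j : ℤ)) := by
      ext x
      simp only [hIcc0, Finset.mem_Icc, Finset.mem_image, Finset.mem_range]
      constructor
      · rintro ⟨h1, h2⟩
        refine ⟨(-x).toNat, ?_, ?_⟩
        · have h3 : ((-x).toNat : ℤ) = -x := Int.toNat_of_nonneg (by omega)
          have h2K := hK.2
          omega
        · have h3 : ((-x).toNat : ℤ) = -x := Int.toNat_of_nonneg (by omega)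
          omega
      · rintro ⟨j, hj, rfl⟩
        have : (j : ℤ) < (K : ℤ) - n := by
          have h2K := hK.2
          omega
        constructor <;> omega
    rw [himg, Finset.sum_image (fun i _ j _ h => by omega), ← Finset.sum_neg_distrib]
  -- final arithmetic
  have hB : ∑ y ∈ Bset n c K, y
      = (wgt c : ℤ) + ∑ i ∈ Finset.range K, ((n : ℤ) - i) - ∑ y ∈ Dle0, y := by omega
  have hA2 : ∑ x ∈ Aset n c K, x = (∑ x ∈ Icc0, x) - ∑ y ∈ Dle0, y := by omega
  have hcastKn : ((K - n : ℕ) : ℤ) = (K : ℤ) - n := by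
    have := hK.2; push_cast [Nat.cast_sub (by omega : n ≤ K)]; ring
  have hr : ∑ i ∈ Finset.range K, ((n : ℤ) - i)
      = K * n - ∑ i ∈ Finset.range K, (i : ℤ) := by
    rw [Finset.sum_sub_distrib, Finset.sum_const, Finset.card_range, nsmul_eq_mul, mul_comm]
  have hsum_i : 2 * ∑ i ∈ Finset.range K, (i : ℤ) = K * ((K : ℤ) - 1) := sum_range_id_two K
  have hsum_j : 2 * ∑ j ∈ Finset.range (K - n), (j : ℤ)
      = ((K : ℤ) - n) * (((K : ℤ) - n) - 1) := by
    rw [sum_range_id_two (K - n), hcastKn]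
  rw [hB, hA2, hIccsum, hr]
  linear_combination hsum_j - hsum_i

noncomputable def Phi (n : ℕ) (c : ℕ →₀ ℕ) : KinkPairs n :=
  ⟨(Aset n c (Kc n c), Bset n c (Kc n c)),
    fun x hx => (Finset.mem_Icc.mp (Finset.mem_filter.mp hx).1).2,
    fun y hy => (Finset.mem_filter.mp hy).2,
    (key (validK_Kc n c)).1⟩

lemma coe_Phi_snd (n : ℕ) (c : ℕ →₀ ℕ) :
    ((Phi n c).val.2 : Set ℤ) = Set.range (dOf n c) ∩ {x | 1 ≤ x} :=
  coe_Bset (validK_Kc n c)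

lemma coe_Phi_fst (n : ℕ) (c : ℕ →₀ ℕ) :
    ((Phi n c).val.1 : Set ℤ) = {x | x ≤ 0} \ Set.range (dOf n c) :=
  coe_Aset (validK_Kc n c)

lemma range_dOf_eq (n : ℕ) (c : ℕ →₀ ℕ) :
    Set.range (dOf n c)
      = ↑((Phi n c).val.2) ∪ ({x : ℤ | x ≤ 0} \ ↑((Phi n c).val.1)) := by
  rw [coe_Phi_snd, coe_Phi_fst]
  ext x
  constructor
  · intro hx
    rcases le_or_gt 1 x with h | h
    · exact Or.inl ⟨hx, h⟩
    · exact Or.inr ⟨by simpa using by omega, fun h2 => h2.2 hx⟩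
  · rintro (⟨hx, _⟩ | ⟨hx1, hx2⟩)
    · exact hx
    · by_contra hnr
      exact hx2 ⟨hx1, hnr⟩

lemma strictAnti_range_unique {d e : ℕ → ℤ} (hd : StrictAnti d) (he : StrictAnti e)
    (h : Set.range d = Set.range e) : d = e := by
  funext i
  induction i using Nat.strong_induction_on with
  | _ i ih =>
    have h1 : d i ∈ Set.range e := h ▸ Set.mem_range_self i
    obtain ⟨j, hj⟩ := h1
    have h2 : e i ∈ Set.range d := h.symm ▸ Set.mem_range_self i
    obtain ⟨k, hk⟩ := h2
    have hdle : d i ≤ e i := by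
      rcases lt_or_ge j i with hji | hji
      · exfalso
        have := ih j hji
        have := hd hji
        omega
      · have := he.antitone hji
        omega
    have hedl : e i ≤ d i := by
      rcases lt_or_ge k i with hki | hki
      · exfalso
        have := ih k hki
        have := he hki
        omega
      · have := hd.antitone hki
        omega
    omega

lemma Phi_injective (n : ℕ) : Function.Injective (Phi n) := by
  intro c c' h
  have hd : dOf n c = dOf n c' :=
    strictAnti_range_unique (dOf_strictAnti n c) (dOf_strictAnti n c')
      (by rw [range_dOf_eq n c, range_dOf_eq n c', h])
  have hf : ∀ i, fOf c i = fOf c' i := by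
    intro i
    have h1 := congrFun hd i
    rw [dOf, dOf] at h1
    omega
  ext m
  have h1 := fOf_succ c m
  have h2 := fOf_succ c' m
  have h3 := hf m
  have h4 := hf (m + 1)
  omega

lemma Phi_surjective (n : ℕ) : Function.Surjective (Phi n) := by
  rintro ⟨⟨A, B⟩, hA', hB', hcard'⟩
  classical
  have hA : ∀ x ∈ A, x ≤ 0 := hA'
  have hB : ∀ y ∈ B, 1 ≤ y := hB'
  have hcard : B.card = A.card + n := hcard'
  set K : ℕ := n + 1 + A.sum (fun x => x.natAbs) with hKdef
  have hKn : n + 1 ≤ K := by omega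
  have hKZ : ((n : ℤ)) + 1 ≤ (K : ℤ) := by exact_mod_cast hKn
  have hAlow : ∀ x ∈ A, (n : ℤ) - K + 1 ≤ x := by
    intro x hx
    have h1 : x.natAbs ≤ A.sum (fun x => x.natAbs) :=
      Finset.single_le_sum (fun _ _ => Nat.zero_le _) hx
    have h1' : (x.natAbs : ℤ) ≤ ((A.sum fun x => x.natAbs : ℕ) : ℤ) := by exact_mod_cast h1
    have h2 : x ≤ 0 := hA x hx
    have hKZ2 : (K : ℤ) = (n : ℤ) + 1 + ((A.sum fun x => x.natAbs : ℕ) : ℤ) := by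
      rw [hKdef]; push_cast; ring
    omega
  set Icc0 : Finset ℤ := Finset.Icc ((n : ℤ) - K + 1) 0 with hIcc0
  have hIcc0card : Icc0.card = K - n := by
    rw [hIcc0, Int.card_Icc]; omega
  have hsubA : A ⊆ Icc0 := by
    intro x hx
    rw [hIcc0, Finset.mem_Icc]
    exact ⟨hAlow x hx, hA x hx⟩
  set D' : Finset ℤ := B ∪ (Icc0 \ A) with hD'
  have hdisj : Disjoint B (Icc0 \ A) := by
    rw [Finset.disjoint_left]
    intro x hx hx2
    have h1 := hB x hx
    have h2 := (Finset.mem_Icc.mp (Finset.mem_sdiff.mp hx2).1).2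
    omega
  have hD'card : D'.card = K := by
    rw [hD', Finset.card_union_of_disjoint hdisj, Finset.card_sdiff_of_subset hsubA, hIcc0card, hcard]
    have := Finset.card_le_card hsubA
    rw [hIcc0card] at this
    omega
  have hD'low : ∀ x ∈ D', (n : ℤ) - K + 1 ≤ x := by
    intro x hx
    rw [hD', Finset.mem_union] at hx
    rcases hx with hx | hx
    · have := hB x hx
      omega
    · exact (Finset.mem_Icc.mp (Finset.mem_sdiff.mp hx).1).1
  set iso := D'.orderIsoOfFin hD'card with hiso
  set d : ℕ → ℤ := fun i => if h : i < K then (iso ⟨K - 1 - i, by omega⟩ : ℤ) else (n : ℤ) - i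
    with hd
  have hd_lt : ∀ i (h : i < K), d i = (iso ⟨K - 1 - i, by omega⟩ : ℤ) := by
    intro i h
    rw [hd]
    exact dif_pos h
  have hd_ge : ∀ i, K ≤ i → d i = (n : ℤ) - i := by
    intro i h
    rw [hd]
    exact dif_neg (by omega)
  have hd_mem : ∀ i, i < K → d i ∈ D' := by
    intro i h
    rw [hd_lt i h]
    exact (iso _).2
  have hstrict : StrictAnti d := by
    apply strictAnti_nat_of_succ_lt
    intro i
    rcases lt_trichotomy (i + 1) K with h | h | h
    · rw [hd_lt i (by omega), hd_lt (i + 1) h]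
      have : (⟨K - 1 - (i + 1), by omega⟩ : Fin K) < ⟨K - 1 - i, by omega⟩ := by
        rw [Fin.mk_lt_mk]
        omega
      exact_mod_cast iso.strictMono this
    · rw [hd_ge (i + 1) (by omega)]
      rw [hd_lt i (by omega)]
      have h1 := hD'low _ (hd_mem i (by omega))
      rw [hd_lt i (by omega)] at h1
      omega
    · rw [hd_ge i (by omega), hd_ge (i + 1) (by omega)]
      push_cast
      omega
  have hrange : Set.range d = ↑D' ∪ {x : ℤ | x ≤ (n : ℤ) - K} := by
    ext x
    constructor
    · rintro ⟨i, rfl⟩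
      by_cases h : i < K
      · exact Or.inl (hd_mem i h)
      · right
        rw [hd_ge i (by omega)]
        have : (K : ℤ) ≤ (i : ℤ) := by exact_mod_cast (by omega : K ≤ i)
        simp only [Set.mem_setOf_eq]
        omega
    · rintro (hx | hx)
      · obtain ⟨j, hj⟩ := iso.surjective ⟨x, hx⟩
        refine ⟨K - 1 - j.1, ?_⟩
        rw [hd_lt (K - 1 - j.1) (by omega)]
        have hjj : (⟨K - 1 - (K - 1 - j.1), by omega⟩ : Fin K) = j := by
          rw [Fin.mk.injEq]
          omega
        rw [hjj, hj]
      · simp only [Set.mem_setOf_eq] at hx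
        refine ⟨((n : ℤ) - x).toNat, ?_⟩
        have h1 : (K : ℤ) ≤ (n : ℤ) - x := by omega
        have h2 : K ≤ ((n : ℤ) - x).toNat := by omega
        rw [hd_ge _ h2]
        have h3 : ((((n : ℤ) - x).toNat : ℕ) : ℤ) = (n : ℤ) - x := Int.toNat_of_nonneg (by omega)
        omega
  -- build the finsupp
  set c : ℕ →₀ ℕ := Finsupp.onFinset (Finset.range K) (fun m => (d m - d (m + 1) - 1).toNat)
    (by
      intro m hm
      have hm' : (d m - d (m + 1) - 1).toNat ≠ 0 := hm
      rw [Finset.mem_range]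
      by_contra h
      rw [hd_ge m (by omega), hd_ge (m + 1) (by omega)] at hm'
      apply hm'
      have heq : (n : ℤ) - m - ((n : ℤ) - ((m : ℕ) + 1 : ℕ)) - 1 = 0 := by push_cast; ring
      rw [heq]
      rfl) with hc
  have hc_apply : ∀ m, c m = (d m - d (m + 1) - 1).toNat := fun m => rfl
  have hc_zero : ∀ m, K ≤ m → c m = 0 := by
    intro m hm
    rw [hc_apply m, hd_ge m (by omega), hd_ge (m + 1) (by omega)]
    have : (n : ℤ) - m - ((n : ℤ) - (m + 1 : ℕ)) - 1 = 0 := by push_cast; ring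
    rw [this]
    rfl
  have hcZ : ∀ m, (c m : ℤ) = d m - d (m + 1) - 1 := by
    intro m
    rw [hc_apply m]
    exact Int.toNat_of_nonneg (by have := hstrict (lt_add_one m); omega)
  have hfd : ∀ j i, K ≤ i + j → (fOf c i : ℤ) = d i - ((n : ℤ) - i) := by
    intro j
    induction j with
    | zero =>
      intro i hi
      rw [fOf_eq_zero (fun m hm => hc_zero m (by omega)), hd_ge i (by omega)]
      push_cast
      ring
    | succ j ih =>
      intro i hi
      by_cases h : K ≤ i
      · rw [fOf_eq_zero (fun m hm => hc_zero m (by omega)), hd_ge i (by omega)]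
        push_cast
        ring
      · have h1 := fOf_succ c i
        have h2 := ih (i + 1) (by omega)
        have h3 := hcZ i
        have h4 : (fOf c i : ℤ) = (c i : ℤ) + (fOf c (i + 1) : ℤ) := by exact_mod_cast h1
        push_cast at h2 ⊢
        omega
  have hdOf : dOf n c = d := by
    funext i
    rw [dOf]
    have := hfd K i (by omega)
    omega
  refine ⟨c, Subtype.ext (Prod.ext ?_ ?_)⟩
  · -- Aset = A
    apply Finset.coe_injective
    have h1 := coe_Phi_fst n c
    rw [hdOf, hrange] at h1
    rw [show ((Phi n c).val.1 : Set ℤ) = _ from h1]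
    ext x
    simp only [Set.mem_diff, Set.mem_setOf_eq, Set.mem_union, Finset.mem_coe, not_or]
    constructor
    · rintro ⟨hx0, hxD, hxlow⟩
      have hxIcc : x ∈ Icc0 := by
        rw [hIcc0, Finset.mem_Icc]
        constructor
        · omega
        · exact hx0
      by_contra hxA
      exact hxD (by rw [hD']; exact Finset.mem_union_right _ (Finset.mem_sdiff.mpr ⟨hxIcc, hxA⟩))
    · intro hxA
      have hx0 := hA x hxA
      refine ⟨hx0, ?_, ?_⟩
      · intro hxD
        rw [hD', Finset.mem_union] at hxD
        rcases hxD with h | h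
        · have := hB x h
          omega
        · exact (Finset.mem_sdiff.mp h).2 hxA
      · have := hAlow x hxA
        omega
  · -- Bset = B
    apply Finset.coe_injective
    have h1 := coe_Phi_snd n c
    rw [hdOf, hrange] at h1
    rw [show ((Phi n c).val.2 : Set ℤ) = _ from h1]
    ext x
    simp only [Set.mem_inter_iff, Set.mem_union, Set.mem_setOf_eq, Finset.mem_coe]
    constructor
    · rintro ⟨hx | hx, hx1⟩
      · rw [hD', Finset.mem_union] at hx
        rcases hx with h | h
        · exact h
        · have := (Finset.mem_Icc.mp (Finset.mem_sdiff.mp h).1).2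
          omega
      · omega
    · intro hx
      exact ⟨Or.inl (by rw [hD']; exact Finset.mem_union_left _ hx), hB x hx⟩


noncomputable def kinkEquiv (n : ℕ) : (ℕ →₀ ℕ) ≃ KinkPairs n :=
  Equiv.ofBijective (Phi n) ⟨Phi_injective n, Phi_surjective n⟩

lemma kinkEquiv_apply (n : ℕ) (c : ℕ →₀ ℕ) : kinkEquiv n c = Phi n c := rfl

lemma kinkWeight_Phi {q : ℝ} (hq0 : 0 < q) (n : ℕ) (c : ℕ →₀ ℕ) :
    kinkWeight q (Phi n c) = q ^ (n * (n + 1)) * F (q ^ 2) c := by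
  rw [kinkWeight]
  show q ^ (2 * ((∑ y ∈ Bset n c (Kc n c), y) - ∑ x ∈ Aset n c (Kc n c), x)) = _
  rw [(key (validK_Kc n c)).2]
  have hcast : 2 * (wgt c : ℤ) + (n : ℤ) * ((n : ℤ) + 1)
      = ((2 * wgt c + n * (n + 1) : ℕ) : ℤ) := by push_cast; ring
  rw [hcast, zpow_natCast, pow_add, pow_mul, F, mul_comm]

end Stmt2Aux

open Stmt2Aux in
/-- the series `Z(n) = Σ_{(A,B)} q^{2(ΣB − ΣA)}` converges and equals
`q^{n(n+1)} / ∏_{m=1}^∞ (1 − q^{2m})`. -/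
theorem stmt2 (q : ℝ) (hq0 : 0 < q) (hq1 : q < 1) (n : ℕ) :
    Summable (fun p : KinkPairs n => kinkWeight q p) ∧
    (∑' p : KinkPairs n, kinkWeight q p)
      = q ^ (n * (n + 1)) / ∏' m : ℕ, (1 - q ^ (2 * (m + 1))) := by
  have ht0 : (0 : ℝ) ≤ q ^ 2 := sq_nonneg q
  have ht1 : q ^ 2 < 1 := by nlinarith
  set t : ℝ := q ^ 2 with htdef
  set L : ℝ := ∑' c : ℕ →₀ ℕ, F t c with hLdef
  have hL1 : 1 ≤ L := one_le_L ht0 ht1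
  have hLpos : 0 < L := lt_of_lt_of_le one_pos hL1
  have hpt : ∀ c : ℕ →₀ ℕ, kinkWeight q (kinkEquiv n c) = q ^ (n * (n + 1)) * F t c := by
    intro c
    rw [kinkEquiv_apply, kinkWeight_Phi hq0 n c]
  have hsum_c : Summable (fun c : ℕ →₀ ℕ => kinkWeight q (kinkEquiv n c)) := by
    refine Summable.congr ?_ (fun c => (hpt c).symm)
    exact (summable_F ht0 ht1).mul_left _
  have hsummable : Summable (fun p : KinkPairs n => kinkWeight q p) :=
    (Equiv.summable_iff (kinkEquiv n)).mp hsum_c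
  refine ⟨hsummable, ?_⟩
  have h1 : ∑' p : KinkPairs n, kinkWeight q p
      = ∑' c : ℕ →₀ ℕ, kinkWeight q (kinkEquiv n c) :=
    ((kinkEquiv n).tsum_eq (fun p => kinkWeight q p)).symm
  have h2 : ∑' c : ℕ →₀ ℕ, kinkWeight q (kinkEquiv n c) = q ^ (n * (n + 1)) * L := by
    rw [tsum_congr hpt, tsum_mul_left]
  have hprod : ∏' m : ℕ, (1 - q ^ (2 * (m + 1))) = L⁻¹ := by
    rw [← (hasProd_one_sub ht0 ht1).tprod_eq]
    apply tprod_congr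
    intro m
    rw [← pow_mul]
  rw [h1, h2, hprod, div_inv_eq_mul]
end

section
/- Fix q with 0 < q < 1 and let z ∈ ℂ with |z| < 1. Then the series Σ_{k=0}^∞ q^{k²} z^k / ((q;q)_k (z;q)_k) converges absolutely, and (z;q)_∞ · Σ_{k=0}^∞ q^{k²} z^k / ((q;q)_k (z;q)_k) = Σ_{k=0}^∞ (−1)^k q^{k(k−1)/2} z^k. -/
/-- The finite q-Pochhammer symbol `(a;q)_k = ∏_{j=0}^{k-1} (1 - a q^j)`. -/
noncomputable def qPoch (a q : ℂ) (k : ℕ) : ℂ := ∏ j ∈ Finset.range k, (1 - a * q ^ j)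

/-- The infinite q-Pochhammer symbol `(a;q)_∞ = ∏_{j=0}^{∞} (1 - a q^j)`. -/
noncomputable def qPochInf (a q : ℂ) : ℂ := ∏' j : ℕ, (1 - a * q ^ j)

namespace Stmt3Aux

open Finset Filter Topology

lemma qPoch_succ (a qc : ℂ) (k : ℕ) : qPoch a qc (k+1) = qPoch a qc k * (1 - a * qc ^ k) :=
  Finset.prod_range_succ _ _

variable {q : ℝ}

lemma norm_one_sub_ge (hq0 : 0 < q) (hq1 : q < 1) {a : ℂ} (ha : ‖a‖ < 1) (j : ℕ) :
    1 - ‖a‖ ≤ ‖1 - a * (q : ℂ) ^ j‖ := by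
  have h1 : ‖a * (q : ℂ) ^ j‖ = ‖a‖ * q ^ j := by
    rw [norm_mul, norm_pow, Complex.norm_real, Real.norm_eq_abs, abs_of_pos hq0]
  have h2 : ‖a‖ * q ^ j ≤ ‖a‖ := by
    have : q ^ j ≤ 1 := pow_le_one₀ hq0.le hq1.le
    nlinarith [norm_nonneg a, pow_pos hq0 j]
  calc 1 - ‖a‖ ≤ ‖(1:ℂ)‖ - ‖a * (q : ℂ) ^ j‖ := by rw [norm_one, h1]; linarith
  _ ≤ ‖1 - a * (q : ℂ) ^ j‖ := norm_sub_norm_le _ _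

lemma norm_qPoch_ge (hq0 : 0 < q) (hq1 : q < 1) {a : ℂ} (ha : ‖a‖ < 1) (k : ℕ) :
    (1 - ‖a‖) ^ k ≤ ‖qPoch a (q : ℂ) k‖ := by
  induction k with
  | zero => simp [qPoch]
  | succ k ih =>
    rw [qPoch_succ, norm_mul, pow_succ]
    have h1 := norm_one_sub_ge hq0 hq1 ha k
    have h2 : (0:ℝ) ≤ 1 - ‖a‖ := by linarith
    exact mul_le_mul ih h1 h2 (norm_nonneg _)

lemma qPoch_ne_zero (hq0 : 0 < q) (hq1 : q < 1) {a : ℂ} (ha : ‖a‖ < 1) (k : ℕ) :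
    qPoch a (q : ℂ) k ≠ 0 := by
  intro h
  have := norm_qPoch_ge hq0 hq1 ha k
  rw [h, norm_zero] at this
  have h2 : (0:ℝ) < 1 - ‖a‖ := by linarith
  exact absurd this (not_le.2 (pow_pos h2 k))

lemma normq_lt (hq0 : 0 < q) (hq1 : q < 1) : ‖(q:ℂ)‖ < 1 := by
  rw [Complex.norm_real, Real.norm_eq_abs, abs_of_pos hq0]; exact hq1

/-- `P q k = (q;q)_k`. -/
noncomputable def P (q : ℝ) (k : ℕ) : ℂ := qPoch (q : ℂ) (q : ℂ) k

lemma P_ne_zero (hq0 : 0 < q) (hq1 : q < 1) (k : ℕ) : P q k ≠ 0 :=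
  qPoch_ne_zero hq0 hq1 (normq_lt hq0 hq1) k

lemma norm_P_ge (hq0 : 0 < q) (hq1 : q < 1) (k : ℕ) : (1 - q) ^ k ≤ ‖P q k‖ := by
  have := norm_qPoch_ge hq0 hq1 (normq_lt hq0 hq1) k
  rwa [Complex.norm_real, Real.norm_eq_abs, abs_of_pos hq0] at this

lemma P_succ (k : ℕ) : P q (k+1) = P q k * (1 - (q:ℂ)^(k+1)) := by
  rw [P, qPoch_succ, ← P]
  congr 1
  rw [pow_succ']

lemma one_sub_pow_ne (hq0 : 0 < q) (hq1 : q < 1) (k : ℕ) (hk : 1 ≤ k) :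
    (1 : ℂ) - (q:ℂ)^k ≠ 0 := by
  intro h
  have h2 : (q:ℂ)^k = 1 := by linear_combination -h
  have h3 : ‖(q:ℂ)^k‖ = 1 := by rw [h2, norm_one]
  rw [norm_pow, Complex.norm_real, Real.norm_eq_abs, abs_of_pos hq0] at h3
  have : q ^ k < 1 := pow_lt_one₀ hq0.le hq1 (by omega)
  linarith

lemma choose2_succ (m : ℕ) : (m+1).choose 2 = m.choose 2 + m := by
  rw [Nat.choose_succ_succ]
  simp [Nat.choose_one_right, Nat.add_comm]

lemma ch1 (k : ℕ) : k.choose 2 + (k+1).choose 2 = k^2 := by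
  induction k with
  | zero => simp
  | succ k ih =>
    have h1 := choose2_succ k
    have h2 := choose2_succ (k+1)
    have : (k+1)^2 = k^2 + 2*k + 1 := by ring
    omega

lemma ch2 (a b : ℕ) : (a+b).choose 2 = a.choose 2 + a*b + b.choose 2 := by
  have h : ((((a+b).choose 2 : ℕ)) : ℚ) = ((a.choose 2 + a*b + b.choose 2 : ℕ) : ℚ) := by
    push_cast [Nat.cast_choose_two]
    ring
  exact_mod_cast h

lemma exp_lemma {n k : ℕ} (hk : k ≤ n) :
    k^2 + k*(n-k) + (n-k).choose 2 = n.choose 2 + (k+1).choose 2 := by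
  obtain ⟨m, rfl⟩ := Nat.exists_eq_add_of_le hk
  rw [Nat.add_sub_cancel_left, ch2 k m, ← ch1 k]
  ring


lemma summable_aux (hq0 : 0 < q) (hq1 : q < 1) (C : ℝ) (hC : 0 < C) :
    Summable (fun m : ℕ => q ^ (m.choose 2) * C ^ m) := by
  have hterm : ∀ m : ℕ, (0:ℝ) < q ^ (m.choose 2) * C ^ m :=
    fun m => mul_pos (pow_pos hq0 _) (pow_pos hC _)
  apply summable_of_ratio_test_tendsto_lt_one (l := 0) one_pos
    (Eventually.of_forall fun m => (hterm m).ne')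
  have hratio : ∀ m : ℕ, ‖q ^ ((m+1).choose 2) * C ^ (m+1)‖ / ‖q ^ (m.choose 2) * C ^ m‖
      = q ^ m * C := by
    intro m
    rw [Real.norm_of_nonneg (hterm (m+1)).le, Real.norm_of_nonneg (hterm m).le,
      choose2_succ, pow_add, pow_succ]
    field_simp
  simp only [hratio]
  have := (tendsto_pow_atTop_nhds_zero_of_lt_one hq0.le hq1).mul_const C
  simpa using this


/-- coefficients of Euler's series. -/
noncomputable def c (q : ℝ) (m : ℕ) : ℂ := (-1)^m * (q:ℂ)^(m.choose 2) / P q m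

/-- Euler's series `E q a = Σ c_m a^m`; we will show it equals `(a;q)_∞`. -/
noncomputable def E (q : ℝ) (a : ℂ) : ℂ := ∑' m : ℕ, c q m * a ^ m

lemma norm_c_le (hq0 : 0 < q) (hq1 : q < 1) (m : ℕ) :
    ‖c q m‖ ≤ q ^ (m.choose 2) * (1/(1-q)) ^ m := by
  have h1q : (0:ℝ) < 1 - q := by linarith
  have hP := norm_P_ge hq0 hq1 m
  have hPpos : (0:ℝ) < ‖P q m‖ := lt_of_lt_of_le (pow_pos h1q m) hP
  have hnum : ‖(-1:ℂ)^m * (q:ℂ)^(m.choose 2)‖ = q ^ (m.choose 2) := by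
    rw [norm_mul, norm_pow, norm_pow, norm_neg, norm_one, one_pow, one_mul,
      Complex.norm_real, Real.norm_eq_abs, abs_of_pos hq0]
  rw [c, norm_div, hnum]
  rw [div_le_iff₀ hPpos]
  calc q ^ (m.choose 2) = (q ^ (m.choose 2) * (1/(1-q))^m) * (1-q)^m := by
        field_simp
        rw [← mul_pow, one_div, inv_mul_cancel₀ h1q.ne', one_pow]
  _ ≤ (q ^ (m.choose 2) * (1/(1-q))^m) * ‖P q m‖ := by
        apply mul_le_mul_of_nonneg_left hP
        positivity

lemma summable_cE (hq0 : 0 < q) (hq1 : q < 1) (r : ℝ) (hr : 0 ≤ r) :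
    Summable (fun m : ℕ => ‖c q m‖ * r ^ m) := by
  have h1q : (0:ℝ) < 1 - q := by linarith
  have hle : ∀ m : ℕ, ‖c q m‖ * r ^ m ≤ q ^ (m.choose 2) * ((r+1)/(1-q)) ^ m := by
    intro m
    have h1 : ‖c q m‖ * r ^ m ≤ (q ^ (m.choose 2) * (1/(1-q))^m) * (r+1) ^ m :=
      mul_le_mul (norm_c_le hq0 hq1 m) (pow_le_pow_left₀ hr (by linarith) m)
        (by positivity) (by positivity)
    calc ‖c q m‖ * r ^ m ≤ (q ^ (m.choose 2) * (1/(1-q))^m) * (r+1) ^ m := h1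
    _ = q ^ (m.choose 2) * ((r+1)/(1-q)) ^ m := by
        rw [div_pow, div_pow, one_pow]
        ring
  exact Summable.of_nonneg_of_le (fun m => by positivity) hle
    (summable_aux hq0 hq1 _ (by positivity))

lemma summable_E_norm (hq0 : 0 < q) (hq1 : q < 1) (a : ℂ) :
    Summable (fun m : ℕ => ‖c q m * a ^ m‖) := by
  simpa only [norm_mul, norm_pow] using summable_cE hq0 hq1 ‖a‖ (norm_nonneg a)

lemma summable_E (hq0 : 0 < q) (hq1 : q < 1) (a : ℂ) :
    Summable (fun m : ℕ => c q m * a ^ m) :=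
  (summable_E_norm hq0 hq1 a).of_norm

lemma c_zero : c q 0 = 1 := by simp [c, P, qPoch]

lemma c_key (hq0 : 0 < q) (hq1 : q < 1) (m : ℕ) :
    c q (m+1) * (1 - (q:ℂ)^(m+1)) = -(c q m * (q:ℂ)^m) := by
  have hPm := P_ne_zero hq0 hq1 m
  have h1 : (1:ℂ) - (q:ℂ)^(m+1) ≠ 0 := one_sub_pow_ne hq0 hq1 (m+1) (by omega)
  rw [c, c, P_succ, choose2_succ, pow_add]
  field_simp
  ring

lemma E_funceq (hq0 : 0 < q) (hq1 : q < 1) (a : ℂ) :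
    E q a = (1 - a) * E q ((q:ℂ) * a) := by
  have hs1 := summable_E hq0 hq1 a
  have hs2 := summable_E hq0 hq1 ((q:ℂ) * a)
  have hdiff : (fun m => c q m * a^m - c q m * ((q:ℂ)*a)^m)
      = fun m => (c q m * (1 - (q:ℂ)^m)) * a^m := by
    funext m; rw [mul_pow]; ring
  have hsh : Summable (fun m => (c q m * (1 - (q:ℂ)^m)) * a^m) := by
    rw [← hdiff]; exact hs1.sub hs2
  have h1 : E q a - E q ((q:ℂ)*a) = ∑' m, (c q m * (1 - (q:ℂ)^m)) * a^m := by
    rw [E, E, ← Summable.tsum_sub hs1 hs2, ← hdiff]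
  have h2 : ∑' m, (c q m * (1 - (q:ℂ)^m)) * a^m
      = ∑' m, -(a * (c q m * ((q:ℂ)*a)^m)) := by
    rw [Summable.tsum_eq_zero_add hsh]
    have hz : (c q 0 * (1 - (q:ℂ)^0)) * a^0 = 0 := by simp
    rw [hz, zero_add]
    apply tsum_congr
    intro m
    rw [c_key hq0 hq1 m, mul_pow]
    ring
  have h3 : ∑' m, -(a * (c q m * ((q:ℂ)*a)^m)) = -(a * E q ((q:ℂ)*a)) := by
    rw [tsum_neg, tsum_mul_left, E]
  have := h1.trans (h2.trans h3)
  linear_combination this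

lemma E_iterate (hq0 : 0 < q) (hq1 : q < 1) (a : ℂ) (n : ℕ) :
    E q a = qPoch a (q:ℂ) n * E q (a * (q:ℂ)^n) := by
  induction n with
  | zero => simp [qPoch]
  | succ n ih =>
    rw [ih, qPoch_succ, E_funceq hq0 hq1 (a * (q:ℂ)^n),
      show (q:ℂ) * (a * (q:ℂ)^n) = a * (q:ℂ)^(n+1) by ring]
    ring


lemma one_sub_mul_ne (hq0 : 0 < q) (hq1 : q < 1) {z : ℂ} (hz : ‖z‖ < 1) (n : ℕ) :
    (1:ℂ) - z * (q:ℂ)^n ≠ 0 := by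
  intro h
  have h1 : ‖z * (q:ℂ)^n‖ < 1 := by
    rw [norm_mul, norm_pow, Complex.norm_real, Real.norm_eq_abs, abs_of_pos hq0]
    have hqn : q ^ n ≤ 1 := pow_le_one₀ hq0.le hq1.le
    nlinarith [norm_nonneg z, pow_pos hq0 n]
  have h2 : z * (q:ℂ)^n = 1 := by linear_combination -h
  rw [h2, norm_one] at h1
  exact lt_irrefl _ h1

lemma multipliable_qPochInf (hq0 : 0 < q) (hq1 : q < 1) {z : ℂ} (hz : ‖z‖ < 1) :
    Multipliable (fun n : ℕ => 1 - z * (q:ℂ)^n) := by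
  have h1z : (0:ℝ) < 1 - ‖z‖ := by linarith
  refine Complex.multipliable_of_summable_log ?_
  set D : ℝ := ‖z‖^2 * (1-‖z‖)⁻¹ / 2 + ‖z‖ with hD
  apply Summable.of_norm_bounded (g := fun n => D * q ^ n)
  · exact (summable_geometric_of_lt_one hq0.le hq1).mul_left D
  · intro n
    have hnw : ‖-(z * (q:ℂ)^n)‖ = ‖z‖ * q^n := by
      rw [norm_neg, norm_mul, norm_pow, Complex.norm_real, Real.norm_eq_abs, abs_of_pos hq0]
    have hqn1 : q ^ n ≤ 1 := pow_le_one₀ hq0.le hq1.le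
    have hqnpos : (0:ℝ) < q ^ n := pow_pos hq0 n
    have hwlt : ‖-(z * (q:ℂ)^n)‖ < 1 := by
      rw [hnw]; nlinarith [norm_nonneg z]
    have hb := Complex.norm_log_one_add_le hwlt
    rw [show (1:ℂ) + -(z * (q:ℂ)^n) = 1 - z * (q:ℂ)^n by ring] at hb
    apply hb.trans
    rw [hnw]
    have hinv : (1 - ‖z‖ * q^n)⁻¹ ≤ (1 - ‖z‖)⁻¹ := by
      apply inv_anti₀ h1z
      nlinarith [norm_nonneg z]
    have h2 : (‖z‖ * q^n)^2 * (1 - ‖z‖*q^n)⁻¹ / 2 ≤ (‖z‖^2 * (1-‖z‖)⁻¹ / 2) * q^n := by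
      have e1 : (‖z‖ * q^n)^2 = ‖z‖^2 * q^n * q^n := by ring
      rw [e1]
      have h3 : ‖z‖^2 * q^n * q^n * (1 - ‖z‖*q^n)⁻¹ ≤ ‖z‖^2 * q^n * 1 * (1-‖z‖)⁻¹ := by
        apply mul_le_mul
        · nlinarith [norm_nonneg z, sq_nonneg ‖z‖]
        · exact hinv
        · have hpos : (0:ℝ) < 1 - ‖z‖ * q^n := by nlinarith [norm_nonneg z]
          positivity
        · positivity
      linarith
    calc (‖z‖ * q^n)^2 * (1 - ‖z‖*q^n)⁻¹ / 2 + ‖z‖ * q^n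
        ≤ (‖z‖^2 * (1-‖z‖)⁻¹ / 2) * q^n + ‖z‖ * q^n := by linarith
    _ = D * q^n := by rw [hD]; ring

lemma tendsto_E (hq0 : 0 < q) (hq1 : q < 1) (a : ℂ) :
    Tendsto (fun n : ℕ => E q (a * (q:ℂ)^n)) atTop (𝓝 1) := by
  set K : ℝ := ∑' m : ℕ, ‖c q (m+1)‖ * (‖a‖+1) ^ m with hK
  have hsumK : Summable (fun m : ℕ => ‖c q (m+1)‖ * (‖a‖+1) ^ m) := by
    have h1 : Summable (fun m : ℕ => ‖c q (m+1)‖ * (‖a‖+1) ^ (m+1)) := by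
      apply ((summable_cE hq0 hq1 (‖a‖+1) (by positivity)).comp_injective
        (add_left_injective 1)).congr
      intro m
      rfl
    apply (h1.mul_left ((‖a‖+1)⁻¹)).congr
    intro m
    have hr : (‖a‖:ℝ) + 1 ≠ 0 := by positivity
    field_simp
    ring
  have hbound : ∀ n : ℕ, ‖E q (a * (q:ℂ)^n) - 1‖ ≤ (‖a‖ * K) * q ^ n := by
    intro n
    set b : ℂ := a * (q:ℂ)^n with hb
    have hnb : ‖b‖ = ‖a‖ * q ^ n := by
      rw [hb, norm_mul, norm_pow, Complex.norm_real, Real.norm_eq_abs, abs_of_pos hq0]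
    have h1 : E q b - 1 = ∑' m : ℕ, c q (m+1) * b^(m+1) := by
      rw [E, Summable.tsum_eq_zero_add (summable_E hq0 hq1 b), c_zero]
      ring
    rw [h1]
    have hsn : Summable (fun m : ℕ => ‖c q (m+1) * b^(m+1)‖) := by
      apply ((summable_E_norm hq0 hq1 b).comp_injective (add_left_injective 1)).congr
      intro m
      rfl
    apply (norm_tsum_le_tsum_norm hsn).trans
    have hper : ∀ m : ℕ, ‖c q (m+1) * b^(m+1)‖
        ≤ (‖a‖ * q^n) * (‖c q (m+1)‖ * (‖a‖+1) ^ m) := by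
      intro m
      rw [norm_mul, norm_pow, pow_succ, hnb]
      have hba : ‖a‖ * q^n ≤ ‖a‖ := by
        have : q ^ n ≤ 1 := pow_le_one₀ hq0.le hq1.le
        nlinarith [norm_nonneg a, pow_pos hq0 n]
      have h2 : (‖a‖ * q^n)^m ≤ (‖a‖+1)^m := by
        apply pow_le_pow_left₀ (by positivity)
        linarith
      calc ‖c q (m+1)‖ * ((‖a‖ * q^n)^m * (‖a‖ * q^n))
          ≤ ‖c q (m+1)‖ * ((‖a‖+1)^m * (‖a‖ * q^n)) := by
            apply mul_le_mul_of_nonneg_left _ (norm_nonneg _)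
            apply mul_le_mul_of_nonneg_right h2 (by positivity)
      _ = (‖a‖ * q^n) * (‖c q (m+1)‖ * (‖a‖+1) ^ m) := by ring
    calc ∑' m : ℕ, ‖c q (m+1) * b^(m+1)‖
        ≤ ∑' m : ℕ, (‖a‖ * q^n) * (‖c q (m+1)‖ * (‖a‖+1) ^ m) :=
          Summable.tsum_le_tsum hper hsn (hsumK.mul_left _)
    _ = (‖a‖ * q^n) * K := by rw [tsum_mul_left]
    _ = (‖a‖ * K) * q^n := by ring
  have h0 : Tendsto (fun n : ℕ => E q (a * (q:ℂ)^n) - 1) atTop (𝓝 0) := by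
    apply squeeze_zero_norm hbound
    have := (tendsto_pow_atTop_nhds_zero_of_lt_one hq0.le hq1).const_mul (‖a‖ * K)
    simpa using this
  have := h0.add_const 1
  simpa using this

lemma qPochInf_eq_E (hq0 : 0 < q) (hq1 : q < 1) {z : ℂ} (hz : ‖z‖ < 1) :
    qPochInf z (q:ℂ) = E q z := by
  have hm := multipliable_qPochInf hq0 hq1 hz
  have h1 : Tendsto (fun n : ℕ => qPoch z (q:ℂ) n) atTop (𝓝 (qPochInf z (q:ℂ))) :=
    hm.hasProd.tendsto_prod_nat
  have h2 : Tendsto (fun n : ℕ => qPoch z (q:ℂ) n * E q (z * (q:ℂ)^n)) atTop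
      (𝓝 (qPochInf z (q:ℂ) * 1)) := h1.mul (tendsto_E hq0 hq1 z)
  have h3 : (fun n : ℕ => qPoch z (q:ℂ) n * E q (z * (q:ℂ)^n)) = fun _ => E q z :=
    funext fun n => (E_iterate hq0 hq1 z n).symm
  rw [h3] at h2
  have h4 := tendsto_nhds_unique h2 tendsto_const_nhds
  rw [mul_one] at h4
  exact h4


/-- Gaussian binomial (as a ratio), totalized to 0 for `k > n`. -/
noncomputable def B (q : ℝ) (n k : ℕ) : ℂ := if k ≤ n then P q n / (P q k * P q (n-k)) else 0

lemma B_zero (hq0 : 0 < q) (hq1 : q < 1) (n : ℕ) : B q n 0 = 1 := by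
  rw [B, if_pos (Nat.zero_le n)]
  have h0 : P q 0 = 1 := by simp [P, qPoch]
  rw [Nat.sub_zero, h0, one_mul, div_self (P_ne_zero hq0 hq1 n)]

lemma B_self (hq0 : 0 < q) (hq1 : q < 1) (n : ℕ) : B q n n = 1 := by
  rw [B, if_pos le_rfl]
  have h0 : P q 0 = 1 := by simp [P, qPoch]
  rw [Nat.sub_self, h0, mul_one, div_self (P_ne_zero hq0 hq1 n)]

lemma pascal (hq0 : 0 < q) (hq1 : q < 1) (n k : ℕ) (hk : k ≤ n) :
    B q (n+1) (k+1) = B q n (k+1) + (q:ℂ)^(n-k) * B q n k := by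
  rcases eq_or_lt_of_le hk with rfl | hlt
  · rw [B_self hq0 hq1, Nat.sub_self, pow_zero, one_mul, B_self hq0 hq1,
      B, if_neg (by omega)]
    ring
  · -- k + 1 ≤ n
    have hk1 : k + 1 ≤ n := hlt
    rw [B, if_pos (by omega), B, if_pos hk1, B, if_pos hk]
    have e1 : n + 1 - (k+1) = n - k := by omega
    have e2 : n - k = (n - (k+1)) + 1 := by omega
    rw [e1, P_succ n, e2, P_succ (n - (k+1)), P_succ k]
    have hx := P_ne_zero hq0 hq1 k
    have hy := P_ne_zero hq0 hq1 (n - (k+1))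
    have hn := P_ne_zero hq0 hq1 n
    have h1 : (1:ℂ) - (q:ℂ)^(k+1) ≠ 0 := one_sub_pow_ne hq0 hq1 (k+1) (by omega)
    have h2 : (1:ℂ) - (q:ℂ)^(n - (k+1) + 1) ≠ 0 := one_sub_pow_ne hq0 hq1 _ (by omega)
    have hqexp : (q:ℂ)^(n+1) = (q:ℂ)^(n - (k+1) + 1) * (q:ℂ)^(k+1) := by
      rw [← pow_add]
      congr 1
      omega
    rw [hqexp]
    field_simp
    ring

/-- the coefficient `w k = (-1)^k q^{k(k+1)/2}`. -/
noncomputable def w (q : ℝ) (k : ℕ) : ℂ := (-1)^k * (q:ℂ)^((k+1).choose 2)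

lemma w_zero : w q 0 = 1 := by simp [w]

lemma w_succ (n k : ℕ) (hk : k ≤ n) :
    w q (k+1) * (q:ℂ)^(n-k) = -((q:ℂ)^(n+1) * w q k) := by
  rw [w, w]
  have h1 : (k+2).choose 2 = (k+1).choose 2 + (k+1) := choose2_succ (k+1)
  have h2 : (q:ℂ)^((k+2).choose 2) * (q:ℂ)^(n-k)
      = (q:ℂ)^((k+1).choose 2) * (q:ℂ)^(n+1) := by
    rw [← pow_add, ← pow_add]
    congr 1
    omega
  calc (-1:ℂ)^(k+1) * (q:ℂ)^((k+2).choose 2) * (q:ℂ)^(n-k)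
      = ((-1:ℂ)^(k+1)) * ((q:ℂ)^((k+2).choose 2) * (q:ℂ)^(n-k)) := by ring
  _ = ((-1:ℂ)^(k+1)) * ((q:ℂ)^((k+1).choose 2) * (q:ℂ)^(n+1)) := by rw [h2]
  _ = -((q:ℂ)^(n+1) * ((-1:ℂ)^k * (q:ℂ)^((k+1).choose 2))) := by
      rw [pow_succ]
      ring

lemma T_eq (hq0 : 0 < q) (hq1 : q < 1) (n : ℕ) :
    ∑ k ∈ range (n+1), w q k * B q n k = P q n := by
  induction n with
  | zero =>
    simp [w_zero, B_zero hq0 hq1, P, qPoch]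
  | succ n ih =>
    rw [Finset.sum_range_succ' (fun k => w q k * B q (n+1) k) (n+1)]
    have hstep : ∀ k ∈ range (n+1), w q (k+1) * B q (n+1) (k+1)
        = w q (k+1) * B q n (k+1) + (-((q:ℂ)^(n+1))) * (w q k * B q n k) := by
      intro k hk
      rw [Finset.mem_range] at hk
      have hkn : k ≤ n := by omega
      rw [pascal hq0 hq1 n k hkn, mul_add]
      congr 1
      rw [← mul_assoc, w_succ n k hkn]
      ring
    rw [Finset.sum_congr rfl hstep, Finset.sum_add_distrib, ← Finset.mul_sum, ih]
    have hA : ∑ k ∈ range (n+1), w q (k+1) * B q n (k+1)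
        = ∑ k ∈ range (n+2), w q k * B q n k - w q 0 * B q n 0 := by
      rw [Finset.sum_range_succ' (fun k => w q k * B q n k) (n+1)]
      ring
    have hB : ∑ k ∈ range (n+2), w q k * B q n k = P q n := by
      rw [Finset.sum_range_succ, ih, B, if_neg (by omega)]
      ring
    rw [hA, hB, w_zero, B_zero hq0 hq1 n, B_zero hq0 hq1 (n+1), P_succ]
    ring

lemma S_eq (hq0 : 0 < q) (hq1 : q < 1) (n : ℕ) :
    ∑ k ∈ range (n+1), w q k / (P q k * P q (n-k)) = 1 := by
  have h := T_eq hq0 hq1 n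
  have hPn := P_ne_zero hq0 hq1 n
  have h2 : ∑ k ∈ range (n+1), w q k * B q n k
      = (∑ k ∈ range (n+1), w q k / (P q k * P q (n-k))) * P q n := by
    rw [Finset.sum_mul]
    apply Finset.sum_congr rfl
    intro k hk
    rw [Finset.mem_range] at hk
    rw [B, if_pos (by omega)]
    ring
  rw [h2] at h
  field_simp at h
  exact h


lemma tsum_prod_antidiag (F : ℕ × ℕ → ℂ) (h : Summable F) :
    ∑' p : ℕ × ℕ, F p = ∑' n : ℕ, ∑ k ∈ range (n+1), F (k, n-k) := by
  have h2 : Summable fun x : Σ n : ℕ, antidiagonal n => F (x.2 : ℕ × ℕ) :=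
    Finset.HasAntidiagonal.sigmaAntidiagonalEquivProd.summable_iff.mpr h
  calc ∑' p : ℕ × ℕ, F p
      = ∑' x : Σ n : ℕ, antidiagonal n, F (Finset.HasAntidiagonal.sigmaAntidiagonalEquivProd x) :=
        (Finset.HasAntidiagonal.sigmaAntidiagonalEquivProd.tsum_eq F).symm
  _ = ∑' n : ℕ, ∑' p : antidiagonal n, F p :=
        Summable.tsum_sigma' (fun n => (hasSum_fintype _).summable) h2
  _ = ∑' n : ℕ, ∑ p ∈ antidiagonal n, F p := by
        apply tsum_congr
        intro n
        rw [tsum_fintype]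
        exact Finset.sum_coe_sort _ _
  _ = ∑' n : ℕ, ∑ k ∈ range (n+1), F (k, n-k) :=
        tsum_congr fun n => Finset.Nat.sum_antidiagonal_eq_sum_range_succ_mk _ n

/-- the double-sum term. -/
noncomputable def Fz (q : ℝ) (z : ℂ) (p : ℕ × ℕ) : ℂ :=
  ((q:ℂ)^(p.1^2) * z^p.1 / P q p.1) * (c q p.2 * (z * (q:ℂ)^p.1)^p.2)

lemma diag_sum (hq0 : 0 < q) (hq1 : q < 1) (z : ℂ) (n : ℕ) :
    ∑ k ∈ range (n+1), Fz q z (k, n-k) = (-1:ℂ)^n * (q:ℂ)^(n.choose 2) * z^n := by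
  have hterm : ∀ k ∈ range (n+1), Fz q z (k, n-k)
      = ((-1:ℂ)^n * (q:ℂ)^(n.choose 2) * z^n) * (w q k / (P q k * P q (n-k))) := by
    intro k hk
    rw [Finset.mem_range] at hk
    have hkn : k ≤ n := by omega
    have h1 : (-1:ℂ)^(n-k) * (-1:ℂ)^k = (-1:ℂ)^n := by
      rw [← pow_add]; congr 1; omega
    have h2 : ((-1:ℂ))^k * (-1:ℂ)^k = 1 := by
      rw [← pow_add, show k + k = 2*k by ring, pow_mul]; norm_num
    have hsign : (-1:ℂ)^(n-k) = (-1:ℂ)^n * (-1:ℂ)^k := by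
      linear_combination ((-1:ℂ)^k) * h1 + (-((-1:ℂ)^(n-k))) * h2
    have hexp : (q:ℂ)^(k^2) * ((q:ℂ)^k)^(n-k) * (q:ℂ)^((n-k).choose 2)
        = (q:ℂ)^(n.choose 2) * (q:ℂ)^((k+1).choose 2) := by
      rw [← pow_mul, ← pow_add, ← pow_add, ← pow_add]
      congr 1
      exact exp_lemma hkn
    have hz2 : z^k * z^(n-k) = z^n := by
      rw [← pow_add]; congr 1; omega
    simp only [Fz, c, w, mul_pow]
    calc ((q:ℂ)^(k^2) * z^k / P q k) *
          ((-1:ℂ)^(n-k) * (q:ℂ)^((n-k).choose 2) / P q (n-k) * (z^(n-k) * ((q:ℂ)^k)^(n-k)))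
        = ((-1:ℂ)^(n-k) * ((q:ℂ)^(k^2) * ((q:ℂ)^k)^(n-k) * (q:ℂ)^((n-k).choose 2))
            * (z^k * z^(n-k))) / (P q k * P q (n-k)) := by ring
    _ = (((-1:ℂ)^n * (-1:ℂ)^k) * ((q:ℂ)^(n.choose 2) * (q:ℂ)^((k+1).choose 2)) * z^n)
          / (P q k * P q (n-k)) := by rw [hsign, hexp, hz2]
    _ = ((-1:ℂ)^n * (q:ℂ)^(n.choose 2) * z^n) *
          ((-1:ℂ)^k * (q:ℂ)^((k+1).choose 2) / (P q k * P q (n-k))) := by ring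
  rw [Finset.sum_congr rfl hterm, ← Finset.mul_sum, S_eq hq0 hq1 n, mul_one]

end Stmt3Aux


open Stmt3Aux Finset in
lemma part1 (q : ℝ) (hq0 : 0 < q) (hq1 : q < 1) (z : ℂ) (hz : ‖z‖ < 1) :
    Summable (fun k : ℕ =>
      ‖(q : ℂ) ^ (k ^ 2) * z ^ k / (qPoch (q : ℂ) (q : ℂ) k * qPoch z (q : ℂ) k)‖) := by
  have h1q : (0:ℝ) < 1 - q := by linarith
  have h1z : (0:ℝ) < 1 - ‖z‖ := by linarith
  have hZn : ∀ k, (1-‖z‖)^k ≤ ‖qPoch z (q:ℂ) k‖ := norm_qPoch_ge hq0 hq1 hz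
  have hPdef : ∀ k, qPoch (q:ℂ) (q:ℂ) k = P q k := fun _ => rfl
  have hchoose_le : ∀ k : ℕ, k.choose 2 ≤ k^2 := fun k => by have := ch1 k; omega
  have hqle : ∀ k : ℕ, q^(k^2) ≤ q^(k.choose 2) :=
    fun k => pow_le_pow_of_le_one hq0.le hq1.le (hchoose_le k)
  have hC1pos : (0:ℝ) < (‖z‖+1)/((1-q)*(1-‖z‖)) := by positivity
  have hle : ∀ k : ℕ, ‖(q : ℂ) ^ (k ^ 2) * z ^ k / (qPoch (q:ℂ) (q:ℂ) k * qPoch z (q:ℂ) k)‖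
      ≤ q^(k.choose 2) * ((‖z‖+1)/((1-q)*(1-‖z‖)))^k := by
    intro k
    have hnorm_eq : ‖(q : ℂ) ^ (k ^ 2) * z ^ k / (qPoch (q:ℂ) (q:ℂ) k * qPoch z (q:ℂ) k)‖
        = q^(k^2) * ‖z‖^k / (‖P q k‖ * ‖qPoch z (q:ℂ) k‖) := by
      rw [norm_div, norm_mul, norm_mul, norm_pow, norm_pow, Complex.norm_real,
        Real.norm_eq_abs, abs_of_pos hq0, hPdef]
    rw [hnorm_eq]
    have hd1 : (0:ℝ) < (1-q)^k * (1-‖z‖)^k := by positivity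
    have hdle : (1-q)^k * (1-‖z‖)^k ≤ ‖P q k‖ * ‖qPoch z (q:ℂ) k‖ :=
      mul_le_mul (norm_P_ge hq0 hq1 k) (hZn k) (by positivity) (norm_nonneg _)
    have hnum : q^(k^2) * ‖z‖^k ≤ q^(k.choose 2) * (‖z‖+1)^k :=
      mul_le_mul (hqle k) (pow_le_pow_left₀ (norm_nonneg z) (by linarith) k)
        (by positivity) (by positivity)
    calc q^(k^2) * ‖z‖^k / (‖P q k‖ * ‖qPoch z (q:ℂ) k‖)
        ≤ (q^(k.choose 2) * (‖z‖+1)^k) / ((1-q)^k * (1-‖z‖)^k) :=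
          div_le_div₀ (by positivity) hnum hd1 hdle
    _ = q^(k.choose 2) * ((‖z‖+1)/((1-q)*(1-‖z‖)))^k := by
          rw [div_pow, mul_pow]
          ring
  exact Summable.of_nonneg_of_le (fun k => norm_nonneg _) hle
    (summable_aux hq0 hq1 _ hC1pos)

open Stmt3Aux Finset in
set_option maxHeartbeats 1000000 in
/-- for `0 < q < 1` and `|z| < 1`, the series
`Σ_k q^{k²} z^k / ((q;q)_k (z;q)_k)` converges absolutely and
`(z;q)_∞ · Σ_k q^{k²} z^k / ((q;q)_k (z;q)_k) = Σ_k (−1)^k q^{k(k−1)/2} z^k`. -/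
theorem stmt3 (q : ℝ) (hq0 : 0 < q) (hq1 : q < 1) (z : ℂ) (hz : ‖z‖ < 1) :
    Summable (fun k : ℕ =>
      ‖(q : ℂ) ^ (k ^ 2) * z ^ k / (qPoch (q : ℂ) (q : ℂ) k * qPoch z (q : ℂ) k)‖) ∧
    qPochInf z (q : ℂ) *
        ∑' k : ℕ, (q : ℂ) ^ (k ^ 2) * z ^ k / (qPoch (q : ℂ) (q : ℂ) k * qPoch z (q : ℂ) k)
      = ∑' k : ℕ, (-1 : ℂ) ^ k * (q : ℂ) ^ (k * (k - 1) / 2) * z ^ k := by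
  refine ⟨part1 q hq0 hq1 z hz, ?_⟩
  have h1q : (0:ℝ) < 1 - q := by linarith
  have h1z : (0:ℝ) < 1 - ‖z‖ := by linarith
  have hZ : ∀ k, qPoch z (q:ℂ) k ≠ 0 := qPoch_ne_zero hq0 hq1 hz
  have hP : ∀ k, P q k ≠ 0 := P_ne_zero hq0 hq1
  have hPdef : ∀ k, qPoch (q:ℂ) (q:ℂ) k = P q k := fun _ => rfl
  have hchoose_le : ∀ k : ℕ, k.choose 2 ≤ k^2 := fun k => by have := ch1 k; omega
  have hqle : ∀ k : ℕ, q^(k^2) ≤ q^(k.choose 2) :=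
    fun k => pow_le_pow_of_le_one hq0.le hq1.le (hchoose_le k)
  have hC2pos : (0:ℝ) < (‖z‖+1)/(1-q) := by positivity
  have hFle : ∀ p : ℕ × ℕ, ‖Fz q z p‖
      ≤ (q^(p.1.choose 2) * ((‖z‖+1)/(1-q))^p.1) *
        (q^(p.2.choose 2) * ((‖z‖+1)/(1-q))^p.2) := by
    rintro ⟨k, m⟩
    rw [Fz, norm_mul]
    have b1 : ‖(q:ℂ)^(k^2) * z^k / P q k‖ ≤ q^(k.choose 2) * ((‖z‖+1)/(1-q))^k := by
      rw [norm_div, norm_mul, norm_pow, norm_pow, Complex.norm_real,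
        Real.norm_eq_abs, abs_of_pos hq0]
      have hdle : (1-q)^k ≤ ‖P q k‖ := norm_P_ge hq0 hq1 k
      have hnum : q^(k^2) * ‖z‖^k ≤ q^(k.choose 2) * (‖z‖+1)^k :=
        mul_le_mul (hqle k) (pow_le_pow_left₀ (norm_nonneg z) (by linarith) k)
          (by positivity) (by positivity)
      calc q^(k^2) * ‖z‖^k / ‖P q k‖
          ≤ (q^(k.choose 2) * (‖z‖+1)^k) / (1-q)^k :=
            div_le_div₀ (by positivity) hnum (by positivity) hdle
      _ = q^(k.choose 2) * ((‖z‖+1)/(1-q))^k := by rw [div_pow]; ring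
    have b2 : ‖c q m * (z * (q:ℂ)^k)^m‖ ≤ q^(m.choose 2) * ((‖z‖+1)/(1-q))^m := by
      rw [norm_mul, norm_pow]
      have hzq : ‖z * (q:ℂ)^k‖ ≤ ‖z‖ + 1 := by
        rw [norm_mul, norm_pow, Complex.norm_real, Real.norm_eq_abs, abs_of_pos hq0]
        have hqk : q^k ≤ 1 := pow_le_one₀ hq0.le hq1.le
        nlinarith [norm_nonneg z, pow_pos hq0 k]
      have h3 : ‖z * (q:ℂ)^k‖^m ≤ (‖z‖+1)^m := pow_le_pow_left₀ (norm_nonneg _) hzq m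
      calc ‖c q m‖ * ‖z * (q:ℂ)^k‖^m
          ≤ (q^(m.choose 2) * (1/(1-q))^m) * (‖z‖+1)^m :=
            mul_le_mul (norm_c_le hq0 hq1 m) h3 (by positivity) (by positivity)
      _ = q^(m.choose 2) * ((‖z‖+1)/(1-q))^m := by
            rw [div_pow, div_pow, one_pow]
            ring
    exact mul_le_mul b1 b2 (norm_nonneg _) (by positivity)
  have hFsum : Summable (fun p : ℕ × ℕ => ‖Fz q z p‖) :=
    Summable.of_nonneg_of_le (fun _ => norm_nonneg _) hFle
      (Summable.mul_of_nonneg (summable_aux hq0 hq1 _ hC2pos)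
        (summable_aux hq0 hq1 _ hC2pos)
        (fun k => by positivity) (fun m => by positivity))
  have hF : Summable (Fz q z) := hFsum.of_norm
  have hE := qPochInf_eq_E hq0 hq1 hz
  have hEk : ∀ k : ℕ, E q z *
      ((q:ℂ)^(k^2) * z^k / (qPoch (q:ℂ) (q:ℂ) k * qPoch z (q:ℂ) k))
      = ∑' m : ℕ, Fz q z (k, m) := by
    intro k
    have step1 : E q z * ((q:ℂ)^(k^2) * z^k / (qPoch (q:ℂ) (q:ℂ) k * qPoch z (q:ℂ) k))
        = ((q:ℂ)^(k^2) * z^k / P q k) * E q (z * (q:ℂ)^k) := by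
      rw [E_iterate hq0 hq1 z k, hPdef]
      field_simp [hZ k, hP k]
    rw [step1, E, ← tsum_mul_left]
    exact tsum_congr fun m => rfl
  calc qPochInf z (q:ℂ) *
        ∑' k : ℕ, (q : ℂ) ^ (k ^ 2) * z ^ k / (qPoch (q:ℂ) (q:ℂ) k * qPoch z (q:ℂ) k)
      = ∑' k : ℕ, E q z *
          ((q : ℂ) ^ (k ^ 2) * z ^ k / (qPoch (q:ℂ) (q:ℂ) k * qPoch z (q:ℂ) k)) := by
        rw [hE, tsum_mul_left]
  _ = ∑' k : ℕ, ∑' m : ℕ, Fz q z (k, m) := tsum_congr hEk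
  _ = ∑' p : ℕ × ℕ, Fz q z p := (Summable.tsum_prod' hF (fun b => hF.prod_factor b)).symm
  _ = ∑' n : ℕ, ∑ k ∈ range (n+1), Fz q z (k, n-k) := tsum_prod_antidiag _ hF
  _ = ∑' n : ℕ, (-1:ℂ)^n * (q:ℂ)^(n.choose 2) * z^n :=
        tsum_congr fun n => diag_sum hq0 hq1 z n
  _ = ∑' n : ℕ, (-1 : ℂ) ^ n * (q : ℂ) ^ (n * (n - 1) / 2) * z ^ n :=
        tsum_congr fun n => by rw [Nat.choose_two_right]
end
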